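/- arXiv:1111.5840 — 11 statements merged into one kernel-verified Lean document; each statement's English description precedes it below -/
import Mathlib

section
/- Let E ⊆ F be Banach spaces, ε > 0, and let |·|_E be a norm on E that is ε-equivalent to the norm inherited from F (i.e., the identity map between (E, inherited norm) and (E, |·|_E) is an ε-isometry, meaning (1+ε)⁻¹‖x‖ ≤ |x|_E ≤ (1+ε)‖x‖ for all x ∈ E). Then there exists a norm |·|_F on F that extends |·|_E and is ε-equivalent to the original norm of F. -/
/-- **Extension of ε-equivalent norms.** If `E` is a subspace of a Banach space `F`,
`ε > 0`, and `nE` is a norm on `E` that is ε-equivalent to the inherited norm, then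
there is a norm `nF` on `F` extending `nE` and ε-equivalent to the original norm of `F`. -/
theorem norm_extension_eps_equivalent
    {F : Type*} [NormedAddCommGroup F] [NormedSpace ℝ F] [CompleteSpace F]
    (E : Subspace ℝ F) (ε : ℝ) (hε : 0 < ε)
    (nE : E → ℝ)
    (nE_zero : ∀ x : E, nE x = 0 ↔ x = 0)
    (nE_add : ∀ x y : E, nE (x + y) ≤ nE x + nE y)
    (nE_smul : ∀ (a : ℝ) (x : E), nE (a • x) = |a| * nE x)
    (nE_equiv : ∀ x : E, (1 + ε)⁻¹ * ‖x‖ ≤ nE x ∧ nE x ≤ (1 + ε) * ‖x‖) :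
    ∃ nF : F → ℝ,
      (∀ x : F, nF x = 0 ↔ x = 0) ∧
      (∀ x y : F, nF (x + y) ≤ nF x + nF y) ∧
      (∀ (a : ℝ) (x : F), nF (a • x) = |a| * nF x) ∧
      (∀ x : E, nF (x : F) = nE x) ∧
      (∀ x : F, (1 + ε)⁻¹ * ‖x‖ ≤ nF x ∧ nF x ≤ (1 + ε) * ‖x‖) := by
  have h1 : (0:ℝ) < 1 + ε := by linarith
  have hinv : (0:ℝ) < (1+ε)⁻¹ := inv_pos.mpr h1
  have hinvle : (1+ε)⁻¹ ≤ 1+ε := by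
    have hc : (1+ε)⁻¹ * (1+ε) = 1 := inv_mul_cancel₀ h1.ne'
    nlinarith
  have hE0 : nE 0 = 0 := (nE_zero 0).mpr rfl
  have hnonneg : ∀ e : E, 0 ≤ nE e := fun e =>
    le_trans (by positivity) (nE_equiv e).1
  set g : F → E → ℝ := fun x e => nE e + (1+ε) * ‖x - (e:F)‖ with hg
  have glb : ∀ x (e : E), (1+ε)⁻¹ * ‖x‖ ≤ g x e := by
    intro x e
    have h2 : ‖x‖ ≤ ‖(e:F)‖ + ‖x - (e:F)‖ := by
      have := norm_add_le (e:F) (x - (e:F)); simpa using this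
    have h3 : (1+ε)⁻¹ * ‖(e:F)‖ ≤ nE e := by
      have := (nE_equiv e).1
      simpa using this
    have h4 : (1+ε)⁻¹ * ‖x - (e:F)‖ ≤ (1+ε) * ‖x - (e:F)‖ :=
      mul_le_mul_of_nonneg_right hinvle (norm_nonneg _)
    have h5 : (1+ε)⁻¹ * ‖x‖ ≤ (1+ε)⁻¹ * (‖(e:F)‖ + ‖x - (e:F)‖) :=
      mul_le_mul_of_nonneg_left h2 hinv.le
    simp only [hg]
    nlinarith [norm_nonneg (x - (e:F))]
  have hbdd : ∀ x, BddBelow (Set.range (g x)) := by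
    intro x
    exact ⟨(1+ε)⁻¹ * ‖x‖, by rintro _ ⟨e, rfl⟩; exact glb x e⟩
  set nF : F → ℝ := fun x => ⨅ e : E, g x e with hnF
  have hFle : ∀ x (e : E), nF x ≤ g x e := fun x e => ciInf_le (hbdd x) e
  have hFge : ∀ x c, (∀ e : E, c ≤ g x e) → c ≤ nF x := fun x c h => le_ciInf h
  have hext : ∀ x : E, nF (x:F) = nE x := by
    intro x
    refine le_antisymm ?_ (hFge _ _ ?_)
    · have := hFle (x:F) x
      simpa [hg] using this
    · intro e
      have h6 : nE x ≤ nE e + nE (x - e) := by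
        have := nE_add e (x - e); simpa using this
      have h7 : nE (x - e) ≤ (1+ε) * ‖(x:F) - (e:F)‖ := by
        have := (nE_equiv (x - e)).2
        simpa using this
      simp only [hg]
      linarith
  have hupper : ∀ x : F, nF x ≤ (1+ε) * ‖x‖ := by
    intro x
    have := hFle x 0
    simpa [hg, hE0] using this
  have hlower : ∀ x : F, (1+ε)⁻¹ * ‖x‖ ≤ nF x := fun x => hFge x _ (glb x)
  have hF0 : nF 0 = 0 := by
    have h := hupper 0
    have h' := hlower 0
    simp only [norm_zero, mul_zero] at h h'
    linarith
  have hzero : ∀ x : F, nF x = 0 ↔ x = 0 := by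
    intro x
    constructor
    · intro h
      have hl := hlower x
      rw [h] at hl
      have hx : ‖x‖ ≤ 0 := by nlinarith [norm_nonneg x]
      simpa [norm_le_zero_iff] using hx
    · rintro rfl; exact hF0
  have hadd : ∀ x y : F, nF (x + y) ≤ nF x + nF y := by
    intro x y
    have key : ∀ e f : E, nF (x + y) ≤ g x e + g y f := by
      intro e f
      have h8 := hFle (x + y) (e + f)
      have hc : g (x+y) (e+f) ≤ g x e + g y f := by
        simp only [hg, Submodule.coe_add]
        have h9 := nE_add e f
        have hn : ‖x + y - ((e:F)+(f:F))‖ ≤ ‖x - (e:F)‖ + ‖y - (f:F)‖ := by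
          have heq : x + y - ((e:F)+(f:F)) = (x - (e:F)) + (y - (f:F)) := by abel
          rw [heq]; exact norm_add_le _ _
        nlinarith
      linarith
    have h10 : nF (x+y) - nF y ≤ nF x := by
      apply hFge
      intro e
      rw [sub_le_iff_le_add]
      have h11 : nF (x+y) - g x e ≤ nF y := by
        apply hFge
        intro f
        rw [sub_le_iff_le_add]
        linarith [key e f]
      linarith
    linarith
  have hsmul_le : ∀ (a : ℝ), a ≠ 0 → ∀ x : F, nF (a • x) ≤ |a| * nF x := by
    intro a ha x
    have hap : 0 < |a| := abs_pos.mpr ha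
    have key : ∀ f : E, nF (a • x) ≤ |a| * g x f := by
      intro f
      have h12 := hFle (a • x) (a • f)
      have hcalc : g (a • x) (a • f) = |a| * g x f := by
        simp only [hg, nE_smul, Submodule.coe_smul, ← smul_sub, norm_smul,
          Real.norm_eq_abs]
        ring
      rw [hcalc] at h12; exact h12
    have h13 : |a|⁻¹ * nF (a • x) ≤ nF x := by
      apply hFge
      intro f
      rw [inv_mul_le_iff₀ hap]
      exact key f
    calc nF (a•x) = |a| * (|a|⁻¹ * nF (a•x)) := by field_simp
      _ ≤ |a| * nF x := mul_le_mul_of_nonneg_left h13 hap.le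
  have hsmul : ∀ (a : ℝ) (x : F), nF (a • x) = |a| * nF x := by
    intro a x
    rcases eq_or_ne a 0 with rfl | ha
    · simp [hF0]
    · refine le_antisymm (hsmul_le a ha x) ?_
      have h := hsmul_le a⁻¹ (inv_ne_zero ha) (a • x)
      rw [smul_smul, inv_mul_cancel₀ ha, one_smul, abs_inv] at h
      have hap : 0 < |a| := abs_pos.mpr ha
      calc |a| * nF x ≤ |a| * (|a|⁻¹ * nF (a•x)) :=
            mul_le_mul_of_nonneg_left h (abs_nonneg a)
        _ = nF (a • x) := by field_simp
  exact ⟨nF, hzero, hadd, hsmul, hext, fun x => ⟨hlower x, hupper x⟩⟩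
end

section
/- In the pushout construction W = (X ⊕₁ Y)/Δ for an isometric embedding i : Z → X and an isometric embedding f : Z → Y, the map g : X → W given by g(x) = (x,0) + Δ is an isometric embedding (i.e., the isometric version of the Pushout Lemma holds: if f is isometric, then so is g). -/
/-- **Isometric version of the Pushout Lemma.** If `i : Z → X` and `f : Z → Y` are
isometric embeddings of Banach spaces and `W = (X ⊕₁ Y)/Δ` is the pushout space,
with `g x = (x,0)+Δ` (so that the quotient norm satisfies
`‖g x + j y‖ = inf { ‖x + i z‖ + ‖y - f z‖ : z ∈ Z }`), then `g` is an isometric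
embedding. -/
theorem pushout_lemma_isometric
    {Z X Y W : Type*}
    [NormedAddCommGroup Z] [NormedSpace ℝ Z] [CompleteSpace Z]
    [NormedAddCommGroup X] [NormedSpace ℝ X] [CompleteSpace X]
    [NormedAddCommGroup Y] [NormedSpace ℝ Y] [CompleteSpace Y]
    [NormedAddCommGroup W] [NormedSpace ℝ W]
    (i : Z →ₗ[ℝ] X) (hi : ∀ z : Z, ‖i z‖ = ‖z‖)
    (f : Z →ₗ[ℝ] Y) (hf : ∀ z : Z, ‖f z‖ = ‖z‖)
    (g : X →ₗ[ℝ] W) (j : Y →ₗ[ℝ] W)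
    (hquot : ∀ (x : X) (y : Y),
      ‖g x + j y‖ = sInf { r : ℝ | ∃ z : Z, r = ‖x + i z‖ + ‖y - f z‖ }) :
    ∀ x : X, ‖g x‖ = ‖x‖ := by
  intro x
  have key := hquot x 0
  rw [map_zero, add_zero] at key
  rw [key]
  apply le_antisymm
  · apply csInf_le
    · refine ⟨0, ?_⟩
      rintro r ⟨z, rfl⟩
      have h1 : (0:ℝ) ≤ ‖x + i z‖ := norm_nonneg _
      have h2 : (0:ℝ) ≤ ‖(0:Y) - f z‖ := norm_nonneg _
      linarith
    · exact ⟨0, by simp⟩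
  · refine le_csInf ⟨‖x‖, 0, by simp⟩ ?_
    rintro r ⟨z, rfl⟩
    have h1 : ‖x‖ ≤ ‖x + i z‖ + ‖i z‖ := by
      calc ‖x‖ = ‖(x + i z) + (-(i z))‖ := by rw [add_neg_cancel_right]
        _ ≤ ‖x + i z‖ + ‖-(i z)‖ := norm_add_le _ _
        _ = ‖x + i z‖ + ‖i z‖ := by rw [norm_neg]
    have h2 : ‖(0:Y) - f z‖ = ‖i z‖ := by
      rw [zero_sub, norm_neg, hf, hi]
    linarith
end

section
/- Under the hypotheses of the Pushout Lemma (with i : Z → X an isometric embedding and f : Z → Y a linear operator of norm ≤ 1, W the pushout space with maps g : X → W, j : Y → W), if the image i(Z) is k-complemented in X (there is a bounded projection P : X → Z with P ∘ i = id_Z and ‖P‖ ≤ k), then the image j(Y) is k-complemented in W: there exists a linear operator h : W → Y with ‖h‖ ≤ k and h ∘ j = id_Y. -/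
universe u

/-- **Complementation and pushouts.** In the pushout of an isometric embedding
`i : Z → X` and an operator `f : Z → Y` of norm `≤ 1` (with the pushout universal
property), if `i(Z)` is `k`-complemented in `X`, i.e. there is `P : X → Z` with
`P ∘ i = id` and `‖P‖ ≤ k`, then `j(Y)` is `k`-complemented in `W`: there is
`h : W → Y` with `‖h‖ ≤ k` and `h ∘ j = id`. -/
theorem pushout_complemented
    {Z X Y W : Type u}
    [NormedAddCommGroup Z] [NormedSpace ℝ Z] [CompleteSpace Z]
    [NormedAddCommGroup X] [NormedSpace ℝ X] [CompleteSpace X]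
    [NormedAddCommGroup Y] [NormedSpace ℝ Y] [CompleteSpace Y]
    [NormedAddCommGroup W] [NormedSpace ℝ W]
    (i : Z →ₗᵢ[ℝ] X) (f : Z →L[ℝ] Y) (hf : ‖f‖ ≤ 1)
    (g : X →L[ℝ] W) (j : Y →L[ℝ] W)
    (hpushout : ∀ (V : Type u) [NormedAddCommGroup V] [NormedSpace ℝ V],
      ∀ (T : X →L[ℝ] V) (S : Y →L[ℝ] V), (∀ z : Z, T (i z) = S (f z)) →
        ∃ h : W →L[ℝ] V, (∀ x : X, h (g x) = T x) ∧ (∀ y : Y, h (j y) = S y) ∧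
          ‖h‖ ≤ max ‖T‖ ‖S‖)
    (k : ℝ) (hk : 1 ≤ k)
    (P : X →L[ℝ] Z) (hPi : ∀ z : Z, P (i z) = z) (hPk : ‖P‖ ≤ k) :
    ∃ h : W →L[ℝ] Y, ‖h‖ ≤ k ∧ ∀ y : Y, h (j y) = y := by
  obtain ⟨h, hg, hj, hn⟩ := hpushout Y (f.comp P) (ContinuousLinearMap.id ℝ Y)
    (fun z => by simp [hPi z])
  refine ⟨h, ?_, fun y => by simpa using hj y⟩
  refine hn.trans (max_le ?_ ?_)
  · calc ‖f.comp P‖ ≤ ‖f‖ * ‖P‖ := ContinuousLinearMap.opNorm_comp_le _ _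
      _ ≤ 1 * k := mul_le_mul hf hPk (norm_nonneg _) zero_le_one
      _ = k := one_mul k
  · simpa using (ContinuousLinearMap.norm_id_le).trans hk
end

section
/- If F and G are skeletons in a Banach space X, then F ∩ G is also a skeleton in X. -/
/-- A *skeleton* in a Banach space `X`: a family of closed separable linear subspaces
covering `X`, directed under inclusion, and closed under closures of unions of countable
increasing chains. -/
def IsSkeleton {X : Type*} [NormedAddCommGroup X] [NormedSpace ℝ X]
    (𝔉 : Set (Subspace ℝ X)) : Prop :=
  (∀ F ∈ 𝔉, IsClosed (F : Set X) ∧ TopologicalSpace.IsSeparable (F : Set X)) ∧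
  (⋃ F ∈ 𝔉, (F : Set X)) = Set.univ ∧
  (∀ F₀ ∈ 𝔉, ∀ F₁ ∈ 𝔉, ∃ G ∈ 𝔉, F₀ ≤ G ∧ F₁ ≤ G) ∧
  (∀ F : ℕ → Subspace ℝ X, (∀ n, F n ∈ 𝔉) → Monotone F →
    (⨆ n, F n).topologicalClosure ∈ 𝔉)

lemma skeleton_mem_of_separable {X : Type*} [NormedAddCommGroup X] [NormedSpace ℝ X]
    {𝔉 : Set (Subspace ℝ X)} (h : IsSkeleton 𝔉) {S : Set X}
    (hS : TopologicalSpace.IsSeparable S) : ∃ F ∈ 𝔉, S ⊆ (F : Set X) := by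
  obtain ⟨hsep, hcov, hdir, hchain⟩ := h
  have pick : ∀ x : X, ∃ F, F ∈ 𝔉 ∧ x ∈ F := by
    intro x
    have : x ∈ ⋃ F ∈ 𝔉, (F : Set X) := hcov ▸ Set.mem_univ x
    simpa using this
  choose pf hpf hxpf using pick
  have dir : ∀ p q : Subspace ℝ X, p ∈ 𝔉 → q ∈ 𝔉 → ∃ r, r ∈ 𝔉 ∧ p ≤ r ∧ q ≤ r := by
    intro p q hp hq
    obtain ⟨r, hr, h1, h2⟩ := hdir p hp q hq
    exact ⟨r, hr, h1, h2⟩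
  choose sup hsup hle1 hle2 using dir
  obtain ⟨c, hc, hSc⟩ := hS
  rcases c.eq_empty_or_nonempty with rfl | hne
  · exact ⟨pf 0, hpf 0, (by simpa using hSc : S = ∅) ▸ Set.empty_subset _⟩
  obtain ⟨u, rfl⟩ := hc.exists_eq_range hne
  let T : ℕ → {p : Subspace ℝ X // p ∈ 𝔉} := fun n =>
    Nat.rec ⟨pf (u 0), hpf (u 0)⟩
      (fun m p => ⟨sup p.1 (pf (u (m+1))) p.2 (hpf _), hsup _ _ _ _⟩) n
  have hmem : ∀ n, (T n).1 ∈ 𝔉 := fun n => (T n).2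
  have hmono : Monotone fun n => (T n).1 :=
    monotone_nat_of_le_succ fun n => hle1 _ _ _ _
  have hu : ∀ n, u n ∈ (T n).1 := by
    intro n
    cases n with
    | zero => exact hxpf (u 0)
    | succ m => exact hle2 (T m).1 (pf (u (m+1))) (T m).2 (hpf _) (hxpf _)
  refine ⟨(⨆ n, (T n).1).topologicalClosure, hchain _ hmem hmono, ?_⟩
  have hcl : IsClosed ((⨆ n, (T n).1).topologicalClosure : Set X) :=
    Submodule.isClosed_topologicalClosure _
  have hrange : Set.range u ⊆ ((⨆ n, (T n).1).topologicalClosure : Set X) := by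
    rintro _ ⟨n, rfl⟩
    exact Submodule.le_topologicalClosure _ (le_iSup (fun n => (T n).1) n (hu n))
  exact hSc.trans (hcl.closure_subset_iff.mpr hrange)

lemma skeleton_inter_key {X : Type*} [NormedAddCommGroup X] [NormedSpace ℝ X]
    {𝔉 𝔊 : Set (Subspace ℝ X)} (hF : IsSkeleton 𝔉) (hG : IsSkeleton 𝔊) {S : Set X}
    (hS : TopologicalSpace.IsSeparable S) : ∃ H ∈ 𝔉 ∩ 𝔊, S ⊆ (H : Set X) := by
  have stepG : ∀ p : Subspace ℝ X, p ∈ 𝔉 → ∃ q, q ∈ 𝔊 ∧ p ≤ q := by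
    intro p hp
    obtain ⟨q, hq, hle⟩ := skeleton_mem_of_separable hG (hF.1 p hp).2
    exact ⟨q, hq, fun x hx => hle hx⟩
  have stepF : ∀ p : Subspace ℝ X, p ∈ 𝔊 → ∃ q, q ∈ 𝔉 ∧ p ≤ q := by
    intro p hp
    obtain ⟨q, hq, hle⟩ := skeleton_mem_of_separable hF (hG.1 p hp).2
    exact ⟨q, hq, fun x hx => hle hx⟩
  choose g hg hgle using stepG
  choose f hf hfle using stepF
  obtain ⟨F0, hF0, hSF0⟩ := skeleton_mem_of_separable hF hS
  let T : ℕ → {p : Subspace ℝ X // p ∈ 𝔉} := fun n =>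
    Nat.rec ⟨F0, hF0⟩ (fun _ p => ⟨f (g p.1 p.2) (hg p.1 p.2), hf _ _⟩) n
  set FS : ℕ → Subspace ℝ X := fun n => (T n).1 with hFS
  set GS : ℕ → Subspace ℝ X := fun n => g (T n).1 (T n).2 with hGS
  have hFG : ∀ n, FS n ≤ GS n := fun n => hgle _ _
  have hGF : ∀ n, GS n ≤ FS (n+1) := fun n => hfle _ _
  have hFmono : Monotone FS := monotone_nat_of_le_succ fun n => (hFG n).trans (hGF n)
  have hGmono : Monotone GS := monotone_nat_of_le_succ fun n =>
    (hGF n).trans (hFG (n+1))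
  have hFmem : ∀ n, FS n ∈ 𝔉 := fun n => (T n).2
  have hGmem : ∀ n, GS n ∈ 𝔊 := fun n => hg _ _
  have hsup : (⨆ n, FS n) = ⨆ n, GS n := by
    apply le_antisymm
    · exact iSup_le fun n => (hFG n).trans (le_iSup GS n)
    · exact iSup_le fun n => (hGF n).trans (le_iSup FS (n+1))
  refine ⟨(⨆ n, FS n).topologicalClosure,
    ⟨hF.2.2.2 FS hFmem hFmono, by rw [hsup]; exact hG.2.2.2 GS hGmem hGmono⟩, ?_⟩
  refine hSF0.trans ?_
  have : FS 0 ≤ (⨆ n, FS n).topologicalClosure :=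
    (le_iSup FS 0).trans (Submodule.le_topologicalClosure _)
  exact fun x hx => this hx

/-- **Intersection of skeletons.** If `𝔉` and `𝔊` are skeletons in a Banach space `X`,
then `𝔉 ∩ 𝔊` is also a skeleton in `X`. -/
theorem isSkeleton_inter
    {X : Type*} [NormedAddCommGroup X] [NormedSpace ℝ X] [CompleteSpace X]
    (𝔉 𝔊 : Set (Subspace ℝ X)) (hF : IsSkeleton 𝔉) (hG : IsSkeleton 𝔊) :
    IsSkeleton (𝔉 ∩ 𝔊) := by
  refine ⟨fun F hFm => hF.1 F hFm.1, ?_, ?_, ?_⟩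
  · apply Set.eq_univ_of_forall
    intro x
    obtain ⟨H, hH, hxH⟩ := skeleton_inter_key hF hG
      ((Set.finite_singleton x).isSeparable)
    simp only [Set.mem_iUnion]
    exact ⟨H, hH, hxH rfl⟩
  · intro F₀ h₀ F₁ h₁
    have hsep : TopologicalSpace.IsSeparable ((F₀ : Set X) ∪ (F₁ : Set X)) :=
      ((hF.1 F₀ h₀.1).2).union ((hF.1 F₁ h₁.1).2)
    obtain ⟨H, hH, hle⟩ := skeleton_inter_key hF hG hsep
    exact ⟨H, hH, fun x hx => hle (Or.inl hx), fun x hx => hle (Or.inr hx)⟩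
  · intro F hmem hmono
    exact ⟨hF.2.2.2 F (fun n => (hmem n).1) hmono, hG.2.2.2 F (fun n => (hmem n).2) hmono⟩
end

section
/- Let (fₙ : Xₙ → Yₙ) and (gₙ : Yₙ → X_{n+1}) be sequences of linear operators between two increasing chains of finite-dimensional subspaces Xₙ ⊆ E and Yₙ ⊆ F of Banach spaces E, F, such that: fₙ and gₙ are 2⁻ⁿ-isometric embeddings; ‖gₙ(fₙ(x)) − x‖ < 2⁻ⁿ‖x‖ for x ∈ Xₙ; ‖f_{n+1}(gₙ(y)) − y‖ < 2⁻ⁿ‖y‖ for y ∈ Yₙ. Then for every x ∈ Xₙ of norm ≤ 1, ‖fₙ(x) − f_{n+1}(x)‖ < 2^{-n+2}; hence the sequence (fₙ) converges pointwise on ⋃ₙ Xₙ. -/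
open Filter

/-- **The key estimate in Lusky's proof of uniqueness of the Gurarii space.** Given chains
of finite-dimensional subspaces `Xₙ ⊆ E`, `Yₙ ⊆ F` and `2⁻ⁿ`-isometric embeddings
`fₙ : Xₙ → Yₙ`, `gₙ : Yₙ → X_{n+1}` with `‖gₙ(fₙ x) − x‖ < 2⁻ⁿ‖x‖` and
`‖f_{n+1}(gₙ y) − y‖ < 2⁻ⁿ‖y‖` (for nonzero vectors), then for every `x ∈ Xₙ` of norm
`≤ 1` we have `‖fₙ x − f_{n+1} x‖ < 2^{-n+2}`; hence `(fₙ)` converges pointwise on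
`⋃ₙ Xₙ`. -/
theorem lusky_estimate
    {E F : Type*} [NormedAddCommGroup E] [NormedSpace ℝ E] [CompleteSpace E]
    [NormedAddCommGroup F] [NormedSpace ℝ F] [CompleteSpace F]
    (X : ℕ → Subspace ℝ E) (Y : ℕ → Subspace ℝ F)
    (hX : Monotone X) (hY : Monotone Y)
    (hXfin : ∀ n, FiniteDimensional ℝ (X n)) (hYfin : ∀ n, FiniteDimensional ℝ (Y n))
    (f : ∀ n, (X n) →L[ℝ] F) (g : ∀ n, (Y n) →L[ℝ] E)
    (hfY : ∀ n (x : X n), f n x ∈ Y n) (hgX : ∀ n (y : Y n), g n y ∈ X (n + 1))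
    (hf : ∀ n (x : X n),
      (1 + ((2 : ℝ) ^ n)⁻¹)⁻¹ * ‖x‖ ≤ ‖f n x‖ ∧ ‖f n x‖ ≤ (1 + ((2 : ℝ) ^ n)⁻¹) * ‖x‖)
    (hg : ∀ n (y : Y n),
      (1 + ((2 : ℝ) ^ n)⁻¹)⁻¹ * ‖y‖ ≤ ‖g n y‖ ∧ ‖g n y‖ ≤ (1 + ((2 : ℝ) ^ n)⁻¹) * ‖y‖)
    (hgf : ∀ n (x : X n), x ≠ 0 →
      ‖g n ⟨f n x, hfY n x⟩ - (x : E)‖ < ((2 : ℝ) ^ n)⁻¹ * ‖x‖)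
    (hfg : ∀ n (y : Y n), y ≠ 0 →
      ‖f (n + 1) ⟨g n y, hgX n y⟩ - (y : F)‖ < ((2 : ℝ) ^ n)⁻¹ * ‖y‖) :
    (∀ n (x : X n), ‖x‖ ≤ 1 →
      ‖f n x - f (n + 1) ⟨(x : E), hX (Nat.le_succ n) x.2⟩‖ < 4 * ((2 : ℝ) ^ n)⁻¹) ∧
    (∀ n (x : X n), ∃ L : F,
      Tendsto (fun m => f (n + m) ⟨(x : E), hX (Nat.le_add_right n m) x.2⟩)
        atTop (nhds L)) := by
  have key : ∀ n (x : X n) (h : (x : E) ∈ X (n + 1)),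
      ‖f n x - f (n + 1) ⟨(x : E), h⟩‖ ≤ (7/2) * ((2 : ℝ) ^ n)⁻¹ * ‖x‖ := by
    intro n x h
    have hpow : (0 : ℝ) < (2 : ℝ) ^ n := by positivity
    have hpinv : ((2 : ℝ) ^ n)⁻¹ ≤ 1 := by
      rw [inv_le_one_iff₀]
      right
      exact one_le_pow₀ one_le_two
    rcases eq_or_ne x 0 with rfl | hx
    · have h0 : (⟨((0 : X n) : E), h⟩ : X (n + 1)) = 0 := by ext; simp
      rw [h0]
      simp
    · have hxpos : 0 < ‖x‖ := norm_pos_iff.mpr hx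
      set y : Y n := ⟨f n x, hfY n x⟩ with hy
      have hynorm : ‖y‖ = ‖f n x‖ := rfl
      have hy0 : y ≠ 0 := by
        intro h0
        have h2 : ‖f n x‖ = 0 := by rw [← hynorm, h0, norm_zero]
        have h1 := (hf n x).1
        rw [h2] at h1
        have hc : (0:ℝ) < (1 + ((2 : ℝ) ^ n)⁻¹)⁻¹ := by positivity
        nlinarith
      have hub : ‖y‖ ≤ 2 * ‖x‖ := by
        rw [hynorm]
        calc ‖f n x‖ ≤ (1 + ((2 : ℝ) ^ n)⁻¹) * ‖x‖ := (hf n x).2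
          _ ≤ 2 * ‖x‖ := by nlinarith
      have h1 : ‖f (n+1) ⟨g n y, hgX n y⟩ - (y : F)‖ ≤ ((2 : ℝ) ^ n)⁻¹ * (2 * ‖x‖) :=
        calc ‖f (n+1) ⟨g n y, hgX n y⟩ - (y : F)‖ ≤ ((2 : ℝ) ^ n)⁻¹ * ‖y‖ := (hfg n y hy0).le
          _ ≤ ((2 : ℝ) ^ n)⁻¹ * (2 * ‖x‖) :=
              mul_le_mul_of_nonneg_left hub (by positivity)
      have hz : ‖(⟨g n y, hgX n y⟩ : X (n+1)) - ⟨(x:E), h⟩‖ ≤ ((2 : ℝ) ^ n)⁻¹ * ‖x‖ := by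
        have he : ‖(⟨g n y, hgX n y⟩ : X (n+1)) - ⟨(x:E), h⟩‖ = ‖g n y - (x : E)‖ := rfl
        rw [he]
        exact (hgf n x hx).le
      have hc32 : (1 + ((2 : ℝ) ^ (n+1))⁻¹) ≤ 3/2 := by
        have : ((2:ℝ) ^ (n+1))⁻¹ ≤ 1/2 := by
          rw [pow_succ, mul_inv]
          nlinarith
        linarith
      have h2 : ‖f (n+1) (⟨g n y, hgX n y⟩ : X (n+1)) - f (n+1) ⟨(x:E), h⟩‖
          ≤ (3/2) * (((2 : ℝ) ^ n)⁻¹ * ‖x‖) := by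
        rw [← map_sub]
        calc ‖f (n+1) ((⟨g n y, hgX n y⟩ : X (n+1)) - ⟨(x:E), h⟩)‖
            ≤ (1 + ((2 : ℝ) ^ (n+1))⁻¹) * ‖(⟨g n y, hgX n y⟩ : X (n+1)) - ⟨(x:E), h⟩‖ :=
              (hf (n+1) _).2
          _ ≤ (3/2) * (((2 : ℝ) ^ n)⁻¹ * ‖x‖) :=
              mul_le_mul hc32 hz (norm_nonneg _) (by norm_num)
      have htri : ‖f n x - f (n+1) ⟨(x:E), h⟩‖
          ≤ ‖f n x - f (n+1) ⟨g n y, hgX n y⟩‖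
            + ‖f (n+1) (⟨g n y, hgX n y⟩ : X (n+1)) - f (n+1) ⟨(x:E), h⟩‖ :=
        norm_sub_le_norm_sub_add_norm_sub _ _ _
      have heq : ‖f n x - f (n+1) ⟨g n y, hgX n y⟩‖
          = ‖f (n+1) ⟨g n y, hgX n y⟩ - (y : F)‖ := by
        rw [norm_sub_rev]
      rw [heq] at htri
      calc ‖f n x - f (n+1) ⟨(x:E), h⟩‖
          ≤ ((2 : ℝ) ^ n)⁻¹ * (2 * ‖x‖) + (3/2) * (((2 : ℝ) ^ n)⁻¹ * ‖x‖) :=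
            htri.trans (add_le_add h1 h2)
        _ = (7/2) * ((2 : ℝ) ^ n)⁻¹ * ‖x‖ := by ring
  constructor
  · intro n x hx
    have hpow : (0 : ℝ) < ((2 : ℝ) ^ n)⁻¹ := by positivity
    have hk := key n x (hX (Nat.le_succ n) x.2)
    nlinarith [norm_nonneg x]
  · intro n x
    set u : ℕ → F := fun m => f (n + m) ⟨(x : E), hX (Nat.le_add_right n m) x.2⟩ with hu
    have hd : ∀ m, dist (u m) (u (m+1)) ≤ ((7/2) * ((2:ℝ)^n)⁻¹ * ‖x‖) * (1/2)^m := by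
      intro m
      rw [dist_eq_norm]
      have hk := key (n + m) ⟨(x : E), hX (Nat.le_add_right n m) x.2⟩
        (hX (Nat.le_add_right n (m+1)) x.2)
      have hnx : ‖(⟨(x : E), hX (Nat.le_add_right n m) x.2⟩ : X (n + m))‖ = ‖x‖ := rfl
      rw [hnx] at hk
      have hpe : ((2:ℝ) ^ (n + m))⁻¹ = ((2:ℝ)^n)⁻¹ * (1/2)^m := by
        rw [pow_add, mul_inv, one_div, inv_pow]
      rw [hpe] at hk
      calc ‖u m - u (m+1)‖ ≤ (7/2) * (((2:ℝ)^n)⁻¹ * (1/2)^m) * ‖x‖ := hk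
        _ = ((7/2) * ((2:ℝ)^n)⁻¹ * ‖x‖) * (1/2)^m := by ring
    have hcau : CauchySeq u := cauchySeq_of_le_geometric (1/2) _ (by norm_num) hd
    obtain ⟨L, hL⟩ := cauchySeq_tendsto_of_complete hcau
    exact ⟨L, hL⟩
end

section
/- Let X be a Banach space containing an increasing chain (Xₙ) of closed subspaces whose union is dense in X, such that each Xₙ is a Gurarii space (of almost universal disposition for finite-dimensional spaces). Then X is a Gurarii space. -/
universe u v

/-- A Banach space `G` is *Gurarii* (of almost universal disposition for
finite-dimensional spaces) if for every pair of finite-dimensional spaces `E ⊆ F`, every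
isometric embedding `f : E → G` and every `ε > 0`, there is an `ε`-isometric embedding
`g : F → G` extending `f`. -/
def IsGurarii (G : Type v) [NormedAddCommGroup G] [NormedSpace ℝ G] : Prop :=
  ∀ (F₀ : Type u) [NormedAddCommGroup F₀] [NormedSpace ℝ F₀] [FiniteDimensional ℝ F₀],
    ∀ (E₀ : Subspace ℝ F₀) (f : E₀ →ₗᵢ[ℝ] G) (ε : ℝ), 0 < ε →
      ∃ g : F₀ →L[ℝ] G, (∀ x : E₀, g (x : F₀) = f x) ∧
        ∀ x : F₀, (1 + ε)⁻¹ * ‖x‖ ≤ ‖g x‖ ∧ ‖g x‖ ≤ (1 + ε) * ‖x‖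

set_option maxHeartbeats 2000000
set_option synthInstance.maxHeartbeats 1000000

lemma exists_approx_into_chain {X : Type v} [NormedAddCommGroup X] [NormedSpace ℝ X]
    (Xs : ℕ → Subspace ℝ X) (hmono : Monotone Xs)
    (hdense : Dense (⋃ n, (Xs n : Set X)))
    {E : Type*} [NormedAddCommGroup E] [NormedSpace ℝ E] [FiniteDimensional ℝ E]
    (f : E →ₗᵢ[ℝ] X) (η : ℝ) (hη : 0 < η) :
    ∃ n, ∃ T : E →ₗ[ℝ] (Xs n), ∀ e : E, ‖(T e : X) - f e‖ ≤ η * ‖e‖ := by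
  classical
  set d := Module.finrank ℝ E with hd
  set b : Module.Basis (Fin d) ℝ E := Module.finBasis ℝ E with hb
  set C : Fin d → ℝ := fun i => ‖LinearMap.toContinuousLinearMap (b.coord i)‖ with hCdef
  set K : ℝ := ∑ i, C i with hKdef
  have hC : ∀ i, 0 ≤ C i := fun i => norm_nonneg _
  have hK : 0 ≤ K := Finset.sum_nonneg fun i _ => hC i
  set η' : ℝ := η / (K + 1) with hη'def
  have hη' : 0 < η' := div_pos hη (by linarith)
  -- approximate each f (b i)
  have happ : ∀ i : Fin d, ∃ m, ∃ y : X, y ∈ Xs m ∧ ‖y - f (b i)‖ ≤ η' := by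
    intro i
    have h1 := hdense (f (b i))
    rw [mem_closure_iff] at h1
    obtain ⟨y, hy1, hy2⟩ := h1 (Metric.ball (f (b i)) η') Metric.isOpen_ball
      (Metric.mem_ball_self hη')
    obtain ⟨s, ⟨m, rfl⟩, hym⟩ := hy2
    refine ⟨m, y, hym, ?_⟩
    rw [Metric.mem_ball, dist_eq_norm] at hy1
    linarith
  choose m y hymem hyclose using happ
  set n : ℕ := Finset.univ.sup m with hn
  have hmem : ∀ i, y i ∈ Xs n := fun i =>
    hmono (Finset.le_sup (Finset.mem_univ i)) (hymem i)
  set T : E →ₗ[ℝ] (Xs n) := b.constr ℝ (fun i => (⟨y i, hmem i⟩ : Xs n)) with hT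
  refine ⟨n, T, fun e => ?_⟩
  have hTe : (T e : X) = ∑ i, b.equivFun e i • y i := by
    rw [hT, Module.Basis.constr_apply_fintype]
    push_cast
    rfl
  have hfe : f e = ∑ i, b.equivFun e i • f (b i) := by
    conv_lhs => rw [← b.sum_equivFun e]
    rw [map_sum]
    simp [f.map_smul]
  have hdiff : (T e : X) - f e = ∑ i, b.equivFun e i • (y i - f (b i)) := by
    rw [hTe, hfe, ← Finset.sum_sub_distrib]
    simp [smul_sub]
  have hcoord : ∀ i, |b.equivFun e i| ≤ C i * ‖e‖ := by
    intro i
    have h1 := (LinearMap.toContinuousLinearMap (b.coord i)).le_opNorm e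
    have h2 : (LinearMap.toContinuousLinearMap (b.coord i)) e = b.equivFun e i := by
      simp [Module.Basis.equivFun_apply, Module.Basis.coord_apply]
    rw [h2] at h1
    simpa using h1
  calc ‖(T e : X) - f e‖ = ‖∑ i, b.equivFun e i • (y i - f (b i))‖ := by rw [hdiff]
    _ ≤ ∑ i, ‖b.equivFun e i • (y i - f (b i))‖ := norm_sum_le _ _
    _ ≤ ∑ i, (C i * ‖e‖) * η' := by
        refine Finset.sum_le_sum fun i _ => ?_
        rw [norm_smul, Real.norm_eq_abs]
        exact mul_le_mul (hcoord i) (hyclose i) (norm_nonneg _)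
          (mul_nonneg (hC i) (norm_nonneg _))
    _ = K * ‖e‖ * η' := by rw [← Finset.sum_mul, ← Finset.sum_mul]
    _ ≤ η * ‖e‖ := by
        rw [hη'def]
        rw [div_eq_mul_inv]
        have h1 : K * ‖e‖ * (η * (K + 1)⁻¹) = (K / (K+1)) * (η * ‖e‖) := by
          field_simp
        rw [h1]
        have h2 : K / (K + 1) ≤ 1 := by
          rw [div_le_one (by linarith)]; linarith
        nlinarith [norm_nonneg e, hη.le, mul_nonneg hη.le (norm_nonneg e)]

lemma isGurarii_approx {G : Type v} [NormedAddCommGroup G] [NormedSpace ℝ G]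
    (hG : IsGurarii.{u} G)
    (F₀ : Type u) [NormedAddCommGroup F₀] [hns : NormedSpace ℝ F₀] [hfd : FiniteDimensional ℝ F₀]
    (E₀ : Subspace ℝ F₀) (f' : E₀ →L[ℝ] G) (δ : ℝ) (hδ : 0 < δ)
    (hup : ∀ e : E₀, ‖f' e‖ ≤ (1 + δ) * ‖e‖)
    (hlo : ∀ e : E₀, (1 + δ)⁻¹ * ‖e‖ ≤ ‖f' e‖)
    (ε : ℝ) (hε : 0 < ε) :
    ∃ g : F₀ →L[ℝ] G, (∀ e : E₀, g (e : F₀) = f' e) ∧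
      ∀ x : F₀, ((1 + ε) * (1 + δ))⁻¹ * ‖x‖ ≤ ‖g x‖ ∧ ‖g x‖ ≤ (1 + ε) * (1 + δ) * ‖x‖ := by
  classical
  have hδ1 : (0:ℝ) < 1 + δ := by linarith
  have hδ1' : (0:ℝ) < (1 + δ)⁻¹ := inv_pos.2 hδ1
  have hinvle : (1 + δ)⁻¹ ≤ 1 + δ := by
    have h1 : (1 + δ)⁻¹ ≤ 1 := by rw [inv_le_one_iff₀]; right; linarith
    linarith
  -- the new norm
  set Nf : F₀ → ℝ := fun x => ⨅ e : E₀, (1 + δ) * ‖x - (e : F₀)‖ + ‖f' e‖ with hNf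
  have hterm_lb : ∀ (x : F₀) (e : E₀),
      (1 + δ)⁻¹ * ‖x‖ ≤ (1 + δ) * ‖x - (e : F₀)‖ + ‖f' e‖ := by
    intro x e
    have h0 : ‖x‖ ≤ ‖x - (e : F₀)‖ + ‖e‖ := by
      simpa using norm_add_le (x - (e : F₀)) (e : F₀)
    have h1 : (1 + δ)⁻¹ * ‖x‖ ≤ (1 + δ)⁻¹ * ‖x - (e : F₀)‖ + (1 + δ)⁻¹ * ‖e‖ := by
      nlinarith
    have h2 : (1 + δ)⁻¹ * ‖x - (e : F₀)‖ ≤ (1 + δ) * ‖x - (e : F₀)‖ :=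
      mul_le_mul_of_nonneg_right hinvle (norm_nonneg _)
    have h3 : (1 + δ)⁻¹ * ‖(e : F₀)‖ ≤ ‖f' e‖ := hlo e
    have h4 : ‖e‖ = ‖(e : F₀)‖ := rfl
    rw [h4] at h1
    linarith
  have hbdd : ∀ x : F₀, BddBelow (Set.range fun e : E₀ => (1 + δ) * ‖x - (e : F₀)‖ + ‖f' e‖) := by
    intro x
    exact ⟨(1 + δ)⁻¹ * ‖x‖, by rintro r ⟨e, rfl⟩; exact hterm_lb x e⟩
  have hNge : ∀ x : F₀, (1 + δ)⁻¹ * ‖x‖ ≤ Nf x := fun x => le_ciInf (hterm_lb x)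
  have hNle_term : ∀ (x : F₀) (e : E₀), Nf x ≤ (1 + δ) * ‖x - (e : F₀)‖ + ‖f' e‖ :=
    fun x e => ciInf_le (hbdd x) e
  have hNle : ∀ x : F₀, Nf x ≤ (1 + δ) * ‖x‖ := by
    intro x
    have := hNle_term x 0
    simpa using this
  have hNE : ∀ e : E₀, Nf (e : F₀) = ‖f' e‖ := by
    intro e
    refine le_antisymm (by simpa using hNle_term (e : F₀) e) (le_ciInf fun e' => ?_)
    have h1 : ‖f' e‖ ≤ ‖f' (e - e')‖ + ‖f' e'‖ := by
      have := norm_add_le (f' (e - e')) (f' e')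
      rw [← map_add, sub_add_cancel] at this
      exact this
    have h2 : ‖f' (e - e')‖ ≤ (1 + δ) * ‖e - e'‖ := hup _
    have h3 : ‖e - e'‖ = ‖(e : F₀) - (e' : F₀)‖ := rfl
    rw [h3] at h2
    linarith
  have hNnonneg : ∀ x : F₀, 0 ≤ Nf x := fun x =>
    le_trans (by positivity) (hNge x)
  -- triangle inequality
  have hNadd : ∀ x y : F₀, Nf (x + y) ≤ Nf x + Nf y := by
    intro x y
    refine le_ciInf_add_ciInf fun e₁ e₂ => ?_
    have h1 := hNle_term (x + y) (e₁ + e₂)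
    have h2 : ((e₁ + e₂ : E₀) : F₀) = (e₁ : F₀) + (e₂ : F₀) := rfl
    have h3 : ‖x + y - ((e₁ : F₀) + (e₂ : F₀))‖ ≤ ‖x - e₁‖ + ‖y - e₂‖ := by
      have := norm_add_le (x - (e₁ : F₀)) (y - (e₂ : F₀))
      have heq : x - (e₁ : F₀) + (y - (e₂ : F₀)) = x + y - ((e₁ : F₀) + (e₂ : F₀)) := by abel
      rwa [heq] at this
    have h4 : ‖f' (e₁ + e₂)‖ ≤ ‖f' e₁‖ + ‖f' e₂‖ := by
      rw [map_add]; exact norm_add_le _ _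
    rw [h2] at h1
    nlinarith [norm_nonneg (x - (e₁ : F₀)), norm_nonneg (y - (e₂ : F₀))]
  -- neg
  have hNneg_le : ∀ x : F₀, Nf (-x) ≤ Nf x := by
    intro x
    refine le_ciInf fun e => ?_
    have h1 := hNle_term (-x) (-e)
    have h2 : ‖-x - ((-e : E₀) : F₀)‖ = ‖x - (e : F₀)‖ := by
      have heq : -x - ((-e : E₀) : F₀) = -(x - (e : F₀)) := by push_cast; abel
      rw [heq, norm_neg]
    have h3 : ‖f' (-e)‖ = ‖f' e‖ := by rw [map_neg, norm_neg]
    rw [h2, h3] at h1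
    exact h1
  have hNneg : ∀ x : F₀, Nf (-x) = Nf x := fun x =>
    le_antisymm (hNneg_le x) (by simpa using hNneg_le (-x))
  -- smul ≤
  have hNsmul : ∀ (c : ℝ) (x : F₀), Nf (c • x) ≤ |c| * Nf x := by
    intro c x
    rcases eq_or_ne c 0 with rfl | hc
    · simp only [zero_smul, abs_zero, zero_mul]
      have h0 : Nf 0 = 0 := by
        have := hNE 0
        simpa using this
      simp [h0]
    · have hcpos : 0 < |c| := abs_pos.2 hc
      rw [← inv_mul_le_iff₀ hcpos]
      refine le_ciInf fun e => ?_
      have h1 := hNle_term (c • x) (c • e)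
      have h2 : ‖c • x - ((c • e : E₀) : F₀)‖ = |c| * ‖x - (e : F₀)‖ := by
        rw [Submodule.coe_smul, ← smul_sub, norm_smul, Real.norm_eq_abs]
      have h3 : ‖f' (c • e)‖ = |c| * ‖f' e‖ := by
        rw [map_smul, norm_smul, Real.norm_eq_abs]
      rw [h2, h3] at h1
      rw [inv_mul_le_iff₀ hcpos]
      calc Nf (c • x) ≤ (1 + δ) * (|c| * ‖x - (e : F₀)‖) + |c| * ‖f' e‖ := h1
        _ = |c| * ((1 + δ) * ‖x - (e : F₀)‖ + ‖f' e‖) := by ring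
  -- the AddGroupNorm
  set N : AddGroupNorm F₀ :=
    { toFun := Nf
      map_zero' := by have := hNE 0; simpa using this
      add_le' := hNadd
      neg' := hNneg
      eq_zero_of_map_eq_zero' := by
        intro x hx
        replace hx : Nf x = 0 := hx
        have := hNge x
        rw [hx] at this
        have hx0 : ‖x‖ ≤ 0 := by
          nlinarith
        simpa using le_antisymm hx0 (norm_nonneg x) } with hN
  have hnorm_eq : ∀ x : F₀,
      @norm F₀ (@SeminormedAddCommGroup.toNorm F₀ (AddGroupNorm.toNormedAddCommGroup N).toSeminormedAddCommGroup) x = Nf x := fun _ => rfl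
  have hnsmul' : ∀ (c : ℝ) (x : F₀),
      @norm F₀ (@SeminormedAddCommGroup.toNorm F₀ (AddGroupNorm.toNormedAddCommGroup N).toSeminormedAddCommGroup) (c • x) ≤
        ‖c‖ * @norm F₀ (@SeminormedAddCommGroup.toNorm F₀ (AddGroupNorm.toNormedAddCommGroup N).toSeminormedAddCommGroup) x := by
    intro c x
    rw [hnorm_eq, hnorm_eq, Real.norm_eq_abs]
    exact hNsmul c x
  obtain ⟨g, hg1, hg2⟩ := @hG F₀ (AddGroupNorm.toNormedAddCommGroup N)
    (@NormedSpace.mk ℝ F₀ _ (AddGroupNorm.toNormedAddCommGroup N).toSeminormedAddCommGroup hns.toModule hnsmul') hfd E₀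
    (@LinearIsometry.mk ℝ ℝ _ _ (RingHom.id ℝ) ↥E₀ G
      (@Submodule.seminormedAddCommGroup ℝ F₀ _
        (AddGroupNorm.toNormedAddCommGroup N).toSeminormedAddCommGroup hns.toModule E₀)
      _ (@Submodule.module ℝ F₀ _ _ hns.toModule E₀) _
      f'.toLinearMap (fun e => (hNE e).symm)) ε hε
  let gl : F₀ →ₗ[ℝ] G :=
    { toFun := fun x => g x
      map_add' := fun a b => map_add g a b
      map_smul' := fun c a => map_smul g c a }
  refine ⟨LinearMap.toContinuousLinearMap gl, fun e => ?_, fun x => ?_⟩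
  · show g (e : F₀) = f' e
    exact hg1 e
  · have hx1 := (hg2 x).1
    have hx2 := (hg2 x).2
    rw [hnorm_eq] at hx1 hx2
    have hεpos : (0:ℝ) < 1 + ε := by linarith
    have hεinv : (0:ℝ) < (1 + ε)⁻¹ := inv_pos.2 hεpos
    have hge := hNge x
    have hle := hNle x
    constructor
    · show ((1 + ε) * (1 + δ))⁻¹ * ‖x‖ ≤ ‖g x‖
      have h1 : ((1 + ε) * (1 + δ))⁻¹ * ‖x‖ = (1 + ε)⁻¹ * ((1 + δ)⁻¹ * ‖x‖) := by
        rw [mul_inv]; ring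
      rw [h1]
      have h2 : (1 + ε)⁻¹ * ((1 + δ)⁻¹ * ‖x‖) ≤ (1 + ε)⁻¹ * Nf x :=
        mul_le_mul_of_nonneg_left hge hεinv.le
      linarith
    · show ‖g x‖ ≤ (1 + ε) * (1 + δ) * ‖x‖
      have h2 : (1 + ε) * Nf x ≤ (1 + ε) * ((1 + δ) * ‖x‖) :=
        mul_le_mul_of_nonneg_left hle hεpos.le
      nlinarith

/-- **Dense chains of Gurarii subspaces.** If a Banach space `X` contains an increasing
chain of closed subspaces with dense union, each of which is a Gurarii space, then `X`
is a Gurarii space. -/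
theorem isGurarii_of_chain
    {X : Type v} [NormedAddCommGroup X] [NormedSpace ℝ X] [CompleteSpace X]
    (Xs : ℕ → Subspace ℝ X) (hmono : Monotone Xs)
    (hclosed : ∀ n, IsClosed ((Xs n : Set X)))
    (hdense : Dense (⋃ n, (Xs n : Set X)))
    (hGur : ∀ n, IsGurarii.{u} (Xs n)) :
    IsGurarii.{u} X := by
  intro F₀ _ _ _ E₀ f ε hε
  classical
  obtain ⟨q, hq⟩ := Submodule.exists_isCompl E₀
  let P : F₀ →L[ℝ] ↥E₀ := LinearMap.toContinuousLinearMap (E₀.projectionOnto q hq)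
  have hP : ∀ e : E₀, P (e : F₀) = e := fun e =>
    Submodule.projectionOnto_apply_left hq e
  set M : ℝ := ‖P‖ with hM
  have hM0 : 0 ≤ M := by rw [hM]; exact norm_nonneg P
  have hεpos : (0:ℝ) < 1 + ε := by linarith
  set δ : ℝ := min (1/2) (ε / ((1+ε) * (M+4))) with hδdef
  have hδpos : 0 < δ := lt_min (by norm_num) (div_pos hε (by positivity))
  have hδhalf : δ ≤ 1/2 := min_le_left _ _
  have hδM : δ * (M + 4) ≤ ε / (1+ε) := by
    have h1 : δ ≤ ε / ((1+ε)*(M+4)) := min_le_right _ _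
    have h2 : (0:ℝ) < M + 4 := by linarith
    calc δ * (M+4) ≤ (ε / ((1+ε)*(M+4))) * (M+4) := by nlinarith
      _ = ε/(1+ε) := by field_simp
  have hfrac : ε / (1+ε) = 1 - (1+ε)⁻¹ := by field_simp; ring
  -- approximation into the chain
  obtain ⟨n, T, hT⟩ := exists_approx_into_chain Xs hmono hdense f δ hδpos
  let T' : ↥E₀ →L[ℝ] ↥(Xs n) := LinearMap.toContinuousLinearMap T
  have hTnorm : ∀ e : ↥E₀, ‖T' e‖ = ‖(T e : X)‖ := fun e => rfl
  have hupT : ∀ e : ↥E₀, ‖T' e‖ ≤ (1 + 2*δ) * ‖e‖ := by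
    intro e
    have h1 : ‖(T e : X)‖ ≤ ‖f e‖ + δ * ‖e‖ := by
      have h2 := hT e
      have h3 := norm_add_le ((T e : X) - f e) (f e)
      rw [sub_add_cancel] at h3
      linarith
    have h4 : ‖f e‖ = ‖e‖ := f.norm_map e
    rw [hTnorm e]
    nlinarith [norm_nonneg e]
  have hloT : ∀ e : ↥E₀, (1 + 2*δ)⁻¹ * ‖e‖ ≤ ‖T' e‖ := by
    intro e
    have h1 : ‖f e‖ - δ * ‖e‖ ≤ ‖(T e : X)‖ := by
      have h2 := hT e
      have h3 := norm_add_le (f e - (T e : X)) ((T e : X))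
      rw [sub_add_cancel] at h3
      rw [norm_sub_rev] at h2
      linarith
    have h4 : ‖f e‖ = ‖e‖ := f.norm_map e
    have h5 : (0:ℝ) < 1 + 2*δ := by linarith
    have h6 : (1 + 2*δ) * (1 + 2*δ)⁻¹ = 1 := mul_inv_cancel₀ (by linarith)
    have h7 : (1 + 2*δ)⁻¹ ≤ 1 - δ := by nlinarith [inv_pos.2 h5]
    rw [hTnorm e]
    nlinarith [norm_nonneg e]
  -- extend using the Gurarii property of Xs n
  obtain ⟨g, hg1, hg2⟩ :=
    isGurarii_approx (hGur n) F₀ E₀ T' (2*δ) (by linarith) hupT hloT δ hδpos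
  let g' : F₀ →L[ℝ] X := (Xs n).subtypeL.comp g
  let dmap : ↥E₀ →L[ℝ] X := f.toContinuousLinearMap - (Xs n).subtypeL.comp T'
  have hdmap : ∀ e : ↥E₀, dmap e = f e - (T e : X) := fun e => rfl
  have hd : ∀ e : ↥E₀, ‖dmap e‖ ≤ δ * ‖e‖ := by
    intro e
    rw [hdmap, norm_sub_rev]
    exact hT e
  -- key numerical inequalities
  set B : ℝ := (1 + δ) * (1 + 2*δ) with hB
  have hBpos : (0:ℝ) < B := by rw [hB]; nlinarith
  have hB4 : B ≤ 1 + 4*δ := by rw [hB]; nlinarith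
  have hBinv : B * B⁻¹ = 1 := mul_inv_cancel₀ hBpos.ne'
  have hBinvge : 1 - 4*δ ≤ B⁻¹ := by
    have h1 : (1 - 4*δ) * B ≤ 1 := by
      rw [hB]
      nlinarith [hδpos.le, mul_nonneg hδpos.le hδpos.le,
        mul_nonneg (mul_nonneg hδpos.le hδpos.le) hδpos.le]
    have h2 : (0:ℝ) < B⁻¹ := inv_pos.2 hBpos
    nlinarith [mul_le_mul_of_nonneg_right h1 h2.le]
  have hεinv : (1+ε) * (1+ε)⁻¹ = 1 := mul_inv_cancel₀ hεpos.ne'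
  have hεinvpos : (0:ℝ) < (1+ε)⁻¹ := inv_pos.2 hεpos
  have keyU : B + δ*M ≤ 1 + ε := by
    have h1 : ε/(1+ε) ≤ ε := by
      rw [div_le_iff₀ hεpos]; nlinarith
    nlinarith
  have keyL : (1+ε)⁻¹ + δ*M ≤ B⁻¹ := by
    rw [hfrac] at hδM
    nlinarith
  -- the extension
  refine ⟨g' + dmap.comp P, ?_, ?_⟩
  · intro e
    have h1 : (g' + dmap.comp P) (e : F₀) = g' (e : F₀) + dmap (P (e : F₀)) := rfl
    rw [h1, hP e, hdmap]
    have h2 : g' (e : F₀) = ((g (e : F₀) : ↥(Xs n)) : X) := rfl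
    rw [h2, hg1 e]
    have h3 : ((T' e : ↥(Xs n)) : X) = (T e : X) := rfl
    rw [h3]
    abel
  · intro x
    have happ : (g' + dmap.comp P) x = g' x + dmap (P x) := rfl
    have hgg : ‖g' x‖ = ‖g x‖ := rfl
    have hx1 := (hg2 x).1
    have hx2 := (hg2 x).2
    have hPx : ‖P x‖ ≤ M * ‖x‖ := by
      have := P.le_opNorm x
      rw [hM]
      exact this
    have hdx : ‖dmap (P x)‖ ≤ δ * (M * ‖x‖) := by
      have h1 := hd (P x)
      have h2 : δ * ‖P x‖ ≤ δ * (M * ‖x‖) :=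
        mul_le_mul_of_nonneg_left hPx hδpos.le
      linarith
    have hxnn : (0:ℝ) ≤ ‖x‖ := norm_nonneg x
    constructor
    · rw [happ]
      have hlow : ‖g' x‖ - ‖dmap (P x)‖ ≤ ‖g' x + dmap (P x)‖ := by
        have h3 := norm_add_le (g' x + dmap (P x)) (-(dmap (P x)))
        simp only [add_neg_cancel_right, norm_neg] at h3
        linarith
      have h4 : B⁻¹ * ‖x‖ ≤ ‖g' x‖ := by rw [hgg]; exact hx1
      have h5 : (1+ε)⁻¹ * ‖x‖ + δ * (M * ‖x‖) ≤ B⁻¹ * ‖x‖ := by nlinarith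
      linarith
    · rw [happ]
      have h3 := norm_add_le (g' x) (dmap (P x))
      have h4 : ‖g' x‖ ≤ B * ‖x‖ := by rw [hgg]; exact hx2
      have h5 : B * ‖x‖ + δ * (M * ‖x‖) ≤ (1+ε) * ‖x‖ := by nlinarith
      linarith
end

section
/- Let Γ be a directed family (under inclusion) of closed subspaces of a Banach space X, each isometric to the Gurarii space, with ⋃Γ dense in X. Then every countable subset D ⊆ X is contained in a closed separable subspace of X that is a Gurarii space (obtained as the closure of the union of a countable increasing chain from Γ). -/
open scoped BigOperators

universe u v w

section Amalgam

variable {Fs W : Type*} [NormedAddCommGroup Fs] [NormedSpace ℝ Fs]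
  [NormedAddCommGroup W] [NormedSpace ℝ W]
  (E : Submodule ℝ Fs) (u : E →ₗ[ℝ] W) (θ : ℝ)

/-- The amalgam norm on `Fs × W`. -/
noncomputable def amNorm (x : Fs) (y : W) : ℝ :=
  sInf (Set.range fun e : E => ‖x - (e : Fs)‖ + ‖y + u e‖ + θ * ‖(e : Fs)‖)

lemma amNorm_bddBelow (hθ : 0 ≤ θ) (x : Fs) (y : W) :
    BddBelow (Set.range fun e : E => ‖x - (e : Fs)‖ + ‖y + u e‖ + θ * ‖(e : Fs)‖) := by
  refine ⟨0, fun r hr => ?_⟩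
  obtain ⟨e, rfl⟩ := hr
  positivity

lemma amNorm_le (hθ : 0 ≤ θ) (x : Fs) (y : W) (e : E) :
    amNorm E u θ x y ≤ ‖x - (e : Fs)‖ + ‖y + u e‖ + θ * ‖(e : Fs)‖ :=
  csInf_le (amNorm_bddBelow E u θ hθ x y) ⟨e, rfl⟩

lemma le_amNorm (x : Fs) (y : W) {c : ℝ}
    (h : ∀ e : E, c ≤ ‖x - (e : Fs)‖ + ‖y + u e‖ + θ * ‖(e : Fs)‖) :
    c ≤ amNorm E u θ x y :=
  le_csInf (Set.range_nonempty _) (by rintro r ⟨e, rfl⟩; exact h e)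

lemma amNorm_nonneg (hθ : 0 ≤ θ) (x : Fs) (y : W) : 0 ≤ amNorm E u θ x y :=
  le_amNorm E u θ x y fun e => by positivity

lemma amNorm_zero (hθ : 0 ≤ θ) : amNorm E u θ 0 0 = 0 := by
  refine le_antisymm ?_ (amNorm_nonneg E u θ hθ 0 0)
  have := amNorm_le E u θ hθ 0 0 0
  simpa using this

lemma amNorm_add_le (hθ : 0 ≤ θ) (x₁ x₂ : Fs) (y₁ y₂ : W) :
    amNorm E u θ (x₁ + x₂) (y₁ + y₂) ≤ amNorm E u θ x₁ y₁ + amNorm E u θ x₂ y₂ := by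
  have key : ∀ e₁ e₂ : E, amNorm E u θ (x₁ + x₂) (y₁ + y₂) ≤
      (‖x₁ - (e₁ : Fs)‖ + ‖y₁ + u e₁‖ + θ * ‖(e₁ : Fs)‖) +
      (‖x₂ - (e₂ : Fs)‖ + ‖y₂ + u e₂‖ + θ * ‖(e₂ : Fs)‖) := by
    intro e₁ e₂
    have h := amNorm_le E u θ hθ (x₁ + x₂) (y₁ + y₂) (e₁ + e₂)
    have h1 : ‖x₁ + x₂ - ((e₁ + e₂ : E) : Fs)‖ ≤ ‖x₁ - (e₁ : Fs)‖ + ‖x₂ - (e₂ : Fs)‖ := by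
      have : x₁ + x₂ - ((e₁ + e₂ : E) : Fs) = (x₁ - (e₁ : Fs)) + (x₂ - (e₂ : Fs)) := by
        push_cast; abel
      rw [this]; exact norm_add_le _ _
    have h2 : ‖y₁ + y₂ + u (e₁ + e₂)‖ ≤ ‖y₁ + u e₁‖ + ‖y₂ + u e₂‖ := by
      have : y₁ + y₂ + u (e₁ + e₂) = (y₁ + u e₁) + (y₂ + u e₂) := by
        rw [map_add]; abel
      rw [this]; exact norm_add_le _ _
    have h3 : θ * ‖((e₁ + e₂ : E) : Fs)‖ ≤ θ * ‖(e₁ : Fs)‖ + θ * ‖(e₂ : Fs)‖ := by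
      rw [← mul_add]
      have : ‖((e₁ + e₂ : E) : Fs)‖ ≤ ‖(e₁ : Fs)‖ + ‖(e₂ : Fs)‖ := by
        push_cast; exact norm_add_le _ _
      exact mul_le_mul_of_nonneg_left this hθ
    linarith
  have step : ∀ e₁ : E, amNorm E u θ (x₁ + x₂) (y₁ + y₂) - amNorm E u θ x₂ y₂ ≤
      ‖x₁ - (e₁ : Fs)‖ + ‖y₁ + u e₁‖ + θ * ‖(e₁ : Fs)‖ := by
    intro e₁
    have : amNorm E u θ (x₁ + x₂) (y₁ + y₂) -
        (‖x₁ - (e₁ : Fs)‖ + ‖y₁ + u e₁‖ + θ * ‖(e₁ : Fs)‖) ≤ amNorm E u θ x₂ y₂ :=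
      le_amNorm E u θ x₂ y₂ fun e₂ => by linarith [key e₁ e₂]
    linarith
  have := le_amNorm E u θ x₁ y₁ (c := amNorm E u θ (x₁ + x₂) (y₁ + y₂) - amNorm E u θ x₂ y₂) step
  linarith

lemma amNorm_smul_le (hθ : 0 ≤ θ) (c : ℝ) (hc : c ≠ 0) (x : Fs) (y : W) :
    amNorm E u θ (c • x) (c • y) ≤ |c| * amNorm E u θ x y := by
  have hc' : 0 < |c| := abs_pos.2 hc
  rw [← div_le_iff₀' hc']
  refine le_amNorm E u θ x y fun e => ?_
  rw [div_le_iff₀' hc']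
  have h := amNorm_le E u θ hθ (c • x) (c • y) (c • e)
  have h1 : ‖c • x - ((c • e : E) : Fs)‖ = |c| * ‖x - (e : Fs)‖ := by
    push_cast
    rw [← smul_sub, norm_smul, Real.norm_eq_abs]
  have h2 : ‖c • y + u (c • e)‖ = |c| * ‖y + u e‖ := by
    rw [map_smul, ← smul_add, norm_smul, Real.norm_eq_abs]
  have h3 : θ * ‖((c • e : E) : Fs)‖ = |c| * (θ * ‖(e : Fs)‖) := by
    push_cast
    rw [norm_smul, Real.norm_eq_abs]; ring
  rw [h1, h2, h3] at h
  linarith [h, mul_add (|c|) (‖x - (e : Fs)‖ + ‖y + u e‖) (θ * ‖(e : Fs)‖),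
    mul_add (|c|) (‖x - (e : Fs)‖) (‖y + u e‖)]

lemma amNorm_smul (hθ : 0 ≤ θ) (c : ℝ) (x : Fs) (y : W) :
    amNorm E u θ (c • x) (c • y) = |c| * amNorm E u θ x y := by
  rcases eq_or_ne c 0 with rfl | hc
  · simp [amNorm_zero E u θ hθ]
  refine le_antisymm (amNorm_smul_le E u θ hθ c hc x y) ?_
  have h := amNorm_smul_le E u θ hθ c⁻¹ (inv_ne_zero hc) (c • x) (c • y)
  rw [inv_smul_smul₀ hc, inv_smul_smul₀ hc, abs_inv] at h
  have hc' : 0 < |c| := abs_pos.2 hc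
  calc |c| * amNorm E u θ x y ≤ |c| * (|c|⁻¹ * amNorm E u θ (c • x) (c • y)) := by
        exact mul_le_mul_of_nonneg_left h (le_of_lt hc')
    _ = amNorm E u θ (c • x) (c • y) := by field_simp

lemma amNorm_neg (hθ : 0 ≤ θ) (x : Fs) (y : W) :
    amNorm E u θ (-x) (-y) = amNorm E u θ x y := by
  have := amNorm_smul E u θ hθ (-1) x y
  simpa using this

lemma amNorm_eq_zero (hθ : 0 < θ) (hu : ∀ e : E, ‖u e‖ ≤ (1 + θ) * ‖(e : Fs)‖)
    (x : Fs) (y : W) (h : amNorm E u θ x y = 0) : x = 0 ∧ y = 0 := by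
  set K : ℝ := 1 + θ⁻¹ + (1 + θ) * θ⁻¹ with hK
  have hKpos : 0 < K := by positivity
  have key : ∀ δ : ℝ, 0 < δ → ‖x‖ ≤ δ * K ∧ ‖y‖ ≤ δ * K := by
    intro δ hδ
    have hlt : sInf (Set.range fun e : E =>
        ‖x - (e : Fs)‖ + ‖y + u e‖ + θ * ‖(e : Fs)‖) < δ := by
      rw [show sInf (Set.range fun e : E =>
        ‖x - (e : Fs)‖ + ‖y + u e‖ + θ * ‖(e : Fs)‖) = amNorm E u θ x y from rfl, h]
      exact hδ
    obtain ⟨r, ⟨e, rfl⟩, hr⟩ := (csInf_lt_iff (amNorm_bddBelow E u θ hθ.le x y)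
      (Set.range_nonempty _)).1 hlt
    simp only at hr
    have h1 : 0 ≤ ‖x - (e : Fs)‖ := norm_nonneg _
    have h2 : 0 ≤ ‖y + u e‖ := norm_nonneg _
    have h3 : 0 ≤ ‖(e : Fs)‖ := norm_nonneg _
    have h4 : 0 ≤ θ * ‖(e : Fs)‖ := by positivity
    have he : ‖(e : Fs)‖ ≤ δ * θ⁻¹ := by
      rw [mul_comm, ← div_eq_inv_mul]
      rw [le_div_iff₀ hθ, mul_comm]
      linarith
    have hx : ‖x‖ ≤ δ + δ * θ⁻¹ := by
      have := norm_sub_norm_le x (e : Fs)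
      linarith
    have hy : ‖y‖ ≤ δ + (1 + θ) * (δ * θ⁻¹) := by
      have t1 : ‖y‖ ≤ ‖y + u e‖ + ‖u e‖ := by
        simpa using norm_sub_le (y + u e) (u e)
      have t2 : ‖u e‖ ≤ (1 + θ) * ‖(e : Fs)‖ := hu e
      have t3 : (1 + θ) * ‖(e : Fs)‖ ≤ (1 + θ) * (δ * θ⁻¹) :=
        mul_le_mul_of_nonneg_left he (by positivity)
      linarith
    constructor
    · calc ‖x‖ ≤ δ + δ * θ⁻¹ := hx
        _ ≤ δ * K := by rw [hK]; ring_nf; nlinarith [mul_pos hδ (mul_pos hθ (mul_pos hθ (inv_pos.2 hθ)))]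
    · calc ‖y‖ ≤ δ + (1 + θ) * (δ * θ⁻¹) := hy
        _ ≤ δ * K := by rw [hK]; ring_nf; nlinarith
  have hx0 : ‖x‖ ≤ 0 := by
    have : ∀ ε : ℝ, 0 < ε → ‖x‖ ≤ 0 + ε := by
      intro ε hε
      have := (key (ε / K) (by positivity)).1
      rw [div_mul_cancel₀ _ (ne_of_gt hKpos)] at this
      linarith
    exact le_of_forall_pos_le_add this
  have hy0 : ‖y‖ ≤ 0 := by
    have : ∀ ε : ℝ, 0 < ε → ‖y‖ ≤ 0 + ε := by
      intro ε hε
      have := (key (ε / K) (by positivity)).2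
      rw [div_mul_cancel₀ _ (ne_of_gt hKpos)] at this
      linarith
    exact le_of_forall_pos_le_add this
  exact ⟨norm_le_zero_iff.1 hx0, norm_le_zero_iff.1 hy0⟩

lemma amNorm_inl (hθ : 0 ≤ θ) (hu : ∀ e : E, (1 - θ) * ‖(e : Fs)‖ ≤ ‖u e‖) (x : Fs) :
    amNorm E u θ x 0 = ‖x‖ := by
  refine le_antisymm ?_ (le_amNorm E u θ x 0 fun e => ?_)
  · simpa using amNorm_le E u θ hθ x 0 0
  · have t1 := norm_sub_norm_le x (e : Fs)
    have t2 := hu e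
    simp only [zero_add]
    linarith

lemma amNorm_inr (hθ : 0 ≤ θ) (hu : ∀ e : E, ‖u e‖ ≤ (1 + θ) * ‖(e : Fs)‖) (y : W) :
    amNorm E u θ 0 y = ‖y‖ := by
  refine le_antisymm ?_ (le_amNorm E u θ 0 y fun e => ?_)
  · simpa using amNorm_le E u θ hθ 0 y 0
  · have t1 : ‖y‖ ≤ ‖y + u e‖ + ‖u e‖ := by
      simpa using norm_sub_le (y + u e) (u e)
    have t2 := hu e
    have t3 : ‖(0 : Fs) - (e : Fs)‖ = ‖(e : Fs)‖ := by simp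
    rw [t3]
    linarith

lemma amNorm_mixed (hθ : 0 ≤ θ) (e : E) :
    amNorm E u θ (e : Fs) (-(u e)) ≤ θ * ‖(e : Fs)‖ := by
  simpa using amNorm_le E u θ hθ (e : Fs) (-(u e)) e

end Amalgam


/-- Type synonym for a finite-dimensional coordinate space in universe `u`,
without preinstalled norm instances. -/
def WT (n : ℕ) : Type u := ULift.{u} (Fin n → ℝ)

noncomputable instance (n : ℕ) : AddCommGroup (WT.{u} n) :=
  inferInstanceAs (AddCommGroup (ULift (Fin n → ℝ)))
noncomputable instance (n : ℕ) : Module ℝ (WT.{u} n) :=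
  inferInstanceAs (Module ℝ (ULift (Fin n → ℝ)))

/-- Type synonym for the amalgamated space. -/
def Am (Fs W : Type*) : Type _ := Fs × W

instance (Fs W : Type*) [AddCommGroup Fs] [AddCommGroup W] : AddCommGroup (Am Fs W) :=
  inferInstanceAs (AddCommGroup (Fs × W))
instance (Fs W : Type*) [AddCommGroup Fs] [AddCommGroup W] [Module ℝ Fs] [Module ℝ W] :
    Module ℝ (Am Fs W) := inferInstanceAs (Module ℝ (Fs × W))

/-- Key extension lemma: in a Gurarii space, an approximate isometry on a subspace of a
finite-dimensional space extends to an approximate isometry on the whole space, up to a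
small error on the subspace. -/
lemma gurarii_extension {G : Type w} [NormedAddCommGroup G] [NormedSpace ℝ G]
    (hG : IsGurarii.{u} G) (Fs : Type u) [NormedAddCommGroup Fs] [NormedSpace ℝ Fs]
    [FiniteDimensional ℝ Fs] (E : Submodule ℝ Fs) (u : E →ₗ[ℝ] G) (θ ε₁ : ℝ)
    (hθ : 0 < θ) (hε₁ : 0 < ε₁)
    (hu1 : ∀ e : E, (1 - θ) * ‖(e : Fs)‖ ≤ ‖u e‖)
    (hu2 : ∀ e : E, ‖u e‖ ≤ (1 + θ) * ‖(e : Fs)‖) :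
    ∃ g : Fs →ₗ[ℝ] G, (∀ e : E, ‖g e - u e‖ ≤ (1 + ε₁) * (θ * ‖(e : Fs)‖)) ∧
      ∀ x : Fs, (1 + ε₁)⁻¹ * ‖x‖ ≤ ‖g x‖ ∧ ‖g x‖ ≤ (1 + ε₁) * ‖x‖ := by
  classical
  set V := LinearMap.range u with hV
  haveI : FiniteDimensional ℝ V := inferInstance
  set n := Module.finrank ℝ V with hn
  set W : Type u := WT.{u} n with hW
  let jW : W ≃ₗ[ℝ] (Fin n → ℝ) := ULift.moduleEquiv
  let j₀ : W ≃ₗ[ℝ] V := jW.trans (Module.finBasis ℝ V).equivFun.symm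
  let j : W →ₗ[ℝ] G := V.subtype ∘ₗ j₀.toLinearMap
  have hjinj : Function.Injective j := by
    intro a b hab
    exact j₀.injective (Subtype.ext hab)
  letI : NormedAddCommGroup W := NormedAddCommGroup.induced W G j hjinj
  letI : NormedSpace ℝ W := NormedSpace.induced ℝ W G j
  have hjn : ∀ w : W, ‖w‖ = ‖j w‖ := fun w => rfl
  let u' : E →ₗ[ℝ] W := j₀.symm.toLinearMap ∘ₗ u.rangeRestrict
  have hju' : ∀ e : E, j (u' e) = u e := by
    intro e
    show (V.subtype) (j₀ (j₀.symm (u.rangeRestrict e))) = u e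
    rw [j₀.apply_symm_apply]
    rfl
  have hu'n : ∀ e : E, ‖u' e‖ = ‖u e‖ := fun e => by rw [hjn, hju']
  have hu'1 : ∀ e : E, (1 - θ) * ‖(e : Fs)‖ ≤ ‖u' e‖ := fun e => (hu'n e) ▸ hu1 e
  have hu'2 : ∀ e : E, ‖u' e‖ ≤ (1 + θ) * ‖(e : Fs)‖ := fun e => (hu'n e) ▸ hu2 e
  -- the amalgam norm on `Am Fs W`
  let gn : AddGroupNorm (Am Fs W) :=
    { toFun := fun p => amNorm E u' θ p.1 p.2
      map_zero' := amNorm_zero E u' θ hθ.le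
      add_le' := fun p q => amNorm_add_le E u' θ hθ.le p.1 q.1 p.2 q.2
      neg' := fun p => amNorm_neg E u' θ hθ.le p.1 p.2
      eq_zero_of_map_eq_zero' := fun p hp => by
        obtain ⟨h1, h2⟩ := amNorm_eq_zero E u' θ hθ hu'2 p.1 p.2 hp
        exact Prod.ext h1 h2 }
  letI : NormedAddCommGroup (Am Fs W) := gn.toNormedAddCommGroup
  have hAmnorm : ∀ p : Am Fs W, ‖p‖ = amNorm E u' θ p.1 p.2 := fun p => rfl
  letI : NormedSpace ℝ (Am Fs W) :=
    { norm_smul_le := fun c p => by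
        rw [hAmnorm, hAmnorm]
        show amNorm E u' θ (c • p.1) (c • p.2) ≤ ‖c‖ * amNorm E u' θ p.1 p.2
        rw [Real.norm_eq_abs, amNorm_smul E u' θ hθ.le c p.1 p.2] }
  haveI : FiniteDimensional ℝ W := j₀.symm.finiteDimensional
  haveI : FiniteDimensional ℝ (Am Fs W) := inferInstanceAs (FiniteDimensional ℝ (Fs × W))
  let inlA : Fs →ₗ[ℝ] Am Fs W := LinearMap.inl ℝ Fs W
  let inrA : W →ₗ[ℝ] Am Fs W := LinearMap.inr ℝ Fs W
  set E' : Subspace ℝ (Am Fs W) := LinearMap.range inrA with hE'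
  have hE'fst : ∀ z : E', (z : Am Fs W).1 = 0 := by
    rintro ⟨z, ⟨y, rfl⟩⟩
    rfl
  let f' : E' →ₗᵢ[ℝ] G :=
    { toLinearMap := j ∘ₗ (LinearMap.snd ℝ Fs W ∘ₗ E'.subtype)
      norm_map' := by
        rintro ⟨z, ⟨y, rfl⟩⟩
        show ‖j y‖ = ‖(inrA y : Am Fs W)‖
        rw [hAmnorm]
        show ‖j y‖ = amNorm E u' θ 0 y
        rw [amNorm_inr E u' θ hθ.le hu'2 y, hjn] }
  obtain ⟨g', hg'ext, hg'bd⟩ := hG (Am Fs W) E' f' ε₁ hε₁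
  refine ⟨g'.toLinearMap ∘ₗ inlA, ?_, ?_⟩
  · intro e
    have hz : inrA (u' e) ∈ E' := ⟨u' e, rfl⟩
    have hze : g' (inrA (u' e)) = u e := by
      have := hg'ext ⟨inrA (u' e), hz⟩
      rw [this]
      show j (u' e) = u e
      exact hju' e
    show ‖g' (inlA e) - u e‖ ≤ (1 + ε₁) * (θ * ‖(e : Fs)‖)
    rw [← hze, ← map_sub]
    set mx : Am Fs W := inlA (e : Fs) - inrA (u' e) with hmx
    have hfst : mx.1 = (e : Fs) := by
      show (e : Fs) - 0 = (e : Fs); simp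
    have hsnd : mx.2 = -(u' e) := by
      show 0 - u' e = -(u' e); simp
    calc ‖g' mx‖ ≤ (1 + ε₁) * ‖mx‖ := (hg'bd _).2
      _ ≤ (1 + ε₁) * (θ * ‖(e : Fs)‖) := by
          apply mul_le_mul_of_nonneg_left _ (by linarith)
          rw [hAmnorm, hfst, hsnd]
          exact amNorm_mixed E u' θ hθ.le e
  · intro x
    have hx : ‖(inlA x : Am Fs W)‖ = ‖x‖ := by
      rw [hAmnorm]
      show amNorm E u' θ x 0 = ‖x‖
      exact amNorm_inl E u' θ hθ.le hu'1 x
    have := hg'bd (inlA x)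
    rw [hx] at this
    exact this

lemma exists_coord_const {E : Type*} [NormedAddCommGroup E] [NormedSpace ℝ E]
    [FiniteDimensional ℝ E] {m : ℕ} (b : Module.Basis (Fin m) ℝ E) :
    ∃ C : ℝ, 0 < C ∧ ∀ x : E, (∑ i, |b.repr x i|) ≤ C * ‖x‖ := by
  classical
  let c : Fin m → (E →L[ℝ] ℝ) := fun i => LinearMap.toContinuousLinearMap (b.coord i)
  refine ⟨(∑ i, ‖c i‖) + 1, by positivity, fun x => ?_⟩
  have h1 : ∀ i, |b.repr x i| ≤ ‖c i‖ * ‖x‖ := by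
    intro i
    have := (c i).le_opNorm x
    simpa [c, Real.norm_eq_abs] using this
  calc (∑ i, |b.repr x i|) ≤ ∑ i, ‖c i‖ * ‖x‖ := Finset.sum_le_sum fun i _ => h1 i
    _ = (∑ i, ‖c i‖) * ‖x‖ := by rw [Finset.sum_mul]
    _ ≤ ((∑ i, ‖c i‖) + 1) * ‖x‖ := by
        apply mul_le_mul_of_nonneg_right _ (norm_nonneg x)
        linarith

lemma exists_bounded_proj {F : Type*} [NormedAddCommGroup F] [NormedSpace ℝ F]
    [FiniteDimensional ℝ F] (E : Submodule ℝ F) :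
    ∃ (P : F →ₗ[ℝ] E) (C : ℝ), 0 < C ∧ (∀ e : E, P (e : F) = e) ∧
      ∀ x : F, ‖P x‖ ≤ C * ‖x‖ := by
  obtain ⟨q, hq⟩ := E.exists_isCompl
  let P := E.linearProjOfIsCompl q hq
  let Pc := LinearMap.toContinuousLinearMap P
  refine ⟨P, ‖Pc‖ + 1, by positivity, fun e => Submodule.linearProjOfIsCompl_apply_left hq e,
    fun x => ?_⟩
  have := Pc.le_opNorm x
  have h2 : Pc x = P x := rfl
  rw [h2] at this
  nlinarith [norm_nonneg x]


set_option maxHeartbeats 2000000 in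
/-- **Capturing countable sets in Gurarii subspaces.** Let `Γ` be a family of closed
subspaces of a Banach space `X`, directed under inclusion, with dense union, each
isometric to the (separable) Gurarii space `G`. Then every countable subset `D ⊆ X`
is contained in a closed separable subspace of `X` that is a Gurarii space. -/
theorem countable_subset_gurarii
    {X : Type v} [NormedAddCommGroup X] [NormedSpace ℝ X] [CompleteSpace X]
    (G : Type w) [NormedAddCommGroup G] [NormedSpace ℝ G] [CompleteSpace G]
    [TopologicalSpace.SeparableSpace G] (hG : IsGurarii.{u} G)
    (Γ : Set (Subspace ℝ X))
    (hclosed : ∀ F ∈ Γ, IsClosed (F : Set X))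
    (hiso : ∀ F ∈ Γ, Nonempty (F ≃ₗᵢ[ℝ] G))
    (hdir : ∀ F₀ ∈ Γ, ∀ F₁ ∈ Γ, ∃ H ∈ Γ, F₀ ≤ H ∧ F₁ ≤ H)
    (hdense : Dense (⋃ F ∈ Γ, (F : Set X)))
    (D : Set X) (hD : D.Countable) :
    ∃ Y : Subspace ℝ X, IsClosed (Y : Set X) ∧
      TopologicalSpace.IsSeparable (Y : Set X) ∧ D ⊆ (Y : Set X) ∧
      IsGurarii.{u} Y := by
  classical
  -- `Γ` is nonempty
  obtain ⟨Fbase, hFbase⟩ : ∃ S, S ∈ Γ := by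
    by_contra h
    push_neg at h
    have hempty : (⋃ F ∈ Γ, (F : Set X)) = (∅ : Set X) := by
      simp only [Set.eq_empty_iff_forall_notMem, Set.mem_iUnion]
      rintro x ⟨S, hS, -⟩
      exact h S hS
    have := hdense.closure_eq
    rw [hempty, closure_empty] at this
    exact (Set.eq_empty_iff_forall_notMem.1 this.symm) 0 (Set.mem_univ 0)
  -- enumerate `D` (together with `0` to avoid emptiness issues)
  obtain ⟨dseq, hdseq⟩ := (hD.insert 0).exists_eq_range (Set.insert_nonempty _ _)
  -- choice functions
  choose nxt hnxtΓ hnxt1 hnxt2 using hdir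
  have hpick : ∀ p : ℕ × ℕ, ∃ S : Subspace ℝ X, S ∈ Γ ∧
      ∃ z ∈ S, dist (dseq p.1) z < 1 / (p.2 + 1) := by
    intro p
    have h1 := hdense (dseq p.1)
    rw [Metric.mem_closure_iff] at h1
    obtain ⟨z, hz, hdist⟩ := h1 (1 / (p.2 + 1)) (by positivity)
    simp only [Set.mem_iUnion] at hz
    obtain ⟨S, hS, hzS⟩ := hz
    exact ⟨S, hS, z, hzS, hdist⟩
  choose pick hpickΓ hpickz using hpick
  -- the increasing chain
  let e2 : ℕ ≃ ℕ × ℕ := (Denumerable.eqv (ℕ × ℕ)).symm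
  let Fc' : ℕ → {S : Subspace ℝ X // S ∈ Γ} := fun n =>
    Nat.rec ⟨Fbase, hFbase⟩
      (fun k ih => ⟨nxt ih.1 ih.2 (pick (e2 k)) (hpickΓ (e2 k)),
        hnxtΓ ih.1 ih.2 (pick (e2 k)) (hpickΓ (e2 k))⟩) n
  let Fc : ℕ → Subspace ℝ X := fun n => (Fc' n).1
  have FcΓ : ∀ n, Fc n ∈ Γ := fun n => (Fc' n).2
  have hstep : ∀ k, Fc k ≤ Fc (k + 1) := fun k =>
    hnxt1 (Fc' k).1 (Fc' k).2 (pick (e2 k)) (hpickΓ (e2 k))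
  have hcap : ∀ k, pick (e2 k) ≤ Fc (k + 1) := fun k =>
    hnxt2 (Fc' k).1 (Fc' k).2 (pick (e2 k)) (hpickΓ (e2 k))
  have hmono : Monotone Fc := monotone_nat_of_le_succ hstep
  set Y : Subspace ℝ X := (⨆ n, Fc n).topologicalClosure with hY
  have hcoe : ((⨆ n, Fc n : Subspace ℝ X) : Set X) = ⋃ n, (Fc n : Set X) :=
    Submodule.coe_iSup_of_directed Fc hmono.directed_le
  have hYcoe : (Y : Set X) = closure (⋃ n, (Fc n : Set X)) := by
    rw [hY, Submodule.topologicalClosure_coe, hcoe]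
  -- separability of each chain member
  have hsep : ∀ n, TopologicalSpace.IsSeparable (Fc n : Set X) := by
    intro n
    obtain ⟨en⟩ := hiso (Fc n) (FcΓ n)
    haveI : TopologicalSpace.SeparableSpace (Fc n) :=
      (en.symm.surjective.denseRange).separableSpace en.symm.continuous
    have := TopologicalSpace.isSeparable_range (continuous_subtype_val (p := fun x => x ∈ Fc n))
    rwa [Subtype.range_coe] at this
  refine ⟨Y, Submodule.isClosed_topologicalClosure _, ?_, ?_, ?_⟩
  · rw [hYcoe]
    exact (TopologicalSpace.IsSeparable.iUnion hsep).closure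
  · -- D ⊆ Y
    intro d hd
    have hd' : d ∈ Set.range dseq := by rw [← hdseq]; exact Set.mem_insert_of_mem _ hd
    obtain ⟨i, rfl⟩ := hd'
    rw [hYcoe]
    rw [Metric.mem_closure_iff]
    intro ε hε
    obtain ⟨m, hm⟩ := exists_nat_one_div_lt hε
    set k := e2.symm (i, m) with hk
    obtain ⟨z, hz, hdist⟩ := hpickz (i, m)
    refine ⟨z, ?_, ?_⟩
    · have h1 : z ∈ Fc (k + 1) := by
        apply hcap k
        rw [hk]
        simpa using hz
      exact Set.mem_iUnion.2 ⟨k + 1, h1⟩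
    · calc dist (dseq i) z < 1 / (m + 1) := hdist
        _ < ε := by exact_mod_cast hm
  · -- `Y` is a Gurarii space
    intro F₀ _ _ _ E₀ f ε hε
    obtain ⟨P, Cp, hCp, hPleft, hPbd⟩ := exists_bounded_proj (F := F₀) E₀
    let m := Module.finrank ℝ E₀
    let b : Module.Basis (Fin m) ℝ E₀ := Module.finBasis ℝ E₀
    obtain ⟨Cb, hCb, hCbbd⟩ := exists_coord_const b
    set ε₁ : ℝ := ε / 2 with hε₁def
    have hε₁ : 0 < ε₁ := by positivity
    have hκ2pos : 0 < (1 + ε / 2)⁻¹ - (1 + ε)⁻¹ := by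
      rw [sub_pos]
      apply inv_strictAnti₀ (by linarith) (by linarith)
    set κ := min (ε / 2) ((1 + ε / 2)⁻¹ - (1 + ε)⁻¹) with hκdef
    have hκ : 0 < κ := lt_min (by positivity) hκ2pos
    have hκ1 : κ ≤ ε / 2 := min_le_left _ _
    have hκ2 : κ ≤ (1 + ε / 2)⁻¹ - (1 + ε)⁻¹ := min_le_right _ _
    set θ := κ / ((2 + ε₁) * Cp) with hθdef
    have hθ : 0 < θ := by
      apply div_pos hκ
      positivity
    let fX : E₀ →ₗᵢ[ℝ] X := Y.subtypeₗᵢ.comp f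
    have hfX : ∀ x : E₀, fX x = ((f x : Y) : X) := fun x => rfl
    set δ := θ / Cb with hδdef
    have hδ : 0 < δ := by positivity
    have happrox : ∀ i : Fin m, ∃ (N : ℕ) (z : X), z ∈ Fc N ∧ ‖z - fX (b i)‖ < δ := by
      intro i
      have hmemY : ((f (b i) : Y) : X) ∈ (Y : Set X) := (f (b i)).2
      rw [hYcoe, Metric.mem_closure_iff] at hmemY
      obtain ⟨z, hz, hdist⟩ := hmemY δ hδ
      obtain ⟨N, hN⟩ := Set.mem_iUnion.1 hz
      refine ⟨N, z, hN, ?_⟩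
      rw [← hfX, dist_comm] at hdist
      rwa [← dist_eq_norm]
    choose Ni zi hzi hzdist using happrox
    set N : ℕ := Finset.univ.sup Ni with hNdef
    have hziN : ∀ i, zi i ∈ Fc N := fun i =>
      hmono (Finset.le_sup (Finset.mem_univ i)) (hzi i)
    let wv : Fin m → Fc N := fun i => ⟨zi i, hziN i⟩
    let f'' : E₀ →ₗ[ℝ] Fc N := b.constr ℝ wv
    -- perturbation bound
    have hpert : ∀ x : E₀, ‖((f'' x : X)) - fX x‖ ≤ θ * ‖x‖ := by
      intro x
      set Dm : E₀ →ₗ[ℝ] X := ((Fc N).subtype ∘ₗ f'') - fX.toLinearMap with hDm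
      have hDmb : ∀ i, Dm (b i) = zi i - fX (b i) := by
        intro i
        simp only [hDm, LinearMap.sub_apply, LinearMap.coe_comp, Function.comp_apply,
          Submodule.coe_subtype]
        congr 1
        show ((f'' (b i) : Fc N) : X) = zi i
        rw [show f'' (b i) = wv i from b.constr_basis ℝ wv i]
      have hDmx : Dm x = ∑ i, b.repr x i • Dm (b i) := by
        conv_lhs => rw [← b.sum_repr x]
        rw [map_sum]
        simp only [map_smul]
      have h1 : ‖Dm x‖ ≤ ∑ i, |b.repr x i| * δ := by
        rw [hDmx]
        refine (norm_sum_le _ _).trans (Finset.sum_le_sum fun i _ => ?_)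
        rw [norm_smul, Real.norm_eq_abs, hDmb i]
        exact mul_le_mul_of_nonneg_left (hzdist i).le (abs_nonneg _)
      have h2 : (∑ i, |b.repr x i| * δ) = (∑ i, |b.repr x i|) * δ := by
        rw [Finset.sum_mul]
      have h3 : (∑ i, |b.repr x i|) * δ ≤ (Cb * ‖x‖) * δ :=
        mul_le_mul_of_nonneg_right (hCbbd x) hδ.le
      have h4 : (Cb * ‖x‖) * δ = θ * ‖x‖ := by
        rw [hδdef]
        field_simp
      have : ‖Dm x‖ = ‖((f'' x : X)) - fX x‖ := by
        simp [hDm, LinearMap.sub_apply]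
      rw [← this]
      linarith
    obtain ⟨eN⟩ := hiso (Fc N) (FcΓ N)
    let u : E₀ →ₗ[ℝ] G := (eN : Fc N ≃ₗ[ℝ] G).toLinearMap ∘ₗ f''
    have hun : ∀ x : E₀, ‖u x‖ = ‖((f'' x : X))‖ := by
      intro x
      show ‖eN (f'' x)‖ = _
      rw [eN.norm_map]
      rfl
    have hxnorm : ∀ x : E₀, ‖fX x‖ = ‖(x : F₀)‖ := fun x => by
      rw [fX.norm_map]; exact Submodule.coe_norm x
    have hu1 : ∀ x : E₀, (1 - θ) * ‖(x : F₀)‖ ≤ ‖u x‖ := by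
      intro x
      have := hpert x
      have h2 := norm_sub_norm_le (fX x) ((f'' x : X))
      rw [norm_sub_rev] at h2
      rw [hun]
      have h3 := hxnorm x
      have h4 : ‖x‖ = ‖(x : F₀)‖ := Submodule.coe_norm x
      rw [h4] at this
      nlinarith [norm_nonneg (x : F₀)]
    have hu2 : ∀ x : E₀, ‖u x‖ ≤ (1 + θ) * ‖(x : F₀)‖ := by
      intro x
      have := hpert x
      have h2 := norm_sub_norm_le ((f'' x : X)) (fX x)
      rw [hun]
      have h3 := hxnorm x
      have h4 : ‖x‖ = ‖(x : F₀)‖ := Submodule.coe_norm x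
      rw [h4] at this
      nlinarith [norm_nonneg (x : F₀)]
    obtain ⟨g, hge, hgbd⟩ := gurarii_extension hG F₀ E₀ u θ ε₁ hθ hε₁ hu1 hu2
    have hYle : Fc N ≤ Y := le_trans (le_iSup Fc N) (Submodule.le_topologicalClosure _)
    let incl : Fc N →ₗ[ℝ] Y := Submodule.inclusion hYle
    have hincl : ∀ z : Fc N, ((incl z : Y) : X) = (z : X) := fun z => rfl
    have hinclnorm : ∀ z : Fc N, ‖incl z‖ = ‖z‖ := fun z => rfl
    let hYmap : F₀ →ₗ[ℝ] Y := incl ∘ₗ (eN.symm : G ≃ₗ[ℝ] Fc N).toLinearMap ∘ₗ g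
    have hYnorm : ∀ x : F₀, ‖hYmap x‖ = ‖g x‖ := by
      intro x
      show ‖incl (eN.symm (g x))‖ = ‖g x‖
      rw [hinclnorm, eN.symm.norm_map]
    have hclose : ∀ x : E₀, ‖hYmap (x : F₀) - f x‖ ≤ (2 + ε₁) * θ * ‖(x : F₀)‖ := by
      intro x
      have key : ((hYmap (x : F₀) - f x : Y) : X) =
          (((eN.symm (g x) : Fc N) : X) - ((f'' x : X))) + (((f'' x : X)) - fX x) := by
        have h0 : ((hYmap (x : F₀) - f x : Y) : X) =
            ((hYmap (x : F₀) : Y) : X) - ((f x : Y) : X) := rfl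
        have h1 : ((hYmap (x : F₀) : Y) : X) = ((eN.symm (g (x : F₀)) : Fc N) : X) := rfl
        have h2 : fX x = ((f x : Y) : X) := rfl
        rw [h0, h1, ← h2]
        abel
      have hnorm1 : ‖hYmap (x : F₀) - f x‖ = ‖((hYmap (x : F₀) - f x : Y) : X)‖ := rfl
      rw [hnorm1, key]
      have t1 : ‖((eN.symm (g x) : Fc N) : X) - ((f'' x : X))‖ ≤ (1 + ε₁) * (θ * ‖(x : F₀)‖) := by
        have heq : eN.symm (u x) = f'' x := by
          show eN.symm (eN (f'' x)) = f'' x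
          exact eN.symm_apply_apply _
        have : ((eN.symm (g x) : Fc N) : X) - ((f'' x : X)) =
            ((eN.symm (g x) - eN.symm (u x) : Fc N) : X) := by
          rw [heq]; push_cast; ring
        rw [this]
        have : ‖((eN.symm (g x) - eN.symm (u x) : Fc N) : X)‖ =
            ‖eN.symm (g x) - eN.symm (u x)‖ := rfl
        rw [this, ← map_sub, eN.symm.norm_map]
        exact hge x
      have t2 := hpert x
      have h4 : ‖x‖ = ‖(x : F₀)‖ := Submodule.coe_norm x
      rw [h4] at t2
      calc ‖_ + _‖ ≤ ‖((eN.symm (g x) : Fc N) : X) - ((f'' x : X))‖ +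
            ‖((f'' x : X)) - fX x‖ := norm_add_le _ _
        _ ≤ (2 + ε₁) * θ * ‖(x : F₀)‖ := by nlinarith [norm_nonneg ((x : F₀))]
    let gfin : F₀ →ₗ[ℝ] Y := hYmap + (f.toLinearMap - hYmap ∘ₗ E₀.subtype) ∘ₗ P
    have hext : ∀ x : E₀, gfin (x : F₀) = f x := by
      intro x
      show hYmap (x : F₀) + (f (P (x : F₀)) - hYmap ((P (x : F₀) : E₀) : F₀)) = f x
      rw [hPleft x]
      abel
    have hcorr : ∀ x : F₀, ‖gfin x - hYmap x‖ ≤ κ * ‖x‖ := by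
      intro x
      have h1 : gfin x - hYmap x = f (P x) - hYmap ((P x : E₀) : F₀) := by
        show hYmap x + (f (P x) - hYmap ((P x : E₀) : F₀)) - hYmap x = _
        abel
      rw [h1, norm_sub_rev]
      calc ‖hYmap ((P x : E₀) : F₀) - f (P x)‖ ≤ (2 + ε₁) * θ * ‖((P x : E₀) : F₀)‖ :=
            hclose (P x)
        _ ≤ (2 + ε₁) * θ * (Cp * ‖x‖) := by
            apply mul_le_mul_of_nonneg_left _ (by positivity)
            exact hPbd x
        _ = κ * ‖x‖ := by
            rw [hθdef]
            field_simp
    refine ⟨LinearMap.toContinuousLinearMap gfin, ?_, ?_⟩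
    · intro x
      show gfin (x : F₀) = f x
      exact hext x
    · intro x
      have hb := hgbd x
      have h1 : ‖gfin x‖ ≤ ‖hYmap x‖ + κ * ‖x‖ := by
        have := norm_add_le (gfin x - hYmap x) (hYmap x)
        simp only [sub_add_cancel] at this
        have h2 := hcorr x
        show ‖gfin x‖ ≤ _
        linarith
      have h2 : ‖hYmap x‖ - κ * ‖x‖ ≤ ‖gfin x‖ := by
        have h4 := norm_sub_norm_le (hYmap x) (gfin x)
        have h5 : ‖hYmap x - gfin x‖ = ‖gfin x - hYmap x‖ := norm_sub_rev _ _
        have h3 := hcorr x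
        show _ ≤ ‖gfin x‖
        linarith
      rw [hYnorm] at h1 h2
      constructor
      · have hlow : (1 + ε)⁻¹ * ‖x‖ ≤ ((1 + ε₁)⁻¹ - κ) * ‖x‖ := by
          apply mul_le_mul_of_nonneg_right _ (norm_nonneg x)
          rw [hε₁def]
          linarith
        show (1 + ε)⁻¹ * ‖x‖ ≤ ‖gfin x‖
        calc (1 + ε)⁻¹ * ‖x‖ ≤ ((1 + ε₁)⁻¹ - κ) * ‖x‖ := hlow
          _ = (1 + ε₁)⁻¹ * ‖x‖ - κ * ‖x‖ := by ring
          _ ≤ ‖g x‖ - κ * ‖x‖ := by linarith [hb.1]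
          _ ≤ ‖gfin x‖ := h2
      · show ‖gfin x‖ ≤ (1 + ε) * ‖x‖
        calc ‖gfin x‖ ≤ ‖g x‖ + κ * ‖x‖ := h1
          _ ≤ (1 + ε₁) * ‖x‖ + κ * ‖x‖ := by linarith [hb.2]
          _ ≤ (1 + ε) * ‖x‖ := by
              rw [hε₁def]
              nlinarith [norm_nonneg x]
end

section
/- A Banach space X is Gurarii if and only if for every ε > 0, every pair of finite-dimensional spaces E ⊆ F, and every strict ε-isometric embedding f : E → X, there exists an ε-isometric embedding g : F → X with ‖g|_E − f‖ ≤ ε. -/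
universe u v
set_option maxHeartbeats 1000000
set_option synthInstance.maxHeartbeats 400000

section GurariiAux


set_option maxHeartbeats 1000000
set_option synthInstance.maxHeartbeats 400000


/-- Data of a norm on a real vector space. -/
structure NormData (F : Type u) [AddCommGroup F] [Module ℝ F] : Type u where
  N : F → ℝ
  add_le' : ∀ y z : F, N (y + z) ≤ N y + N z
  smul' : ∀ (c : ℝ) (y : F), N (c • y) = |c| * N y
  eq_zero' : ∀ y : F, N y = 0 → y = 0

namespace NormData
variable {F : Type u} [AddCommGroup F] [Module ℝ F] (d : NormData F)

theorem map_zero : d.N 0 = 0 := by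
  have := d.smul' 0 0
  simpa using this

theorem map_neg (y : F) : d.N (-y) = d.N y := by
  have := d.smul' (-1) y
  simpa using this

end NormData

/-- Type synonym carrying the new norm. -/
def Resp {F : Type u} [AddCommGroup F] [Module ℝ F] (_d : NormData F) : Type u := F

namespace Resp
variable {F : Type u} [AddCommGroup F] [Module ℝ F] (d : NormData F)

instance : AddCommGroup (Resp d) := ‹AddCommGroup F›
instance : Module ℝ (Resp d) := ‹Module ℝ F›

noncomputable instance : NormedAddCommGroup (Resp d) :=
  AddGroupNorm.toNormedAddCommGroup
    { toFun := d.N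
      map_zero' := d.map_zero
      add_le' := d.add_le'
      neg' := d.map_neg
      eq_zero_of_map_eq_zero' := d.eq_zero' }

noncomputable instance : NormedSpace ℝ (Resp d) where
  norm_smul_le c x := by
    have : ‖(c • x : Resp d)‖ = |c| * ‖x‖ := d.smul' c x
    rw [this, Real.norm_eq_abs]

instance [FiniteDimensional ℝ F] : FiniteDimensional ℝ (Resp d) :=
  ‹FiniteDimensional ℝ F›

/-- The identity as a linear equivalence. -/
def equiv : F ≃ₗ[ℝ] Resp d := LinearEquiv.refl ℝ F

theorem norm_equiv (y : F) : ‖equiv d y‖ = d.N y := rfl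

end Resp

section GNorm
variable {X : Type v} [NormedAddCommGroup X] [NormedSpace ℝ X]
variable {F : Type u} [NormedAddCommGroup F] [NormedSpace ℝ F]
variable (E₀ : Subspace ℝ F) (f : E₀ →L[ℝ] X) (K : ℝ)

/-- The extended norm: `N y = inf { ‖f x‖ + K‖y - x‖ : x ∈ E₀ }`. -/
noncomputable def gnorm (y : F) : ℝ := ⨅ x : E₀, (‖f x‖ + K * ‖y - (x : F)‖)

variable {E₀ f K}

instance : Nonempty E₀ := ⟨0⟩

theorem gnorm_bdd (hK : 0 ≤ K) (y : F) :
    BddBelow (Set.range fun x : E₀ => ‖f x‖ + K * ‖y - (x : F)‖) := by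
  refine ⟨0, ?_⟩
  rintro _ ⟨x, rfl⟩
  positivity

theorem gnorm_le (hK : 0 ≤ K) (y : F) (x : E₀) :
    gnorm E₀ f K y ≤ ‖f x‖ + K * ‖y - (x : F)‖ :=
  ciInf_le (gnorm_bdd hK y) x

theorem gnorm_le_K (hK : 0 ≤ K) (y : F) : gnorm E₀ f K y ≤ K * ‖y‖ := by
  have := gnorm_le (f := f) hK y 0
  simpa using this

theorem gnorm_nonneg (hK : 0 ≤ K) (y : F) : 0 ≤ gnorm E₀ f K y :=
  le_ciInf fun x => by positivity

theorem le_gnorm (hK : 1 ≤ K) (hlow : ∀ x : E₀, K⁻¹ * ‖x‖ ≤ ‖f x‖) (y : F) :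
    K⁻¹ * ‖y‖ ≤ gnorm E₀ f K y := by
  have hK0 : 0 < K := lt_of_lt_of_le one_pos hK
  have hKi : 0 < K⁻¹ := inv_pos.2 hK0
  have hKiK : K⁻¹ ≤ K := le_trans (inv_le_one_of_one_le₀ hK) hK
  refine le_ciInf fun x => ?_
  have h1 : ‖y‖ ≤ ‖(x : F)‖ + ‖y - (x : F)‖ := by
    have := norm_add_le ((x : F)) (y - (x : F))
    simpa using this
  have h2 : K⁻¹ * ‖y - (x : F)‖ ≤ K * ‖y - (x : F)‖ :=
    mul_le_mul_of_nonneg_right hKiK (norm_nonneg _)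
  have h3 := hlow x
  have h4 : ‖(x : E₀)‖ = ‖(x : F)‖ := rfl
  rw [h4] at h3
  nlinarith [norm_nonneg (y - (x : F))]

theorem gnorm_coe (hK : 0 ≤ K) (hup : ∀ x : E₀, ‖f x‖ ≤ K * ‖x‖) (x₀ : E₀) :
    gnorm E₀ f K (x₀ : F) = ‖f x₀‖ := by
  refine le_antisymm ?_ ?_
  · have := gnorm_le (f := f) hK (x₀ : F) x₀
    simpa using this
  · refine le_ciInf fun x => ?_
    have h1 : ‖f x₀‖ ≤ ‖f x‖ + ‖f (x₀ - x)‖ := by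
      have := norm_add_le (f x) (f (x₀ - x))
      rw [← map_add] at this
      simpa using this
    have h2 : ‖f (x₀ - x)‖ ≤ K * ‖x₀ - x‖ := hup _
    have h3 : ‖(x₀ - x : E₀)‖ = ‖(x₀ : F) - (x : F)‖ := rfl
    rw [h3] at h2
    linarith

theorem gnorm_add (hK : 0 ≤ K) (y z : F) :
    gnorm E₀ f K (y + z) ≤ gnorm E₀ f K y + gnorm E₀ f K z := by
  refine le_ciInf_add_ciInf fun x x' => ?_
  calc gnorm E₀ f K (y + z) ≤ ‖f (x + x')‖ + K * ‖y + z - ((x + x' : E₀) : F)‖ :=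
        gnorm_le hK _ _
    _ ≤ (‖f x‖ + K * ‖y - (x : F)‖) + (‖f x'‖ + K * ‖z - (x' : F)‖) := by
        have h1 : ‖f (x + x')‖ ≤ ‖f x‖ + ‖f x'‖ := by
          rw [map_add]; exact norm_add_le _ _
        have h2 : ‖y + z - ((x + x' : E₀) : F)‖ ≤ ‖y - (x : F)‖ + ‖z - (x' : F)‖ := by
          have : y + z - ((x + x' : E₀) : F) = (y - (x : F)) + (z - (x' : F)) := by
            push_cast; abel
          rw [this]; exact norm_add_le _ _
        nlinarith [mul_le_mul_of_nonneg_left h2 hK]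

theorem gnorm_zero (hK : 0 ≤ K) : gnorm E₀ f K (0 : F) = 0 :=
  le_antisymm (by simpa using gnorm_le_K (f := f) hK 0) (gnorm_nonneg hK 0)

theorem gnorm_smul_le (hK : 0 ≤ K) (c : ℝ) (y : F) :
    gnorm E₀ f K (c • y) ≤ |c| * gnorm E₀ f K y := by
  rcases eq_or_ne c 0 with rfl | hc
  · simp [gnorm_zero hK]
  · have hc' : 0 < |c| := abs_pos.2 hc
    have h : ∀ x : E₀, gnorm E₀ f K (c • y) / |c| ≤ ‖f x‖ + K * ‖y - (x : F)‖ := by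
      intro x
      rw [div_le_iff₀ hc']
      calc gnorm E₀ f K (c • y) ≤ ‖f (c • x)‖ + K * ‖c • y - ((c • x : E₀) : F)‖ :=
            gnorm_le hK _ _
        _ = (‖f x‖ + K * ‖y - (x : F)‖) * |c| := by
            rw [map_smul]
            have e1 : ‖c • f x‖ = |c| * ‖f x‖ := by
              rw [norm_smul, Real.norm_eq_abs]
            have e2 : c • y - ((c • x : E₀) : F) = c • (y - (x : F)) := by
              push_cast; rw [smul_sub]
            rw [e1, e2, norm_smul, Real.norm_eq_abs]
            ring
    have := le_ciInf h
    rw [div_le_iff₀ hc'] at this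
    calc gnorm E₀ f K (c • y) ≤ gnorm E₀ f K y * |c| := this
      _ = |c| * gnorm E₀ f K y := mul_comm _ _

theorem gnorm_smul (hK : 0 ≤ K) (c : ℝ) (y : F) :
    gnorm E₀ f K (c • y) = |c| * gnorm E₀ f K y := by
  rcases eq_or_ne c 0 with rfl | hc
  · simp [gnorm_zero hK]
  · refine le_antisymm (gnorm_smul_le hK c y) ?_
    have h2 := gnorm_smul_le (f := f) hK c⁻¹ (c • y)
    rw [inv_smul_smul₀ hc, abs_inv] at h2
    have hc' : 0 < |c| := abs_pos.2 hc
    calc |c| * gnorm E₀ f K y ≤ |c| * (|c|⁻¹ * gnorm E₀ f K (c • y)) :=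
          mul_le_mul_of_nonneg_left h2 hc'.le
      _ = gnorm E₀ f K (c • y) := by field_simp

end GNorm

theorem forward_key {X : Type u} [NormedAddCommGroup X] [NormedSpace ℝ X]
    (hG : IsGurarii.{u} X)
    {F₀ : Type u} [NormedAddCommGroup F₀] [NormedSpace ℝ F₀] [FiniteDimensional ℝ F₀]
    (E₀ : Subspace ℝ F₀) (f : E₀ →L[ℝ] X) (K ε : ℝ)
    (hK1 : 1 ≤ K) (hKε : K < 1 + ε)
    (hup : ∀ x : E₀, ‖f x‖ ≤ K * ‖x‖) (hlow : ∀ x : E₀, K⁻¹ * ‖x‖ ≤ ‖f x‖) :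
    ∃ g : F₀ →L[ℝ] X, (∀ x : E₀, g (x : F₀) = f x) ∧
      ∀ y : F₀, (1 + ε)⁻¹ * ‖y‖ ≤ ‖g y‖ ∧ ‖g y‖ ≤ (1 + ε) * ‖y‖ := by
  have hK0 : (0:ℝ) < K := lt_of_lt_of_le one_pos hK1
  set δ : ℝ := (1 + ε) / K - 1 with hδdef
  have hδ : 0 < δ := by
    rw [hδdef, sub_pos, lt_div_iff₀ hK0]
    linarith
  have hδK : (1 + δ) * K = 1 + ε := by
    rw [hδdef]; field_simp; ring
  -- the renormed space
  set d : NormData F₀ :=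
    { N := gnorm E₀ f K
      add_le' := gnorm_add hK0.le
      smul' := gnorm_smul hK0.le
      eq_zero' := fun y hy => by
        have h1 := le_gnorm hK1 hlow y
        rw [hy] at h1
        have : ‖y‖ ≤ 0 := by
          have hKi : 0 < K⁻¹ := inv_pos.2 hK0
          nlinarith [norm_nonneg y]
        simpa using le_antisymm this (norm_nonneg y) } with hd
  set J : F₀ ≃ₗ[ℝ] Resp d := Resp.equiv d with hJ
  set E₁ : Subspace ℝ (Resp d) := E₀.map (J : F₀ →ₗ[ℝ] Resp d) with hE₁
  set e : E₀ ≃ₗ[ℝ] E₁ := J.submoduleMap E₀ with he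
  have hnorm₁ : ∀ z : E₁, ‖z‖ = gnorm E₀ f K ((e.symm z : E₀) : F₀) := by
    intro z
    rfl
  set f₁ : E₁ →ₗᵢ[ℝ] X :=
    { toLinearMap := f.toLinearMap.comp (e.symm : E₁ →ₗ[ℝ] E₀)
      norm_map' := fun z => by
        show ‖f (e.symm z)‖ = ‖z‖
        rw [hnorm₁ z, gnorm_coe hK0.le hup] } with hf₁
  obtain ⟨g₁, hg₁ext, hg₁b⟩ := hG (Resp d) E₁ f₁ δ hδ
  set gLin : F₀ →ₗ[ℝ] X := g₁.toLinearMap.comp (J : F₀ →ₗ[ℝ] Resp d) with hgLin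
  refine ⟨LinearMap.toContinuousLinearMap gLin, ?_, ?_⟩
  · intro x
    have h1 : (LinearMap.toContinuousLinearMap gLin) (x : F₀) = g₁ (J (x : F₀)) := rfl
    have h2 : (J (x : F₀) : Resp d) = ((e x : E₁) : Resp d) := rfl
    have h3 := hg₁ext (e x)
    rw [h1]
    rw [h2, h3]
    show f (e.symm (e x)) = f x
    rw [e.symm_apply_apply]
  · intro y
    have hb := hg₁b (J y)
    have hJy : ‖J y‖ = gnorm E₀ f K y := rfl
    have happ : (LinearMap.toContinuousLinearMap gLin) y = g₁ (J y) := rfl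
    rw [hJy] at hb
    rw [happ]
    have hg1 := le_gnorm hK1 hlow y
    have hg2 := gnorm_le_K (f := f) hK0.le y
    have hδ1 : (0:ℝ) < 1 + δ := by linarith
    have hε1 : (0:ℝ) < 1 + ε := by linarith
    constructor
    · have step : (1 + δ)⁻¹ * (K⁻¹ * ‖y‖) ≤ ‖g₁ (J y)‖ :=
        le_trans (mul_le_mul_of_nonneg_left hg1 (by positivity)) hb.1
      have : (1 + ε)⁻¹ * ‖y‖ = (1 + δ)⁻¹ * (K⁻¹ * ‖y‖) := by
        rw [← hδK, mul_inv]
        ring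
      rw [this]; exact step
    · have step : ‖g₁ (J y)‖ ≤ (1 + δ) * (K * ‖y‖) :=
        le_trans hb.2 (mul_le_mul_of_nonneg_left hg2 hδ1.le)
      have : (1 + δ) * (K * ‖y‖) = (1 + ε) * ‖y‖ := by
        rw [← hδK]; ring
      exact le_trans step (le_of_eq this)

theorem exists_K {X : Type v} [NormedAddCommGroup X] [NormedSpace ℝ X]
    {F₀ : Type u} [NormedAddCommGroup F₀] [NormedSpace ℝ F₀] [FiniteDimensional ℝ F₀]
    (E₀ : Subspace ℝ F₀) (f : E₀ →L[ℝ] X) (ε : ℝ) (hε : 0 < ε)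
    (hstrict : ∀ x : E₀, x ≠ 0 → (1 + ε)⁻¹ * ‖x‖ < ‖f x‖ ∧ ‖f x‖ < (1 + ε) * ‖x‖) :
    ∃ K : ℝ, 1 ≤ K ∧ K < 1 + ε ∧
      (∀ x : E₀, ‖f x‖ ≤ K * ‖x‖) ∧ (∀ x : E₀, K⁻¹ * ‖x‖ ≤ ‖f x‖) := by
  have hε1 : (0:ℝ) < 1 + ε := by linarith
  by_cases hs : Subsingleton E₀
  · refine ⟨1, le_rfl, by linarith, fun x => ?_, fun x => ?_⟩ <;>
    · have hx0 : x = 0 := Subsingleton.elim x 0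
      simp [hx0]
  · haveI : Nontrivial E₀ := not_subsingleton_iff_nontrivial.1 hs
    have hne : (Metric.sphere (0 : E₀) 1).Nonempty :=
      NormedSpace.sphere_nonempty.mpr zero_le_one
    have hcpt : IsCompact (Metric.sphere (0 : E₀) 1) := isCompact_sphere 0 1
    have hcont : Continuous fun x : E₀ => ‖f x‖ := f.continuous.norm
    obtain ⟨xM, hxM, hmax⟩ := hcpt.exists_isMaxOn hne hcont.continuousOn
    obtain ⟨xm, hxm, hmin⟩ := hcpt.exists_isMinOn hne hcont.continuousOn
    have hxMn : ‖xM‖ = 1 := mem_sphere_zero_iff_norm.1 hxM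
    have hxmn : ‖xm‖ = 1 := mem_sphere_zero_iff_norm.1 hxm
    have hxM0 : xM ≠ 0 := by
      intro h; rw [h, norm_zero] at hxMn; exact zero_ne_one hxMn
    have hxm0 : xm ≠ 0 := by
      intro h; rw [h, norm_zero] at hxmn; exact zero_ne_one hxmn
    set a : ℝ := ‖f xM‖ with ha
    set b : ℝ := ‖f xm‖ with hb
    have haε : a < 1 + ε := by
      have := (hstrict xM hxM0).2
      rw [hxMn] at this; simpa using this
    have hbε : (1 + ε)⁻¹ < b := by
      have := (hstrict xm hxm0).1
      rw [hxmn] at this; simpa using this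
    have hb0 : 0 < b := lt_trans (by positivity) hbε
    set K : ℝ := max 1 (max a b⁻¹) with hK
    have hK1 : 1 ≤ K := le_max_left _ _
    have hK0 : 0 < K := lt_of_lt_of_le one_pos hK1
    have haK : a ≤ K := le_trans (le_max_left _ _) (le_max_right _ _)
    have hbK : b⁻¹ ≤ K := le_trans (le_max_right _ _) (le_max_right _ _)
    have hKib : K⁻¹ ≤ b := by
      rw [← inv_inv b]
      exact inv_anti₀ (by positivity) hbK
    refine ⟨K, hK1, ?_, ?_, ?_⟩
    · refine max_lt (by linarith) (max_lt haε ?_)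
      exact (inv_lt_comm₀ hb0 hε1).mpr hbε
    · intro x
      rcases eq_or_ne x 0 with rfl | hx
      · simp
      · have hx0 : (0:ℝ) < ‖x‖ := norm_pos_iff.2 hx
        set u : E₀ := ‖x‖⁻¹ • x with hu
        have hun : ‖u‖ = 1 := by
          rw [hu, norm_smul, Real.norm_eq_abs, abs_inv, abs_norm, inv_mul_cancel₀ hx0.ne']
        have hus : u ∈ Metric.sphere (0 : E₀) 1 := mem_sphere_zero_iff_norm.2 hun
        have hfu : ‖f u‖ = ‖x‖⁻¹ * ‖f x‖ := by
          rw [hu, map_smul, norm_smul, Real.norm_eq_abs, abs_inv, abs_norm]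
        have h3 : ‖f u‖ ≤ a := hmax hus
        rw [hfu] at h3
        have h2 : ‖x‖⁻¹ * ‖f x‖ ≤ K := le_trans h3 haK
        calc ‖f x‖ = ‖x‖ * (‖x‖⁻¹ * ‖f x‖) := by
              rw [← mul_assoc, mul_inv_cancel₀ hx0.ne', one_mul]
          _ ≤ ‖x‖ * K := mul_le_mul_of_nonneg_left h2 hx0.le
          _ = K * ‖x‖ := mul_comm _ _
    · intro x
      rcases eq_or_ne x 0 with rfl | hx
      · simp
      · have hx0 : (0:ℝ) < ‖x‖ := norm_pos_iff.2 hx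
        set u : E₀ := ‖x‖⁻¹ • x with hu
        have hun : ‖u‖ = 1 := by
          rw [hu, norm_smul, Real.norm_eq_abs, abs_inv, abs_norm, inv_mul_cancel₀ hx0.ne']
        have hus : u ∈ Metric.sphere (0 : E₀) 1 := mem_sphere_zero_iff_norm.2 hun
        have hfu : ‖f u‖ = ‖x‖⁻¹ * ‖f x‖ := by
          rw [hu, map_smul, norm_smul, Real.norm_eq_abs, abs_inv, abs_norm]
        have h3 : b ≤ ‖f u‖ := hmin hus
        rw [hfu] at h3
        have h2 : K⁻¹ ≤ ‖x‖⁻¹ * ‖f x‖ := le_trans hKib h3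
        calc K⁻¹ * ‖x‖ = ‖x‖ * K⁻¹ := mul_comm _ _
          _ ≤ ‖x‖ * (‖x‖⁻¹ * ‖f x‖) := mul_le_mul_of_nonneg_left h2 hx0.le
          _ = ‖f x‖ := by rw [← mul_assoc, mul_inv_cancel₀ hx0.ne', one_mul]

section Backward
variable {X : Type v} [NormedAddCommGroup X] [NormedSpace ℝ X]
variable {F₀ : Type u} [NormedAddCommGroup F₀] [NormedSpace ℝ F₀] [FiniteDimensional ℝ F₀]

-- a continuous linear projection onto a subspace
theorem exists_proj (E₀ : Subspace ℝ F₀) :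
    ∃ P : F₀ →L[ℝ] E₀, ∀ x : E₀, P (x : F₀) = x := by
  obtain ⟨q, hq⟩ := E₀.exists_isCompl
  refine ⟨LinearMap.toContinuousLinearMap (E₀.projectionOnto q hq), fun x => ?_⟩
  simp [Submodule.projectionOnto_apply_left]

theorem backward {X : Type u} [NormedAddCommGroup X] [NormedSpace ℝ X]
    (h : ∀ (ε : ℝ), 0 < ε →
        ∀ (F₁ : Type u) [NormedAddCommGroup F₁] [NormedSpace ℝ F₁]
          [FiniteDimensional ℝ F₁],
          ∀ (E₁ : Subspace ℝ F₁) (f : E₁ →L[ℝ] X),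
            (∀ x : E₁, x ≠ 0 →
              (1 + ε)⁻¹ * ‖x‖ < ‖f x‖ ∧ ‖f x‖ < (1 + ε) * ‖x‖) →
            ∃ g : F₁ →L[ℝ] X,
              (∀ x : F₁, (1 + ε)⁻¹ * ‖x‖ ≤ ‖g x‖ ∧ ‖g x‖ ≤ (1 + ε) * ‖x‖) ∧
              ‖g.comp E₁.subtypeL - f‖ ≤ ε) : IsGurarii.{u} X := by
  intro F₀ _ _ _ E₀ f ε hε
  obtain ⟨P, hP⟩ := exists_proj E₀
  set C : ℝ := ‖P‖ with hC
  have hC0 : 0 ≤ C := hC ▸ norm_nonneg P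
  set δ : ℝ := ε / (1 + C * (1 + ε) ^ 2) with hδdef
  have hden : 0 < 1 + C * (1 + ε) ^ 2 := by positivity
  have hδ : 0 < δ := div_pos hε hden
  have hkey : δ * (1 + C * (1 + ε) ^ 2) = ε := by
    rw [hδdef]; exact div_mul_cancel₀ ε hden.ne'
  have hδε : δ ≤ ε := by
    rw [hδdef]
    apply div_le_self hε.le
    nlinarith [sq_nonneg (1 + ε)]
  set fc : E₀ →L[ℝ] X := f.toContinuousLinearMap with hfc
  have hfcx : ∀ x : E₀, fc x = f x := fun x => rfl
  obtain ⟨g₁, hg₁b, hg₁c⟩ := h δ hδ F₀ E₀ fc (by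
    intro x hx
    have hx0 : 0 < ‖x‖ := norm_pos_iff.2 hx
    have : ‖fc x‖ = ‖x‖ := by rw [hfcx]; exact f.norm_map x
    rw [this]
    constructor
    · have h1 : (1 + δ)⁻¹ < 1 := by
        rw [inv_lt_one_iff₀]; right; linarith
      nlinarith
    · nlinarith)
  set D : E₀ →L[ℝ] X := fc - g₁.comp E₀.subtypeL with hD
  have hDnorm : ‖D‖ ≤ δ := by
    calc ‖D‖ = ‖g₁.comp E₀.subtypeL - fc‖ := by rw [hD]; exact norm_sub_rev fc (g₁.comp E₀.subtypeL)
      _ ≤ δ := hg₁c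
  refine ⟨g₁ + D.comp P, ?_, ?_⟩
  · intro x
    have hPx : P (x : F₀) = x := hP x
    simp only [ContinuousLinearMap.add_apply, ContinuousLinearMap.comp_apply,
      Submodule.subtypeL_apply, hPx, hD, ContinuousLinearMap.sub_apply, hfcx]
    abel
  · intro y
    have hbound : ‖D.comp P y‖ ≤ δ * (C * ‖y‖) := by
      calc ‖D.comp P y‖ = ‖D (P y)‖ := rfl
        _ ≤ ‖D‖ * ‖P y‖ := D.le_opNorm _
        _ ≤ δ * (C * ‖y‖) := by
            apply mul_le_mul hDnorm ?_ (norm_nonneg _) (le_of_lt hδ)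
            have : ‖(P y : F₀)‖ = ‖P y‖ := rfl
            calc ‖P y‖ ≤ ‖P‖ * ‖y‖ := P.le_opNorm _
              _ = C * ‖y‖ := by rw [hC]
    obtain ⟨hlo, hhi⟩ := hg₁b y
    have key2 : ε - δ = δ * C * (1 + ε) ^ 2 := by linear_combination -hkey
    have h1 : (1 + ε)⁻¹ + δ * C ≤ (1 + δ)⁻¹ := by
      have hd1 : (0:ℝ) < 1 + δ := by linarith
      have he1 : (0:ℝ) < 1 + ε := by linarith
      have hmul : ((1 + ε)⁻¹ + δ * C) * ((1 + δ) * (1 + ε)) ≤ (1 + δ)⁻¹ * ((1 + δ) * (1 + ε)) := by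
        have expand1 : ((1 + ε)⁻¹ + δ * C) * ((1 + δ) * (1 + ε))
            = (1 + δ) + δ * C * (1 + δ) * (1 + ε) := by
          field_simp
        have expand2 : (1 + δ)⁻¹ * ((1 + δ) * (1 + ε)) = 1 + ε := by field_simp
        rw [expand1, expand2]
        have hmono : δ * C * (1 + δ) * (1 + ε) ≤ δ * C * (1 + ε) * (1 + ε) := by
          have : (0:ℝ) ≤ δ * C * (1 + ε) := by positivity
          nlinarith
        nlinarith [key2]
      exact le_of_mul_le_mul_right hmul (by positivity)
    have h2 : (1 + δ) + δ * C ≤ 1 + ε := by nlinarith [sq_nonneg ε]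
    constructor
    · simp only [ContinuousLinearMap.add_apply]
      have hrev : ‖g₁ y‖ ≤ ‖g₁ y + (D.comp P) y‖ + ‖(D.comp P) y‖ := by
        have := norm_add_le (g₁ y + (D.comp P) y) (-((D.comp P) y))
        simpa using this
      have hys : 0 ≤ ‖y‖ := norm_nonneg y
      have hh := mul_le_mul_of_nonneg_right h1 hys
      have hexp : ((1 + ε)⁻¹ + δ * C) * ‖y‖ = (1 + ε)⁻¹ * ‖y‖ + δ * (C * ‖y‖) := by ring
      rw [hexp] at hh
      linarith
    · have : ‖(g₁ + D.comp P) y‖ ≤ ‖g₁ y‖ + δ * (C * ‖y‖) := by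
        calc ‖(g₁ + D.comp P) y‖ ≤ ‖g₁ y‖ + ‖D.comp P y‖ :=
          norm_add_le _ _
          _ ≤ _ := by linarith
      have hys : 0 ≤ ‖y‖ := norm_nonneg y
      have hh := mul_le_mul_of_nonneg_right h2 hys
      have hexp : (1 + δ + δ * C) * ‖y‖ = (1 + δ) * ‖y‖ + δ * (C * ‖y‖) := by ring
      rw [hexp] at hh
      linarith

end Backward

/-- **A perturbation criterion for being Gurarii.** A Banach space `X` is Gurarii if and
only if for every `ε > 0`, every pair of finite-dimensional spaces `E ⊆ F` and every
strict `ε`-isometric embedding `f : E → X`, there is an `ε`-isometric embedding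
`g : F → X` with `‖g|_E − f‖ ≤ ε`. -/
theorem isGurarii_iff_approx
    {X : Type u} [NormedAddCommGroup X] [NormedSpace ℝ X] [CompleteSpace X] :
    IsGurarii.{u} X ↔
      ∀ (ε : ℝ), 0 < ε →
        ∀ (F₀ : Type u) [NormedAddCommGroup F₀] [NormedSpace ℝ F₀]
          [FiniteDimensional ℝ F₀],
          ∀ (E₀ : Subspace ℝ F₀) (f : E₀ →L[ℝ] X),
            (∀ x : E₀, x ≠ 0 →
              (1 + ε)⁻¹ * ‖x‖ < ‖f x‖ ∧ ‖f x‖ < (1 + ε) * ‖x‖) →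
            ∃ g : F₀ →L[ℝ] X,
              (∀ x : F₀, (1 + ε)⁻¹ * ‖x‖ ≤ ‖g x‖ ∧ ‖g x‖ ≤ (1 + ε) * ‖x‖) ∧
              ‖g.comp E₀.subtypeL - f‖ ≤ ε := by
  constructor
  · intro hG ε hε F₀ _ _ _ E₀ f hstrict
    obtain ⟨K, hK1, hKε, hup, hlow⟩ := exists_K E₀ f ε hε hstrict
    obtain ⟨g, hext, hb⟩ := forward_key hG E₀ f K ε hK1 hKε hup hlow
    refine ⟨g, hb, ?_⟩
    have hz : g.comp E₀.subtypeL - f = 0 := by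
      ext x
      simp [ContinuousLinearMap.comp_apply, hext x]
    have hnz : ‖(0 : E₀ →L[ℝ] X)‖ = 0 := ContinuousLinearMap.opNorm_zero
    rw [hz, hnz]
    exact hε.le
  · exact backward
end GurariiAux
end

section
/- Let U and V be Banach spaces of universal disposition for the class of Banach spaces of density < κ (κ a regular uncountable cardinal), each of density κ. Then every bijective linear isometry f : X → Y between a subspace X ⊆ U of density < κ and a subspace Y ⊆ V of density < κ extends to a bijective linear isometry h : U → V. In particular, U and V are linearly isometric. -/
universe u

open Cardinal

/-- A Banach space `U` is of *universal disposition* for the class of Banach spaces of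
density `< κ` if for every pair `S ⊆ T` of Banach spaces with `T` of density `< κ` and
every isometric embedding `f : S → U`, there is an isometric embedding `g : T → U`
extending `f`. -/
def UnivDispLT (U : Type u) [NormedAddCommGroup U] [NormedSpace ℝ U]
    (κ : Cardinal.{u}) : Prop :=
  ∀ (T : Type u) [NormedAddCommGroup T] [NormedSpace ℝ T] [CompleteSpace T],
    (∃ s : Set T, Dense s ∧ #s < κ) →
    ∀ (S : Subspace ℝ T) (f : S →ₗᵢ[ℝ] U),
      ∃ g : T →ₗᵢ[ℝ] U, ∀ x : S, g (x : T) = f x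

/-- A Banach space has *density `κ`* if it has a dense subset of cardinality `≤ κ` but
no dense subset of cardinality `< κ`. -/
def DensityEq (U : Type u) [NormedAddCommGroup U] (κ : Cardinal.{u}) : Prop :=
  (∃ s : Set U, Dense s ∧ #s ≤ κ) ∧ ¬ (∃ s : Set U, Dense s ∧ #s < κ)

set_option linter.unusedSectionVars false
set_option linter.deprecated false

section auxBF
variable {U : Type u} {V : Type u} [NormedAddCommGroup U] [NormedSpace ℝ U]
  [NormedAddCommGroup V] [NormedSpace ℝ V]

def SmallDense (κ : Cardinal.{u}) {α : Type u} [TopologicalSpace α] (A : Set α) : Prop :=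
  ∃ s : Set α, s ⊆ A ∧ A ⊆ closure s ∧ #s < κ

structure Good (κ : Cardinal.{u}) (G : Submodule ℝ (U × V)) : Prop where
  iso : ∀ p ∈ G, ‖(p : U × V).1‖ = ‖p.2‖
  small : SmallDense κ (G : Set (U × V))

theorem graph_fun {κ : Cardinal.{u}} {G : Submodule ℝ (U × V)} (hG : Good κ G) :
    ∃ g : ↥(G.map (LinearMap.fst ℝ U V)) →ₗᵢ[ℝ] V,
      ∀ p : U × V, ∀ hp : p ∈ G, g ⟨p.1, ⟨p, hp, rfl⟩⟩ = p.2 := by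
  set A := G.map (LinearMap.fst ℝ U V)
  set φ : ↥G →ₗ[ℝ] ↥A :=
    ((LinearMap.fst ℝ U V).comp G.subtype).codRestrict A
      (fun z => ⟨(z : U × V), z.2, rfl⟩) with hφ
  have hinj : Function.Injective φ := by
    intro z w hzw
    have h1 : (z : U × V).1 = (w : U × V).1 := congrArg Subtype.val hzw
    have h2 : ((z : ↥G) - w : ↥G) = 0 := by
      have hm : ((z : U×V) - w) ∈ G := G.sub_mem z.2 w.2
      have : ‖((z:U×V) - w).1‖ = ‖((z:U×V) - w).2‖ := hG.iso _ hm
      have h1' : ((z:U×V) - w).1 = 0 := by simp [Prod.fst_sub, h1]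
      have : ‖((z:U×V) - w).2‖ = 0 := by rw [← this, h1', norm_zero]
      have h2' : ((z:U×V) - w).2 = 0 := by simpa using this
      ext
      · simpa using h1'
      · simpa [sub_eq_zero] using h2'
    simpa [sub_eq_zero] using h2
  have hsurj : Function.Surjective φ := by
    rintro ⟨a, p, hp, rfl⟩
    exact ⟨⟨p, hp⟩, rfl⟩
  set e := LinearEquiv.ofBijective φ ⟨hinj, hsurj⟩
  set g0 : ↥A →ₗ[ℝ] V := ((LinearMap.snd ℝ U V).comp G.subtype).comp (e.symm : ↥A →ₗ[ℝ] ↥G)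
  have key : ∀ a : ↥A, ((e.symm a : ↥G) : U × V).1 = (a : U) := by
    intro a
    have : φ (e.symm a) = a := e.apply_symm_apply a
    exact congrArg Subtype.val this
  refine ⟨⟨g0, ?_⟩, ?_⟩
  · intro a
    have h := hG.iso _ (e.symm a).2
    have : g0 a = ((e.symm a : ↥G) : U × V).2 := rfl
    rw [this, ← h, key]
    rfl
  · intro p hp
    have he : e.symm ⟨p.1, ⟨p, hp, rfl⟩⟩ = ⟨p, hp⟩ := by
      apply e.injective
      rw [e.apply_symm_apply]
      rfl
    show g0 _ = p.2
    have : g0 ⟨p.1, ⟨p, hp, rfl⟩⟩ = ((e.symm ⟨p.1, ⟨p, hp, rfl⟩⟩ : ↥G) : U × V).2 := rfl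
    rw [this, he]


theorem extend_dom {κ : Cardinal.{u}} (hκ : Cardinal.aleph0 < κ) [CompleteSpace U]
    (hV : UnivDispLT V κ)
    (G : Submodule ℝ (U × V)) (hG : Good κ G) (u : U) :
    ∃ G' : Submodule ℝ (U × V), Good κ G' ∧ G ≤ G' ∧ u ∈ Prod.fst '' (G' : Set (U × V)) := by
  set A : Submodule ℝ U := G.map (LinearMap.fst ℝ U V) with hA
  obtain ⟨g, hg⟩ := graph_fun hG
  obtain ⟨s, hsG, hGs, hs⟩ := hG.small
  set d : Set U := insert 0 (Prod.fst '' s) with hd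
  have hdA : d ⊆ (A : Set U) := by
    rintro x (rfl | ⟨p, hp, rfl⟩)
    · exact A.zero_mem
    · exact ⟨p, hsG hp, rfl⟩
  have hAd : (A : Set U) ⊆ closure d := by
    rintro x ⟨p, hp, rfl⟩
    have : p ∈ closure s := hGs hp
    have := image_closure_subset_closure_image (f := Prod.fst) continuous_fst ⟨p, this, rfl⟩
    exact closure_mono (Set.subset_insert _ _) this
  have hdcard : #d < κ := by
    have h1 : #(Prod.fst '' s) ≤ #s := mk_image_le
    calc #d ≤ #(Prod.fst '' s) + 1 := mk_insert_le
    _ < κ := by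
        have : (1 : Cardinal) < κ := lt_trans one_lt_aleph0 hκ
        exact Cardinal.add_lt_of_lt hκ.le (lt_of_le_of_lt h1 hs) this
  set T : Submodule ℝ U := (A ⊔ Submodule.span ℝ {u}).topologicalClosure with hT
  have hAT : A ≤ T := le_trans le_sup_left (Submodule.le_topologicalClosure _)
  have huT : u ∈ T := (le_trans le_sup_right (Submodule.le_topologicalClosure _) : Submodule.span ℝ {u} ≤ T)
      (Submodule.mem_span_singleton_self u)
  have hTclosed : IsClosed (T : Set U) := Submodule.isClosed_topologicalClosure _
  haveI : CompleteSpace ↥T := hTclosed.completeSpace_coe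
  -- the dense small subset of T
  set s' : Set U := Set.range (fun p : (↥d) × (ULift.{u} ℚ) => (p.1 : U) + (p.2.down : ℝ) • u)
    with hs'
  have hs'T : s' ⊆ (T : Set U) := by
    rintro x ⟨⟨a, q⟩, rfl⟩
    exact T.add_mem (hAT (hdA a.2)) (T.smul_mem _ huT)
  have hTs' : (T : Set U) ⊆ closure s' := by
    have hsub : ((A ⊔ Submodule.span ℝ {u} : Submodule ℝ U) : Set U) ⊆ closure s' := by
      intro x hx
      obtain ⟨a, ha, b, hb, rfl⟩ := Submodule.mem_sup.mp hx
      obtain ⟨c, rfl⟩ := Submodule.mem_span_singleton.mp hb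
      -- a ∈ closure d, c•u approximated by rationals
      rw [mem_closure_iff_seq_limit]
      have ha' : a ∈ closure d := hAd ha
      obtain ⟨an, hand, hanlim⟩ := mem_closure_iff_seq_limit.mp ha'
      have hq : ∀ n : ℕ, ∃ q : ℚ, |c - (q : ℝ)| < 1 / (n + 1) := by
        intro n
        exact exists_rat_near c (by positivity)
      choose qn hqn using hq
      refine ⟨fun n => an n + (qn n : ℝ) • u, fun n => ⟨⟨⟨an n, hand n⟩, ⟨qn n⟩⟩, rfl⟩, ?_⟩
      have hqlim : Filter.Tendsto (fun n => (qn n : ℝ)) Filter.atTop (nhds c) := by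
        rw [tendsto_iff_dist_tendsto_zero]
        apply squeeze_zero (fun n => dist_nonneg) (fun n => ?_) tendsto_one_div_add_atTop_nhds_zero_nat
        rw [Real.dist_eq, abs_sub_comm]
        exact (hqn n).le
      exact Filter.Tendsto.add hanlim (hqlim.smul_const u)
    calc (T : Set U) = closure ((A ⊔ Submodule.span ℝ {u} : Submodule ℝ U) : Set U) :=
          Submodule.topologicalClosure_coe _
    _ ⊆ closure (closure s') := closure_mono hsub
    _ = closure s' := closure_closure
  have hs'card : #s' < κ := by
    have h1 : #s' ≤ #((↥d) × (ULift.{u} ℚ)) := mk_range_le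
    have h2 : #((↥d) × (ULift.{u} ℚ)) = #d * aleph0 := by
      have : #(ULift.{u} ℚ) = aleph0 := Cardinal.mk_denumerable _
      simp [mk_prod, this]
    exact lt_of_le_of_lt (h1.trans h2.le) (Cardinal.mul_lt_of_lt hκ.le hdcard hκ)
  -- transfer to subtype
  set t : Set ↥T := Subtype.val ⁻¹' s' with ht
  have htdense : Dense t := by
    rw [Subtype.dense_iff]
    intro x hx
    have : Subtype.val '' t = s' := by
      apply Set.Subset.antisymm
      · rintro y ⟨z, hz, rfl⟩; exact hz
      · intro y hy; exact ⟨⟨y, hs'T hy⟩, hy, rfl⟩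
    exact closure_mono this.symm.subset (hTs' hx)
  have htcard : #t < κ := lt_of_le_of_lt (mk_preimage_of_injective _ _ Subtype.val_injective) hs'card
  -- the subspace S of T
  set S : Submodule ℝ ↥T := A.comap T.subtype with hS
  set ι : ↥S →ₗ[ℝ] ↥A := (T.subtype.comp S.subtype).codRestrict A (fun x => x.2) with hι
  have hιnorm : ∀ x : ↥S, ‖ι x‖ = ‖x‖ := fun x => rfl
  set fS : ↥S →ₗᵢ[ℝ] V := g.comp ⟨ι, hιnorm⟩ with hfS
  obtain ⟨gbar, hgbar⟩ := hV ↥T ⟨t, htdense, htcard⟩ S fS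
  set ψ : ↥T →ₗ[ℝ] U × V := T.subtype.prod gbar.toLinearMap with hψ
  refine ⟨LinearMap.range ψ, ⟨?_, ?_⟩, ?_, ?_⟩
  · rintro p ⟨x, rfl⟩
    exact (gbar.norm_map x).symm
  · refine ⟨(fun x : ↥T => ((x : U), gbar x)) '' t, ?_, ?_, ?_⟩
    · rintro _ ⟨x, _, rfl⟩; exact ⟨x, rfl⟩
    · rintro _ ⟨x, rfl⟩
      have hx : x ∈ closure t := htdense x
      have hc : Continuous (fun x : ↥T => ((x : U), gbar x)) :=
        Continuous.prodMk continuous_subtype_val gbar.continuous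
      exact image_closure_subset_closure_image hc ⟨x, hx, rfl⟩
    · exact lt_of_le_of_lt mk_image_le htcard
  · intro p hp
    have hp1 : p.1 ∈ A := ⟨p, hp, rfl⟩
    refine ⟨⟨p.1, hAT hp1⟩, ?_⟩
    have hmem : (⟨p.1, hAT hp1⟩ : ↥T) ∈ S := hp1
    have : gbar ⟨p.1, hAT hp1⟩ = fS ⟨⟨p.1, hAT hp1⟩, hmem⟩ := hgbar ⟨⟨p.1, hAT hp1⟩, hmem⟩
    rw [hψ]
    ext
    · rfl
    · show gbar _ = p.2
      rw [this]
      have : fS ⟨⟨p.1, hAT hp1⟩, hmem⟩ = g (ι ⟨⟨p.1, hAT hp1⟩, hmem⟩) := rfl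
      rw [this]
      have hιeq : ι ⟨⟨p.1, hAT hp1⟩, hmem⟩ = ⟨p.1, ⟨p, hp, rfl⟩⟩ := by
        apply Subtype.ext; rfl
      rw [hιeq]
      exact hg p hp
  · exact ⟨(u, gbar ⟨u, huT⟩), ⟨⟨u, huT⟩, rfl⟩, rfl⟩


theorem good_swap {κ : Cardinal.{u}} {G : Submodule ℝ (U × V)} (hG : Good κ G) :
    Good κ (G.map (LinearEquiv.prodComm ℝ U V : (U × V) →ₗ[ℝ] (V × U))) where
  iso := by
    rintro p hp
    rw [Submodule.mem_map_equiv] at hp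
    exact (hG.iso _ hp).symm
  small := by
    obtain ⟨s, hsG, hGs, hs⟩ := hG.small
    have hcont : Continuous (⇑(LinearEquiv.prodComm ℝ U V)) :=
      continuous_snd.prodMk continuous_fst
    refine ⟨(LinearEquiv.prodComm ℝ U V) '' s, ?_, ?_, lt_of_le_of_lt mk_image_le hs⟩
    · rw [Submodule.map_coe]
      exact Set.image_mono hsG
    · rw [Submodule.map_coe]
      intro p hp
      obtain ⟨q, hq, rfl⟩ := hp
      exact image_closure_subset_closure_image hcont ⟨q, hGs hq, rfl⟩

theorem swap_swap (G : Submodule ℝ (U × V)) :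
    (G.map (LinearEquiv.prodComm ℝ U V : (U × V) →ₗ[ℝ] (V × U))).map
      (LinearEquiv.prodComm ℝ V U : (V × U) →ₗ[ℝ] (U × V)) = G := by
  ext p
  rw [Submodule.mem_map_equiv, Submodule.mem_map_equiv]
  constructor
  · intro h; exact h
  · intro h; exact h

theorem step_exists {κ : Cardinal.{u}} (hκ : Cardinal.aleph0 < κ)
    [CompleteSpace U] [CompleteSpace V]
    (hU : UnivDispLT U κ) (hV : UnivDispLT V κ)
    (G : Submodule ℝ (U × V)) (hG : Good κ G) (u : U) (v : V) :
    ∃ G' : Submodule ℝ (U × V), Good κ G' ∧ G ≤ G' ∧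
      u ∈ Prod.fst '' (G' : Set (U × V)) ∧ v ∈ Prod.snd '' (G' : Set (U × V)) := by
  obtain ⟨G1, hG1, hGG1, hu1⟩ := extend_dom hκ hV G hG u
  set e := (LinearEquiv.prodComm ℝ U V : (U × V) →ₗ[ℝ] (V × U))
  set e' := (LinearEquiv.prodComm ℝ V U : (V × U) →ₗ[ℝ] (U × V))
  obtain ⟨G2, hG2, hG12, hv2⟩ := extend_dom hκ hU (G1.map e) (good_swap hG1) v
  refine ⟨G2.map e', good_swap hG2, ?_, ?_, ?_⟩
  · calc G ≤ G1 := hGG1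
    _ = (G1.map e).map e' := (swap_swap G1).symm
    _ ≤ G2.map e' := Submodule.map_mono hG12
  · obtain ⟨p, hp, hpu⟩ := hu1
    have : p ∈ G2.map e' := by
      rw [← swap_swap G1] at hp
      exact Submodule.map_mono hG12 hp
    exact ⟨p, this, hpu⟩
  · obtain ⟨q, hq, hqv⟩ := hv2
    refine ⟨e' q, Submodule.mem_map_of_mem hq, ?_⟩
    exact hqv

variable {κ : Cardinal.{u}} [CompleteSpace U] [CompleteSpace V]

open Classical in
noncomputable def stepG (hκ : Cardinal.aleph0 < κ) (hU : UnivDispLT U κ) (hV : UnivDispLT V κ)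
    (G : Submodule ℝ (U × V)) (u : U) (v : V) : Submodule ℝ (U × V) :=
  if h : Good κ G then (step_exists hκ hU hV G h u v).choose else G

theorem le_stepG (hκ : Cardinal.aleph0 < κ) (hU : UnivDispLT U κ) (hV : UnivDispLT V κ)
    (G : Submodule ℝ (U × V)) (u : U) (v : V) : G ≤ stepG hκ hU hV G u v := by
  classical
  unfold stepG
  split
  · exact (step_exists hκ hU hV G ‹_› u v).choose_spec.2.1
  · exact le_refl _

theorem stepG_spec (hκ : Cardinal.aleph0 < κ) (hU : UnivDispLT U κ) (hV : UnivDispLT V κ)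
    {G : Submodule ℝ (U × V)} (hG : Good κ G) (u : U) (v : V) :
    Good κ (stepG hκ hU hV G u v) ∧
      u ∈ Prod.fst '' ((stepG hκ hU hV G u v : Set (U × V))) ∧
      v ∈ Prod.snd '' ((stepG hκ hU hV G u v : Set (U × V))) := by
  classical
  unfold stepG
  rw [dif_pos hG]
  obtain ⟨h1, _, h3, h4⟩ := (step_exists hκ hU hV G hG u v).choose_spec
  exact ⟨h1, h3, h4⟩

noncomputable def seqG (hκ : Cardinal.aleph0 < κ) (hU : UnivDispLT U κ) (hV : UnivDispLT V κ)
    (G0 : Submodule ℝ (U × V)) (uu : Ordinal.{u} → U) (vv : Ordinal.{u} → V)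
    (i : Ordinal.{u}) : Submodule ℝ (U × V) :=
  Ordinal.limitRecOn i G0 (fun j Gj => stepG hκ hU hV Gj (uu j) (vv j))
    (fun j _ ih => ⨆ k : ↥(Set.Iio j), ih k.1 k.2)

variable (hκ : Cardinal.aleph0 < κ) (hU : UnivDispLT U κ) (hV : UnivDispLT V κ)
  (G0 : Submodule ℝ (U × V)) (uu : Ordinal.{u} → U) (vv : Ordinal.{u} → V)

theorem seqG_zero : seqG hκ hU hV G0 uu vv 0 = G0 := Ordinal.limitRecOn_zero _ _ _

theorem seqG_succ (j : Ordinal.{u}) :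
    seqG hκ hU hV G0 uu vv (Order.succ j) =
      stepG hκ hU hV (seqG hκ hU hV G0 uu vv j) (uu j) (vv j) :=
  Ordinal.limitRecOn_succ _ _ _ _

theorem seqG_limit (j : Ordinal.{u}) (hj : Order.IsSuccLimit j) :
    seqG hκ hU hV G0 uu vv j = ⨆ k : ↥(Set.Iio j), seqG hκ hU hV G0 uu vv k.1 :=
  Ordinal.limitRecOn_limit _ _ _ _ hj

theorem seqG_mono : ∀ i j : Ordinal.{u}, j ≤ i →
    seqG hκ hU hV G0 uu vv j ≤ seqG hκ hU hV G0 uu vv i := by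
  intro i
  induction i using Ordinal.induction with
  | _ i IH =>
    intro j hji
    rcases eq_or_lt_of_le hji with rfl | hj
    · exact le_refl _
    rcases Ordinal.zero_or_succ_or_isSuccLimit i with rfl | ⟨k, rfl⟩ | hlim
    · exact absurd hj (not_lt_zero (a := j))
    · have hjk : j ≤ k := Order.lt_succ_iff.mp hj
      calc seqG hκ hU hV G0 uu vv j ≤ seqG hκ hU hV G0 uu vv k :=
            IH k (Order.lt_succ k) j hjk
      _ ≤ _ := by rw [seqG_succ]; exact le_stepG _ _ _ _ _ _
    · rw [seqG_limit hκ hU hV G0 uu vv i hlim]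
      exact le_iSup (fun k : ↥(Set.Iio i) => seqG hκ hU hV G0 uu vv k.1) ⟨j, hj⟩

theorem seqG_good (hreg : κ.IsRegular) (hG0 : Good κ G0) :
    ∀ i : Ordinal.{u}, i < κ.ord → Good κ (seqG hκ hU hV G0 uu vv i) := by
  intro i
  induction i using Ordinal.induction with
  | _ i IH =>
    intro hi
    rcases Ordinal.zero_or_succ_or_isSuccLimit i with rfl | ⟨k, rfl⟩ | hlim
    · rw [seqG_zero]; exact hG0
    · have hk : k < κ.ord := lt_trans (Order.lt_succ k) hi
      rw [seqG_succ]
      exact (stepG_spec hκ hU hV (IH k (Order.lt_succ k) hk) (uu k) (vv k)).1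
    · rw [seqG_limit hκ hU hV G0 uu vv i hlim]
      haveI : Nonempty ↥(Set.Iio i) := ⟨⟨0, hlim.pos⟩⟩
      have hdir : Directed (· ≤ ·) (fun k : ↥(Set.Iio i) => seqG hκ hU hV G0 uu vv k.1) := by
        intro k l
        refine ⟨⟨max k.1 l.1, Set.mem_Iio.mpr (max_lt k.2 l.2)⟩, ?_, ?_⟩
        · exact seqG_mono hκ hU hV G0 uu vv _ _ (le_max_left _ _)
        · exact seqG_mono hκ hU hV G0 uu vv _ _ (le_max_right _ _)
      have hcoe := Submodule.coe_iSup_of_directed _ hdir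
      constructor
      · intro p hp
        have : p ∈ (↑(⨆ k : ↥(Set.Iio i), seqG hκ hU hV G0 uu vv k.1) : Set (U × V)) := hp
        rw [hcoe] at this
        obtain ⟨sk, ⟨k, rfl⟩, hpk⟩ := this
        exact (IH k.1 k.2 (lt_trans k.2 hi)).iso p hpk
      · -- smallness
        have hsm : ∀ k : ↥(Set.Iio i), SmallDense κ
            ((seqG hκ hU hV G0 uu vv k.1 : Set (U × V))) :=
          fun k => (IH k.1 k.2 (lt_trans k.2 hi)).small
        choose s hs1 hs2 hs3 using hsm
        set e := (Ordinal.ToType.mk (o := i))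
        have hunion : (⋃ k : ↥(Set.Iio i), s k) = ⋃ a : i.ToType, s (e.symm a) := by
          ext x
          simp only [Set.mem_iUnion]
          constructor
          · rintro ⟨k, hk⟩
            refine ⟨e k, ?_⟩
            rwa [e.symm_apply_apply]
          · rintro ⟨a, ha⟩
            exact ⟨e.symm a, ha⟩
        refine ⟨⋃ k : ↥(Set.Iio i), s k, ?_, ?_, ?_⟩
        · rintro x hx
          obtain ⟨sk, ⟨k, rfl⟩, hxk⟩ := hx
          have : x ∈ (seqG hκ hU hV G0 uu vv k.1 : Set (U × V)) := hs1 k hxk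
          show x ∈ (↑(⨆ k : ↥(Set.Iio i), seqG hκ hU hV G0 uu vv k.1) : Set (U × V))
          rw [hcoe]
          exact Set.mem_iUnion.mpr ⟨k, this⟩
        · intro x hx
          have : x ∈ (↑(⨆ k : ↥(Set.Iio i), seqG hκ hU hV G0 uu vv k.1) : Set (U × V)) := hx
          rw [hcoe] at this
          obtain ⟨sk, ⟨k, rfl⟩, hxk⟩ := this
          exact closure_mono (Set.subset_iUnion s k) (hs2 k hxk)
        · rw [hunion]
          refine lt_of_le_of_lt mk_iUnion_le_sum_mk ?_
          refine Cardinal.sum_lt_of_isRegular hreg ?_ (fun a => hs3 _)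
          rw [Cardinal.mk_toType]
          exact Cardinal.lt_ord.mp hi

theorem seqG_capture (hreg : κ.IsRegular) (hG0 : Good κ G0) (j : Ordinal.{u}) (hj : j < κ.ord) :
    uu j ∈ Prod.fst '' ((seqG hκ hU hV G0 uu vv (Order.succ j) : Set (U × V))) ∧
    vv j ∈ Prod.snd '' ((seqG hκ hU hV G0 uu vv (Order.succ j) : Set (U × V))) := by
  have hgood := seqG_good hκ hU hV G0 uu vv hreg hG0 j hj
  rw [seqG_succ]
  exact (stepG_spec hκ hU hV hgood (uu j) (vv j)).2


/-- completeness of the second coordinate lets us fill in the first coordinate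
of the closure of an isometric graph with dense domain -/
theorem dom_full {D : Submodule ℝ (U × V)}
    (hiso : ∀ p ∈ D, ‖(p : U × V).1‖ = ‖p.2‖)
    (hdense : Dense (Prod.fst '' (D : Set (U × V)))) (u : U) :
    ∃ v : V, (u, v) ∈ D.topologicalClosure := by
  have hu : u ∈ closure (Prod.fst '' (D : Set (U × V))) := hdense u
  obtain ⟨x, hxD, hxlim⟩ := mem_closure_iff_seq_limit.mp hu
  choose p hpD hpx using hxD
  have hcauchy : CauchySeq (fun n => (p n).2) := by
    have hcx : CauchySeq x := hxlim.cauchySeq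
    rw [Metric.cauchySeq_iff] at hcx ⊢
    intro ε hε
    obtain ⟨N, hN⟩ := hcx ε hε
    refine ⟨N, fun m hm n hn => ?_⟩
    have hsub : (p m - p n) ∈ D := D.sub_mem (hpD m) (hpD n)
    have hiso' := hiso _ hsub
    rw [dist_eq_norm]
    calc ‖(p m).2 - (p n).2‖ = ‖(p m - p n).1‖ := by rw [hiso']; rfl
    _ = ‖x m - x n‖ := by
        have h12 : (p m - p n).1 = x m - x n := by
          show (p m).1 - (p n).1 = x m - x n
          rw [hpx, hpx]
        rw [h12]
    _ < ε := by rw [← dist_eq_norm]; exact hN m hm n hn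
  obtain ⟨v, hv⟩ := cauchySeq_tendsto_of_complete hcauchy
  refine ⟨v, ?_⟩
  have h1 : Filter.Tendsto (fun n => (p n).1) Filter.atTop (nhds u) :=
    Filter.Tendsto.congr (fun n => (hpx n).symm) hxlim
  have hlim : Filter.Tendsto p Filter.atTop (nhds (u, v)) := h1.prodMk_nhds hv
  have : (u, v) ∈ closure (D : Set (U × V)) :=
    mem_closure_of_tendsto hlim (Filter.Eventually.of_forall hpD)
  rwa [← Submodule.topologicalClosure_coe] at this

theorem swap_mem_closure {D : Submodule ℝ (U × V)} {u : U} {v : V}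
    (h : (v, u) ∈ (D.map (LinearEquiv.prodComm ℝ U V : (U × V) →ₗ[ℝ] (V × U))).topologicalClosure) :
    (u, v) ∈ D.topologicalClosure := by
  have h2 : (v, u) ∈ closure ((D.map (LinearEquiv.prodComm ℝ U V : (U × V) →ₗ[ℝ] (V × U))) : Set (V × U)) := by
    rw [← Submodule.topologicalClosure_coe]; exact h
  have hgoal : (u, v) ∈ closure (D : Set (U × V)) → (u, v) ∈ D.topologicalClosure := by
    intro hh
    rwa [← Submodule.topologicalClosure_coe] at hh
  apply hgoal
  have hcont : Continuous (⇑(LinearEquiv.prodComm ℝ V U)) :=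
    continuous_snd.prodMk continuous_fst
  have := image_closure_subset_closure_image (s := ((D.map (LinearEquiv.prodComm ℝ U V : (U × V) →ₗ[ℝ] (V × U))) : Set (V × U))) hcont ⟨(v, u), h2, rfl⟩
  refine closure_mono ?_ this
  rintro _ ⟨_, ⟨q, hq, rfl⟩, rfl⟩
  exact hq


end auxBF

/-- **Uniqueness and homogeneity of spaces of universal disposition.** Let `κ` be a
regular uncountable cardinal and `U`, `V` Banach spaces of universal disposition for
Banach spaces of density `< κ`, each of density `κ`. Then every bijective linear isometry
between subspaces `X ⊆ U`, `Y ⊆ V` of density `< κ` extends to a bijective linear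
isometry `h : U → V`. In particular `U` and `V` are linearly isometric. -/
theorem univDisp_back_and_forth
    (κ : Cardinal.{u}) (hκ : Cardinal.aleph0 < κ) (hreg : κ.IsRegular)
    (U V : Type u)
    [NormedAddCommGroup U] [NormedSpace ℝ U] [CompleteSpace U]
    [NormedAddCommGroup V] [NormedSpace ℝ V] [CompleteSpace V]
    (hU : UnivDispLT U κ) (hV : UnivDispLT V κ)
    (hdU : DensityEq U κ) (hdV : DensityEq V κ)
    (X : Subspace ℝ U) (hX : ∃ s : Set X, Dense s ∧ #s < κ)
    (Y : Subspace ℝ V) (hY : ∃ s : Set Y, Dense s ∧ #s < κ)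
    (f : X ≃ₗᵢ[ℝ] Y) :
    ∃ h : U ≃ₗᵢ[ℝ] V, ∀ x : X, h (x : U) = (f x : V) := by
  classical
  -- enumerations of dense sets
  obtain ⟨su, hsu, hsuκ⟩ := hdU.1
  obtain ⟨sv, hsv, hsvκ⟩ := hdV.1
  have hsune : su.Nonempty := by
    rcases su.eq_empty_or_nonempty with rfl | h
    · exfalso
      have := hsu.closure_eq
      simp at this
      exact absurd (this ▸ Set.mem_univ (0 : U)) (by simp [← this])
    · exact h
  have hsvne : sv.Nonempty := by
    rcases sv.eq_empty_or_nonempty with rfl | h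
    · exfalso
      have := hsv.closure_eq
      simp at this
      exact absurd (this ▸ Set.mem_univ (0 : V)) (by simp [← this])
    · exact h
  haveI : Nonempty ↥su := hsune.to_subtype
  haveI : Nonempty ↥sv := hsvne.to_subtype
  have hcardU : #su ≤ #(κ.ord.ToType) := by rw [Cardinal.mk_toType, Cardinal.card_ord]; exact hsuκ
  have hcardV : #sv ≤ #(κ.ord.ToType) := by rw [Cardinal.mk_toType, Cardinal.card_ord]; exact hsvκ
  obtain ⟨embU⟩ := Cardinal.le_def _ _ |>.mp hcardU
  obtain ⟨embV⟩ := Cardinal.le_def _ _ |>.mp hcardV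
  set gu : κ.ord.ToType → ↥su := Function.invFun embU
  set gv : κ.ord.ToType → ↥sv := Function.invFun embV
  have hgu : Function.Surjective gu := Function.invFun_surjective embU.injective
  have hgv : Function.Surjective gv := Function.invFun_surjective embV.injective
  set e := (Ordinal.ToType.mk (o := κ.ord))
  set uu : Ordinal.{u} → U := fun j => if h : j < κ.ord then (gu (e ⟨j, h⟩) : U) else 0
  set vv : Ordinal.{u} → V := fun j => if h : j < κ.ord then (gv (e ⟨j, h⟩) : V) else 0
  -- initial graph
  set Fmap : ↥X →ₗ[ℝ] U × V :=
    LinearMap.prod X.subtype (Y.subtype.comp f.toLinearEquiv.toLinearMap) with hFmap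
  set G0 : Submodule ℝ (U × V) := LinearMap.range Fmap with hG0def
  have hG0 : Good κ G0 := by
    constructor
    · rintro p ⟨x, rfl⟩
      exact (f.norm_map x).symm
    · obtain ⟨s, hsd, hsκ⟩ := hX
      refine ⟨Fmap '' s, ?_, ?_, lt_of_le_of_lt mk_image_le hsκ⟩
      · rintro _ ⟨x, _, rfl⟩; exact ⟨x, rfl⟩
      rintro _ ⟨x, rfl⟩
      have hc : Continuous Fmap :=
        continuous_subtype_val.prodMk (continuous_subtype_val.comp f.continuous)
      exact image_closure_subset_closure_image hc ⟨x, hsd x, rfl⟩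
  -- the big union and its closure
  set D : Submodule ℝ (U × V) := seqG hκ hU hV G0 uu vv κ.ord with hD
  have hG0D : G0 ≤ D := by
    rw [← seqG_zero hκ hU hV G0 uu vv]
    exact seqG_mono hκ hU hV G0 uu vv _ _ zero_le
  have hord : Order.IsSuccLimit κ.ord := Cardinal.isSuccLimit_ord hκ.le
  have hisoD : ∀ p ∈ D, ‖(p : U × V).1‖ = ‖p.2‖ := by
    intro p hp
    rw [hD, seqG_limit hκ hU hV G0 uu vv κ.ord hord] at hp
    haveI : Nonempty ↥(Set.Iio κ.ord) := ⟨⟨0, hord.pos⟩⟩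
    have hdir : Directed (· ≤ ·) (fun k : ↥(Set.Iio κ.ord) => seqG hκ hU hV G0 uu vv k.1) :=
      fun k l => ⟨⟨max k.1 l.1, Set.mem_Iio.mpr (max_lt k.2 l.2)⟩,
        seqG_mono hκ hU hV G0 uu vv _ _ (le_max_left _ _),
        seqG_mono hκ hU hV G0 uu vv _ _ (le_max_right _ _)⟩
    have hmem : p ∈ (↑(⨆ k : ↥(Set.Iio κ.ord), seqG hκ hU hV G0 uu vv k.1) : Set (U × V)) := hp
    rw [Submodule.coe_iSup_of_directed _ hdir] at hmem
    obtain ⟨_, ⟨k, rfl⟩, hpk⟩ := hmem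
    exact (seqG_good hκ hU hV G0 uu vv hreg hG0 k.1 k.2).iso p hpk
  have hdomD : Dense (Prod.fst '' (D : Set (U × V))) := by
    have hsub : su ⊆ Prod.fst '' (D : Set (U × V)) := by
      intro z hz
      obtain ⟨a, ha⟩ := hgu ⟨z, hz⟩
      have hjlt : ((e.symm a : ↥(Set.Iio κ.ord)) : Ordinal) < κ.ord := (e.symm a).2
      have huuj : uu ((e.symm a : ↥(Set.Iio κ.ord)) : Ordinal) = z := by
        show (if h : ((e.symm a : ↥(Set.Iio κ.ord)) : Ordinal) < κ.ord
            then (gu (e ⟨((e.symm a : ↥(Set.Iio κ.ord)) : Ordinal), h⟩) : U) else 0) = z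
        rw [dif_pos hjlt]
        have h2 : (⟨((e.symm a : ↥(Set.Iio κ.ord)) : Ordinal), hjlt⟩ : ↥(Set.Iio κ.ord))
            = e.symm a := rfl
        rw [h2, e.apply_symm_apply, ha]
      obtain ⟨q, hq, hq1⟩ := (seqG_capture hκ hU hV G0 uu vv hreg hG0 _ hjlt).1
      have hle : seqG hκ hU hV G0 uu vv
          (Order.succ ((e.symm a : ↥(Set.Iio κ.ord)) : Ordinal)) ≤ D := by
        rw [hD]
        exact seqG_mono hκ hU hV G0 uu vv _ _ (hord.succ_lt hjlt).le
      exact ⟨q, hle hq, by rw [hq1, huuj]⟩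
    exact hsu.mono hsub
  have hranD : Dense (Prod.snd '' (D : Set (U × V))) := by
    have hsub : sv ⊆ Prod.snd '' (D : Set (U × V)) := by
      intro z hz
      obtain ⟨a, ha⟩ := hgv ⟨z, hz⟩
      have hjlt : ((e.symm a : ↥(Set.Iio κ.ord)) : Ordinal) < κ.ord := (e.symm a).2
      have hvvj : vv ((e.symm a : ↥(Set.Iio κ.ord)) : Ordinal) = z := by
        show (if h : ((e.symm a : ↥(Set.Iio κ.ord)) : Ordinal) < κ.ord
            then (gv (e ⟨((e.symm a : ↥(Set.Iio κ.ord)) : Ordinal), h⟩) : V) else 0) = z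
        rw [dif_pos hjlt]
        have h2 : (⟨((e.symm a : ↥(Set.Iio κ.ord)) : Ordinal), hjlt⟩ : ↥(Set.Iio κ.ord))
            = e.symm a := rfl
        rw [h2, e.apply_symm_apply, ha]
      obtain ⟨q, hq, hq1⟩ := (seqG_capture hκ hU hV G0 uu vv hreg hG0 _ hjlt).2
      have hle : seqG hκ hU hV G0 uu vv
          (Order.succ ((e.symm a : ↥(Set.Iio κ.ord)) : Ordinal)) ≤ D := by
        rw [hD]
        exact seqG_mono hκ hU hV G0 uu vv _ _ (hord.succ_lt hjlt).le
      exact ⟨q, hle hq, by rw [hq1, hvvj]⟩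
    exact hsv.mono hsub
  set C : Submodule ℝ (U × V) := D.topologicalClosure with hC
  have hisoC : ∀ p ∈ C, ‖(p : U × V).1‖ = ‖p.2‖ := by
    have heq : Set.EqOn (fun p : U × V => ‖p.1‖) (fun p : U × V => ‖p.2‖)
        (D : Set (U × V)) := fun p hp => hisoD p hp
    have hcl := heq.closure (continuous_fst.norm) (continuous_snd.norm)
    intro p hp
    have : p ∈ closure (D : Set (U × V)) := by
      rwa [← Submodule.topologicalClosure_coe]
    exact hcl this
  -- surjectivity of the two projections on C
  have hsurj1 : ∀ u : U, ∃ v : V, (u, v) ∈ C := fun u => dom_full hisoD hdomD u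
  have hsurj2 : ∀ v : V, ∃ u : U, (u, v) ∈ C := by
    intro v
    set D' := D.map (LinearEquiv.prodComm ℝ U V : (U × V) →ₗ[ℝ] (V × U)) with hD'
    have hisoD' : ∀ p ∈ D', ‖(p : V × U).1‖ = ‖p.2‖ := by
      rintro p hp
      rw [Submodule.mem_map_equiv] at hp
      exact (hisoD _ hp).symm
    have hdomD' : Dense (Prod.fst '' (D' : Set (V × U))) := by
      have : Prod.fst '' (D' : Set (V × U)) = Prod.snd '' (D : Set (U × V)) := by
        ext y
        constructor
        · rintro ⟨_, ⟨q, hq, rfl⟩, rfl⟩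
          exact ⟨q, hq, rfl⟩
        · rintro ⟨q, hq, rfl⟩
          exact ⟨(q.2, q.1), ⟨q, hq, rfl⟩, rfl⟩
      rw [this]
      exact hranD
    obtain ⟨x, hx⟩ := dom_full hisoD' hdomD' v
    exact ⟨x, swap_mem_closure hx⟩
  -- build the equivalence
  set π1 : ↥C →ₗ[ℝ] U := (LinearMap.fst ℝ U V).comp C.subtype with hπ1
  set π2 : ↥C →ₗ[ℝ] V := (LinearMap.snd ℝ U V).comp C.subtype with hπ2
  have hker : ∀ p : ↥C, (p : U × V).1 = 0 → p = 0 := by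
    intro p hp
    have h2 : ‖(p : U × V).2‖ = 0 := by rw [← hisoC _ p.2, hp, norm_zero]
    have : (p : U × V) = 0 := by
      have h2' : (p : U × V).2 = 0 := by simpa using h2
      exact Prod.ext hp h2'
    exact Subtype.ext this
  have hbij1 : Function.Bijective π1 := by
    constructor
    · intro p q hpq
      have : ((p - q : ↥C) : U × V).1 = 0 := by
        show (p : U × V).1 - (q : U × V).1 = 0
        rw [sub_eq_zero]
        exact hpq
      have := hker _ this
      rwa [sub_eq_zero] at this
    · intro u
      obtain ⟨v, hv⟩ := hsurj1 u
      exact ⟨⟨(u, v), hv⟩, rfl⟩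
  have hbij2 : Function.Bijective π2 := by
    constructor
    · intro p q hpq
      have h1 : ((p - q : ↥C) : U × V).2 = 0 := by
        show (p : U × V).2 - (q : U × V).2 = 0
        rw [sub_eq_zero]
        exact hpq
      have h0 : ‖((p - q : ↥C) : U × V).1‖ = 0 := by
        rw [hisoC _ (p - q).2, h1, norm_zero]
      have : ((p - q : ↥C) : U × V).1 = 0 := by simpa using h0
      have := hker _ this
      rwa [sub_eq_zero] at this
    · intro v
      obtain ⟨u, hu⟩ := hsurj2 v
      exact ⟨⟨(u, v), hu⟩, rfl⟩
  set e1 := LinearEquiv.ofBijective π1 hbij1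
  set e2 := LinearEquiv.ofBijective π2 hbij2
  set hEquiv : U ≃ₗ[ℝ] V := e1.symm.trans e2 with hhEquiv
  have hnorm : ∀ u : U, ‖hEquiv u‖ = ‖u‖ := by
    intro u
    have h1 : ((e1.symm u : ↥C) : U × V).1 = u := congrArg id (e1.apply_symm_apply u)
    have : hEquiv u = ((e1.symm u : ↥C) : U × V).2 := rfl
    rw [this, ← hisoC _ (e1.symm u).2, h1]
  refine ⟨⟨hEquiv, hnorm⟩, ?_⟩
  intro x
  have hmem : ((x : U), (f x : V)) ∈ C := by
    have : ((x : U), (f x : V)) ∈ G0 := ⟨x, rfl⟩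
    exact D.le_topologicalClosure (hG0D this)
  have he1 : e1 ⟨((x : U), (f x : V)), hmem⟩ = (x : U) := rfl
  have : e1.symm (x : U) = ⟨((x : U), (f x : V)), hmem⟩ := by
    apply e1.injective
    rw [e1.apply_symm_apply, he1]
  show e2 (e1.symm (x : U)) = (f x : V)
  rw [this]
  rfl
end

section
/- Suppose E is a Banach space of universal disposition for finite-dimensional spaces (strong Gurarii) that admits a skeleton all of whose members are 1-complemented in E and isometric to the Gurarii space G. Then G is 1-injective for finite-dimensional spaces: for all finite-dimensional X ⊆ Y, every operator f : X → G of norm ≤ 1 extends to Y with norm ≤ 1. (Combined with the fact that G is not 1-injective for finite-dimensional spaces, no such skeleton can exist.) -/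
universe u v w

/-- A Banach space `E` is of *universal disposition for finite-dimensional spaces*
(a strong Gurarii space) if every isometric embedding into `E` of a finite-dimensional
subspace of a finite-dimensional space extends to an isometric embedding of the whole
space. -/
def IsStrongGurarii (E : Type v) [NormedAddCommGroup E] [NormedSpace ℝ E] : Prop :=
  ∀ (F₀ : Type u) [NormedAddCommGroup F₀] [NormedSpace ℝ F₀] [FiniteDimensional ℝ F₀],
    ∀ (E₀ : Subspace ℝ F₀) (f : E₀ →ₗᵢ[ℝ] E),
      ∃ g : F₀ →ₗᵢ[ℝ] E, ∀ x : E₀, g (x : F₀) = f x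

/-- Bare type copy used to install a custom norm without instance clashes. -/
def NormedCopy (α : Type u) : Type u := α

namespace NormedCopy
variable (α : Type u) [AddCommGroup α] [Module ℝ α]
instance : AddCommGroup (NormedCopy α) := ‹AddCommGroup α›
instance : Module ℝ (NormedCopy α) := ‹Module ℝ α›
/-- The identity as a linear equivalence. -/
def linearEquiv : NormedCopy α ≃ₗ[ℝ] α := LinearEquiv.refl ℝ α
instance [Module.Finite ℝ α] : Module.Finite ℝ (NormedCopy α) := ‹Module.Finite ℝ α›
end NormedCopy

set_option maxHeartbeats 2000000 in
theorem pushout_ext {E : Type v} [NormedAddCommGroup E] [NormedSpace ℝ E]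
    (hE : IsStrongGurarii.{u} E)
    (Y : Type u) [NormedAddCommGroup Y] [NormedSpace ℝ Y] [FiniteDimensional ℝ Y]
    (X : Subspace ℝ Y) (φ : X →L[ℝ] E) (hφ : ‖φ‖ ≤ 1) :
    ∃ Φ : Y →L[ℝ] E, (∀ x : X, Φ (x : Y) = φ x) ∧ ‖Φ‖ ≤ 1 := by
  classical
  set φₗ : X →ₗ[ℝ] E := (φ : X →ₗ[ℝ] E) with hφₗ
  set K : Submodule ℝ X := LinearMap.ker φₗ with hK
  set Z := NormedCopy (X ⧸ K) with hZ
  set ψ : Z →ₗ[ℝ] E := K.liftQ φₗ le_rfl ∘ₗ (NormedCopy.linearEquiv (X ⧸ K)).toLinearMap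
    with hψ
  have hψinj : Function.Injective ψ := by
    have h1 : Function.Injective (K.liftQ φₗ le_rfl) := by
      rw [← LinearMap.ker_eq_bot]
      exact Submodule.ker_liftQ_eq_bot _ _ _ le_rfl
    exact h1.comp (NormedCopy.linearEquiv (X ⧸ K)).injective
  letI : NormedAddCommGroup Z := NormedAddCommGroup.induced Z E ψ hψinj
  letI : NormedSpace ℝ Z := NormedSpace.induced ℝ Z E ψ
  have hZnorm : ∀ z : Z, ‖z‖ = ‖ψ z‖ := fun z => rfl
  haveI : FiniteDimensional ℝ Z := by
    unfold Z; infer_instance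
  -- the quotient map with codomain Z
  set q : X →ₗ[ℝ] Z := (NormedCopy.linearEquiv (X ⧸ K)).symm.toLinearMap ∘ₗ K.mkQ with hq
  have hψq : ∀ x : X, ψ (q x) = φ x := by
    intro x
    rfl
  have hqnorm : ∀ x : X, ‖q x‖ ≤ ‖x‖ := by
    intro x
    rw [hZnorm, hψq]
    calc ‖φ x‖ ≤ ‖φ‖ * ‖x‖ := φ.le_opNorm x
    _ ≤ 1 * ‖x‖ := by gcongr
    _ = ‖x‖ := one_mul _
  -- the ℓ¹-sum W = Y ⊕₁ Z
  haveI : Fact ((1 : ENNReal) ≤ 1) := ⟨le_refl _⟩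
  set W := WithLp 1 (Y × Z) with hW
  set eW : W ≃ₗ[ℝ] Y × Z := WithLp.linearEquiv 1 ℝ (Y × Z) with heW
  haveI : FiniteDimensional ℝ W := Module.Finite.equiv eW.symm
  have hWnorm : ∀ w : W, ‖w‖ = ‖w.ofLp.1‖ + ‖w.ofLp.2‖ := by
    intro w
    rw [WithLp.prod_norm_eq_of_nat 1 (by norm_cast) w]
    simp
  -- the graph-type subspace Δ = {(x, -q x)}
  set δ : X →ₗ[ℝ] W := eW.symm.toLinearMap ∘ₗ LinearMap.prod X.subtype (-q) with hδ
  set Δ : Submodule ℝ W := LinearMap.range δ with hΔ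
  haveI hΔclosed : IsClosed (Δ : Set W) := Submodule.closed_of_finiteDimensional Δ
  set PO := W ⧸ Δ with hPO
  -- the two canonical maps into the pushout
  set jZ : Z →ₗ[ℝ] PO := Δ.mkQ ∘ₗ eW.symm.toLinearMap ∘ₗ LinearMap.inr ℝ Y Z with hjZ
  set jY : Y →ₗ[ℝ] PO := Δ.mkQ ∘ₗ eW.symm.toLinearMap ∘ₗ LinearMap.inl ℝ Y Z with hjY
  have hδfst : ∀ x : X, (δ x).ofLp.1 = (x : Y) := fun x => rfl
  have hδsnd : ∀ x : X, (δ x).ofLp.2 = -q x := fun x => rfl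
  -- jZ is an isometry
  have hjZnorm : ∀ z : Z, ‖jZ z‖ = ‖z‖ := by
    intro z
    apply le_antisymm
    · calc ‖jZ z‖ ≤ ‖eW.symm (0, z)‖ := Submodule.Quotient.norm_mk_le Δ _
      _ = ‖z‖ := by rw [hWnorm]; show ‖(0:Y)‖ + ‖z‖ = ‖z‖; simp
    · -- lower bound via the definition of the quotient norm
      refine le_of_forall_pos_le_add ?_
      intro ε hε
      obtain ⟨m, hm, hmlt⟩ := Submodule.Quotient.norm_mk_lt (jZ z) hε
      -- m = eW.symm (0, z) + δ x for some x
      have : m - eW.symm (0, z) ∈ Δ := by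
        rw [← Submodule.Quotient.eq]
        exact hm
      obtain ⟨x, hx⟩ := this
      have hmval : m = eW.symm (0, z) + δ x := by
        rw [hx]; abel
      have h1 : ‖m‖ = ‖(x : Y)‖ + ‖z - q x‖ := by
        rw [hWnorm, hmval]
        congr 1
        · congr 1
          show ((0 : Y) + (δ x).ofLp.1) = (x : Y)
          rw [hδfst]; simp
        · congr 1
          show (z + (δ x).ofLp.2) = z - q x
          rw [hδsnd]; abel
      have h2 : ‖z‖ ≤ ‖m‖ := by
        rw [h1]
        calc ‖z‖ ≤ ‖q x‖ + ‖z - q x‖ := by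
              have := norm_add_le (q x) (z - q x)
              simpa using this
        _ ≤ ‖(x : Y)‖ + ‖z - q x‖ := by gcongr; exact hqnorm x
      linarith
  have hjZinj : Function.Injective jZ := by
    intro a b hab
    have : ‖a - b‖ = 0 := by
      rw [← hjZnorm, map_sub, hab, sub_self, norm_zero]
    simpa [sub_eq_zero] using norm_eq_zero.mp this
  -- jY has norm ≤ 1 and agrees with jZ ∘ q on X
  have hjYnorm : ∀ y : Y, ‖jY y‖ ≤ ‖y‖ := by
    intro y
    calc ‖jY y‖ ≤ ‖eW.symm (y, 0)‖ := Submodule.Quotient.norm_mk_le Δ _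
    _ = ‖y‖ := by rw [hWnorm]; show ‖y‖ + ‖(0:Z)‖ = ‖y‖; simp
  have hjYX : ∀ x : X, jY (x : Y) = jZ (q x) := by
    intro x
    show Submodule.Quotient.mk (eW.symm ((x : Y), 0))
      = Submodule.Quotient.mk (eW.symm (0, q x))
    rw [Submodule.Quotient.eq]
    refine ⟨x, ?_⟩
    show eW.symm ((x : Y), -q x) = _
    rw [← map_sub eW.symm]
    congr 1
    simp [Prod.mk_sub_mk]
  -- E₀ = range jZ, isometric to Z hence to a subspace of E
  set E₀ : Subspace ℝ PO := LinearMap.range jZ with hE₀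
  set eZ : Z ≃ₗ[ℝ] E₀ := LinearEquiv.ofInjective jZ hjZinj with heZ
  have heZcoe : ∀ z : Z, ((eZ z : E₀) : PO) = jZ z := fun z =>
    LinearEquiv.ofInjective_apply jZ z
  set ι : E₀ →ₗᵢ[ℝ] E :=
    { toLinearMap := ψ ∘ₗ eZ.symm.toLinearMap
      norm_map' := by
        intro v
        show ‖ψ (eZ.symm v)‖ = ‖v‖
        rw [← hZnorm, ← hjZnorm]
        have : jZ (eZ.symm v) = (v : PO) := by
          conv_rhs => rw [← eZ.apply_symm_apply v]
          rw [heZcoe]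
        rw [this]
        rfl } with hι
  obtain ⟨g, hg⟩ := hE PO E₀ ι
  have hgjZ : ∀ z : Z, g (jZ z) = ψ z := by
    intro z
    have := hg (eZ z)
    rw [heZcoe] at this
    rw [this]
    show ψ (eZ.symm (eZ z)) = ψ z
    rw [eZ.symm_apply_apply]
  -- the extension
  set Φₗ : Y →ₗ[ℝ] E := g.toLinearMap ∘ₗ jY with hΦₗ
  have hΦbound : ∀ y : Y, ‖Φₗ y‖ ≤ 1 * ‖y‖ := by
    intro y
    rw [one_mul]
    show ‖g (jY y)‖ ≤ ‖y‖
    rw [g.norm_map]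
    exact hjYnorm y
  refine ⟨Φₗ.mkContinuous 1 hΦbound, ?_, ?_⟩
  · intro x
    show g (jY (x : Y)) = φ x
    rw [hjYX, hgjZ, hψq]
  · exact Φₗ.mkContinuous_norm_le zero_le_one hΦbound

set_option maxHeartbeats 2000000 in
/-- **Strong Gurarii spaces and 1-complemented skeletons.** If a strong Gurarii space `E`
admits a skeleton whose members are 1-complemented in `E` and isometric to the Gurarii
space `G`, then `G` is 1-injective for finite-dimensional spaces: every norm-`≤ 1`
operator from a subspace of a finite-dimensional space into `G` extends with norm `≤ 1`.
(Combined with the fact that the Gurarii space is not 1-injective for finite-dimensional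
spaces, such a skeleton cannot exist.) -/
theorem strongGurarii_skeleton_one_complemented
    {E : Type v} [NormedAddCommGroup E] [NormedSpace ℝ E] [CompleteSpace E]
    (hE : IsStrongGurarii.{u} E)
    (G : Type w) [NormedAddCommGroup G] [NormedSpace ℝ G] [CompleteSpace G]
    (𝔉 : Set (Subspace ℝ E)) (hskel : IsSkeleton 𝔉)
    (hiso : ∀ F ∈ 𝔉, Nonempty (F ≃ₗᵢ[ℝ] G))
    (hcompl : ∀ F ∈ 𝔉, ∃ P : E →L[ℝ] E, ‖P‖ ≤ 1 ∧ (∀ x : E, P x ∈ F) ∧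
      ∀ x ∈ F, P x = x) :
    ∀ (Y : Type u) [NormedAddCommGroup Y] [NormedSpace ℝ Y] [FiniteDimensional ℝ Y],
      ∀ (X : Subspace ℝ Y) (f : X →L[ℝ] G), ‖f‖ ≤ 1 →
        ∃ g : Y →L[ℝ] G, (∀ x : X, g (x : Y) = f x) ∧ ‖g‖ ≤ 1 := by
  obtain ⟨-, hcover, -, -⟩ := hskel
  -- pick some member of the skeleton
  have h0 : (0 : E) ∈ ⋃ F ∈ 𝔉, (F : Set E) := by rw [hcover]; trivial
  simp only [Set.mem_iUnion] at h0
  obtain ⟨F, hF, -⟩ := h0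
  obtain ⟨e⟩ := hiso F hF
  obtain ⟨P, hP1, hPmem, hPid⟩ := hcompl F hF
  intro Y _ _ _ X f hf
  -- transfer f to a map into E
  set φ : X →L[ℝ] E :=
    F.subtypeL ∘L e.symm.toLinearIsometry.toContinuousLinearMap ∘L f with hφdef
  have hφx : ∀ x : X, φ x = ((e.symm (f x) : F) : E) := fun x => rfl
  have hφ : ‖φ‖ ≤ 1 := by
    refine ContinuousLinearMap.opNorm_le_bound φ zero_le_one ?_
    intro x
    rw [one_mul, hφx]
    calc ‖((e.symm (f x) : F) : E)‖ = ‖e.symm (f x)‖ := rfl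
    _ = ‖f x‖ := e.symm.norm_map _
    _ ≤ ‖f‖ * ‖x‖ := f.le_opNorm x
    _ ≤ 1 * ‖x‖ := by gcongr
    _ = ‖x‖ := one_mul _
  obtain ⟨Φ, hΦext, hΦ1⟩ := pushout_ext hE Y X φ hφ
  set Pc : E →L[ℝ] F := P.codRestrict F hPmem with hPc
  set g : Y →L[ℝ] G :=
    e.toLinearIsometry.toContinuousLinearMap ∘L Pc ∘L Φ with hgdef
  have hgy : ∀ y : Y, g y = e (Pc (Φ y)) := fun y => rfl
  refine ⟨g, ?_, ?_⟩
  · intro x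
    rw [hgy, hΦext x]
    have h1 : Pc (φ x) = e.symm (f x) := by
      apply Subtype.ext
      show P (φ x) = ((e.symm (f x) : F) : E)
      rw [hφx]
      exact hPid _ (e.symm (f x)).2
    rw [h1, e.apply_symm_apply]
  · refine ContinuousLinearMap.opNorm_le_bound g zero_le_one ?_
    intro y
    rw [one_mul, hgy]
    calc ‖e (Pc (Φ y))‖ = ‖Pc (Φ y)‖ := e.norm_map _
    _ = ‖P (Φ y)‖ := rfl
    _ ≤ ‖P‖ * ‖Φ y‖ := P.le_opNorm _
    _ ≤ 1 * ‖Φ y‖ := by gcongr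
    _ = ‖Φ y‖ := one_mul _
    _ ≤ ‖Φ‖ * ‖y‖ := Φ.le_opNorm y
    _ ≤ 1 * ‖y‖ := by gcongr
    _ = ‖y‖ := one_mul _
end

section
/- Every point of the unit sphere of a separable transitive Banach space is smooth. Consequently, a separable Banach space of universal disposition for finite-dimensional spaces cannot exist: transitivity (derived from universal disposition) would force all points of the unit sphere to be smooth, contradicting the existence of an isometrically embedded subspace with a non-smooth point. -/
namespace NSGaux

variable {X : Type*} [NormedAddCommGroup X] [NormedSpace ℝ X]

/-- slope of the norm at `x` in direction `h` with step `t` -/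
noncomputable def sl (x h : X) (t : ℝ) : ℝ := (‖x + t • h‖ - ‖x‖) / t

instance : Nonempty ↥(Set.Ioi (0:ℝ)) := ⟨⟨1, Set.mem_Ioi.mpr one_pos⟩⟩

/-- lower right derivative of the norm -/
noncomputable def Dp (x h : X) : ℝ := ⨅ t : Set.Ioi (0:ℝ), sl x h t

lemma sl_lb (x h : X) {t : ℝ} (ht : 0 < t) : -‖h‖ ≤ sl x h t := by
  rw [sl, le_div_iff₀ ht]
  have h1 : ‖x‖ - ‖x + t • h‖ ≤ ‖x - (x + t • h)‖ := norm_sub_norm_le _ _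
  have h2 : ‖x - (x + t • h)‖ = t * ‖h‖ := by
    rw [show x - (x + t • h) = -(t • h) by abel, norm_neg, norm_smul,
      Real.norm_eq_abs, abs_of_pos ht]
  nlinarith

lemma sl_ub (x h : X) {t : ℝ} (ht : 0 < t) : sl x h t ≤ ‖h‖ := by
  rw [sl, div_le_iff₀ ht]
  have h1 : ‖x + t • h‖ - ‖x‖ ≤ ‖x + t • h - x‖ := norm_sub_norm_le _ _
  have h2 : ‖x + t • h - x‖ = t * ‖h‖ := by
    rw [show x + t • h - x = t • h by abel, norm_smul, Real.norm_eq_abs, abs_of_pos ht]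
  nlinarith

lemma bddBelow_sl (x h : X) : BddBelow (Set.range fun t : Set.Ioi (0:ℝ) => sl x h t) :=
  ⟨-‖h‖, by rintro r ⟨⟨t, ht⟩, rfl⟩; exact sl_lb x h ht⟩

lemma Dp_le_sl (x h : X) {t : ℝ} (ht : 0 < t) : Dp x h ≤ sl x h t :=
  ciInf_le (bddBelow_sl x h) ⟨t, ht⟩

lemma le_Dp (x h : X) {c : ℝ} (H : ∀ t : ℝ, 0 < t → c ≤ sl x h t) : c ≤ Dp x h :=
  le_ciInf fun t => H t.1 t.2

lemma Dp_lb (x h : X) : -‖h‖ ≤ Dp x h := le_Dp x h fun t ht => sl_lb x h ht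

lemma Dp_ub (x h : X) : Dp x h ≤ ‖h‖ := (Dp_le_sl x h one_pos).trans (sl_ub x h one_pos)

lemma sl_smul (x h : X) {c t : ℝ} (hc : 0 < c) (ht : 0 < t) :
    sl (c • x) h (c * t) = sl x h t := by
  rw [sl, sl]
  have h1 : c • x + (c * t) • h = c • (x + t • h) := by
    rw [smul_add, mul_smul]
  rw [h1, norm_smul, norm_smul, Real.norm_eq_abs, abs_of_pos hc]
  field_simp

lemma Dp_smul_le (x h : X) {c : ℝ} (hc : 0 < c) : Dp (c • x) h ≤ Dp x h := by
  refine le_Dp x h fun t ht => ?_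
  rw [← sl_smul x h hc ht]
  exact Dp_le_sl _ _ (mul_pos hc ht)

lemma Dp_smul (x h : X) {c : ℝ} (hc : 0 < c) : Dp (c • x) h = Dp x h := by
  refine le_antisymm (Dp_smul_le x h hc) ?_
  have := Dp_smul_le (c • x) h (inv_pos.mpr hc)
  rwa [smul_smul, inv_mul_cancel₀ hc.ne', one_smul] at this

lemma sl_add_sl_nonneg (x h : X) {s t : ℝ} (hs : 0 < s) (ht : 0 < t) :
    0 ≤ sl x h s + sl x (-h) t := by
  have key : (s + t) * ‖x‖ ≤ t * ‖x + s • h‖ + s * ‖x + t • (-h)‖ := by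
    have h1 : (s + t) • x = t • (x + s • h) + s • (x + t • (-h)) := by
      simp only [smul_add, smul_neg, smul_smul, add_smul]
      rw [mul_comm t s]
      abel
    calc (s + t) * ‖x‖ = ‖(s + t) • x‖ := by
          rw [norm_smul, Real.norm_eq_abs, abs_of_pos (by linarith)]
      _ ≤ ‖t • (x + s • h)‖ + ‖s • (x + t • (-h))‖ := by rw [h1]; exact norm_add_le _ _
      _ = t * ‖x + s • h‖ + s * ‖x + t • (-h)‖ := by
          rw [norm_smul, norm_smul, Real.norm_eq_abs, Real.norm_eq_abs,
            abs_of_pos hs, abs_of_pos ht]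
  rw [sl, sl, div_add_div _ _ hs.ne' ht.ne', le_div_iff₀ (mul_pos hs ht)]
  nlinarith

lemma Dp_add_Dp_nonneg (x h : X) : 0 ≤ Dp x h + Dp x (-h) := by
  have H : -Dp x (-h) ≤ Dp x h := by
    refine le_Dp x h fun s hs => ?_
    have : -sl x h s ≤ Dp x (-h) :=
      le_Dp x (-h) fun t ht => by linarith [sl_add_sl_nonneg x h hs ht]
    linarith
  linarith

lemma Dp_le_Dp_add (x h h' : X) : Dp x h ≤ Dp x h' + ‖h - h'‖ := by
  have key : ∀ t : ℝ, 0 < t → sl x h t ≤ sl x h' t + ‖h - h'‖ := by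
    intro t ht
    have h1 : ‖x + t • h‖ ≤ ‖x + t • h'‖ + t * ‖h - h'‖ := by
      have : x + t • h = (x + t • h') + t • (h - h') := by
        rw [smul_sub]; abel
      rw [this]
      calc ‖x + t • h' + t • (h - h')‖ ≤ ‖x + t • h'‖ + ‖t • (h - h')‖ := norm_add_le _ _
        _ = ‖x + t • h'‖ + t * ‖h - h'‖ := by
            rw [norm_smul, Real.norm_eq_abs, abs_of_pos ht]
    rw [sl, sl, div_le_iff₀ ht, add_mul, div_mul_cancel₀ _ ht.ne']
    nlinarith
  have H : Dp x h - ‖h - h'‖ ≤ Dp x h' := by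
    refine le_Dp x h' fun t ht => ?_
    have := (Dp_le_sl x h ht).trans (key t ht)
    linarith
  linarith


lemma isClosed_rough (h : X) (c : ℝ) : IsClosed {x : X | c ≤ Dp x h + Dp x (-h)} := by
  have hset : {x : X | c ≤ Dp x h + Dp x (-h)} =
      ⋂ (s : Set.Ioi (0:ℝ)) (t : Set.Ioi (0:ℝ)), {x : X | c ≤ sl x h s + sl x (-h) t} := by
    ext x
    simp only [Set.mem_setOf_eq, Set.mem_iInter]
    constructor
    · intro hx s t
      have h1 := Dp_le_sl x h s.2
      have h2 := Dp_le_sl x (-h) t.2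
      linarith
    · intro hx
      have H : c - Dp x (-h) ≤ Dp x h := by
        refine le_Dp x h fun s hs => ?_
        have : c - sl x h s ≤ Dp x (-h) :=
          le_Dp x (-h) fun t ht => by linarith [hx ⟨s, hs⟩ ⟨t, ht⟩]
        linarith
      linarith
  rw [hset]
  refine isClosed_iInter fun s => isClosed_iInter fun t => ?_
  have hc : Continuous fun x : X => sl x h s + sl x (-h) t := by
    unfold sl
    fun_prop
  exact isClosed_le continuous_const hc

lemma rough_chain {x₀ h : X} {c δ : ℝ} (hc : 0 < c) (hδ : 0 < δ)
    (H : ∀ t : ℝ, |t| ≤ δ → c ≤ Dp (x₀ + t • h) h + Dp (x₀ + t • h) (-h)) : False := by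
  -- key step: going right along the segment increases `Dp · h` by at least `c`
  have step : ∀ t t' : ℝ, t < t' → |t| ≤ δ → |t'| ≤ δ →
      Dp (x₀ + t • h) h + c ≤ Dp (x₀ + t' • h) h := by
    intro t t' htt' ht ht'
    have hd : 0 < t' - t := by linarith
    have e1 : x₀ + t • h + (t' - t) • h = x₀ + t' • h := by
      rw [sub_smul]; abel
    have e2 : x₀ + t' • h + (t' - t) • (-h) = x₀ + t • h := by
      rw [smul_neg, sub_smul]; abel
    have i1 : Dp (x₀ + t • h) h ≤ sl (x₀ + t • h) h (t' - t) := Dp_le_sl _ _ hd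
    have i2 : Dp (x₀ + t' • h) (-h) ≤ sl (x₀ + t' • h) (-h) (t' - t) := Dp_le_sl _ _ hd
    have key : sl (x₀ + t • h) h (t' - t) + sl (x₀ + t' • h) (-h) (t' - t) = 0 := by
      rw [sl, sl, e1, e2, ← add_div]
      ring_nf
    have := H t' ht'
    linarith
  -- iterate
  obtain ⟨m, hm⟩ := exists_nat_gt ((2 * ‖h‖) / c)
  have hm0 : 0 < (m : ℝ) := lt_of_le_of_lt (by positivity) hm
  have tmem : ∀ i : ℕ, i ≤ m → |(i : ℝ) * δ / m| ≤ δ := by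
    intro i hi
    have h1 : (0:ℝ) ≤ (i : ℝ) * δ / m := by positivity
    rw [abs_of_nonneg h1, div_le_iff₀ hm0]
    have : (i : ℝ) ≤ m := Nat.cast_le.mpr hi
    nlinarith
  have chain : ∀ i : ℕ, i ≤ m →
      Dp x₀ h + i * c ≤ Dp (x₀ + ((i : ℝ) * δ / m) • h) h := by
    intro i
    induction i with
    | zero => intro _; simp
    | succ n ih =>
      intro hn
      have hn' : n ≤ m := Nat.le_of_succ_le hn
      have hlt : (n : ℝ) * δ / m < ((n : ℝ) + 1) * δ / m := by
        rw [div_lt_div_iff_of_pos_right hm0]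
        nlinarith
      have htm : |((n : ℝ) + 1) * δ / m| ≤ δ := by
        have := tmem (n + 1) hn
        push_cast at this
        exact this
      have hstep := step ((n : ℝ) * δ / m) (((n : ℝ) + 1) * δ / m) hlt (tmem n hn') htm
      have hih := ih hn'
      push_cast
      linarith
  have h1 := chain m le_rfl
  have h2 := Dp_ub (x₀ + ((m : ℝ) * δ / m) • h) h
  have h3 := Dp_lb x₀ h
  have : (m : ℝ) * c > 2 * ‖h‖ := by
    rw [div_lt_iff₀ hc] at hm
    linarith
  linarith


lemma not_ball_rough {x₀ : X} (hx₀ : ‖x₀‖ = 1) (h : X) {c ε : ℝ} (hc : 0 < c) (hε : 0 < ε)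
    (H : ∀ y : X, ‖y‖ = 1 → ‖y - x₀‖ < ε → c ≤ Dp y h + Dp y (-h)) : False := by
  have hx0 := H x₀ hx₀ (by simpa using hε)
  have hh : 0 < ‖h‖ := by
    rcases eq_or_ne h 0 with rfl | hne
    · rw [neg_zero] at hx0
      have h1 := Dp_ub x₀ (0 : X)
      rw [norm_zero] at h1
      linarith
    · exact norm_pos_iff.mpr hne
  set δ := min (ε / (4 * ‖h‖)) (1 / (2 * ‖h‖)) with hδdef
  have hδ : 0 < δ := lt_min (by positivity) (by positivity)
  have hδh : δ * ‖h‖ ≤ 1 / 2 := by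
    have : δ ≤ 1 / (2 * ‖h‖) := min_le_right _ _
    rw [le_div_iff₀ (by positivity)] at this
    nlinarith
  have hδε : 2 * (δ * ‖h‖) < ε := by
    have : δ ≤ ε / (4 * ‖h‖) := min_le_left _ _
    rw [le_div_iff₀ (by positivity)] at this
    nlinarith
  refine rough_chain (x₀ := x₀) (h := h) hc hδ fun t ht => ?_
  set z := x₀ + t • h with hz
  have hzx : ‖z - x₀‖ ≤ δ * ‖h‖ := by
    rw [hz, add_sub_cancel_left, norm_smul, Real.norm_eq_abs]
    exact mul_le_mul_of_nonneg_right ht (norm_nonneg h)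
  have hznorm : 1 / 2 ≤ ‖z‖ := by
    have h1 : ‖x₀‖ - ‖z‖ ≤ ‖x₀ - z‖ := norm_sub_norm_le _ _
    rw [norm_sub_rev] at h1
    linarith [hzx, hx₀]
  have hzpos : 0 < ‖z‖ := by linarith
  set y := ‖z‖⁻¹ • z with hy
  have hynorm : ‖y‖ = 1 := by
    rw [hy, norm_smul, Real.norm_eq_abs, abs_of_pos (inv_pos.mpr hzpos),
      inv_mul_cancel₀ hzpos.ne']
  have hyz : ‖y - z‖ ≤ δ * ‖h‖ := by
    have h1 : y - z = (‖z‖⁻¹ - 1) • z := by rw [hy, sub_smul, one_smul]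
    rw [h1, norm_smul, Real.norm_eq_abs]
    have h2 : |‖z‖⁻¹ - 1| * ‖z‖ = |1 - ‖z‖| := by
      rw [← abs_of_pos hzpos, ← abs_mul, abs_of_pos hzpos]
      congr 1
      field_simp
    rw [h2]
    have h3 : |‖z‖ - ‖x₀‖| ≤ ‖z - x₀‖ := abs_norm_sub_norm_le _ _
    rw [hx₀, abs_sub_comm] at h3
    linarith
  have hyx : ‖y - x₀‖ < ε := by
    calc ‖y - x₀‖ ≤ ‖y - z‖ + ‖z - x₀‖ := norm_sub_le_norm_sub_add_norm_sub _ _ _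
      _ ≤ δ * ‖h‖ + δ * ‖h‖ := add_le_add hyz hzx
      _ < ε := by linarith
  have := H y hynorm hyx
  have e1 : Dp z h = Dp y h := by
    rw [show z = ‖z‖ • y by rw [hy, smul_smul, mul_inv_cancel₀ hzpos.ne', one_smul]]
    exact Dp_smul y h hzpos
  have e2 : Dp z (-h) = Dp y (-h) := by
    rw [show z = ‖z‖ • y by rw [hy, smul_smul, mul_inv_cancel₀ hzpos.ne', one_smul]]
    exact Dp_smul y (-h) hzpos
  rw [e1, e2]
  exact this

set_option maxHeartbeats 2000000 in
/-- Mazur's theorem, smooth-point form: a nontrivial separable Banach space has a point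
of the unit sphere with a unique norming functional. -/
lemma mazur (X : Type*) [NormedAddCommGroup X] [NormedSpace ℝ X] [CompleteSpace X]
    [TopologicalSpace.SeparableSpace X] [Nontrivial X] :
    ∃ p : X, ‖p‖ = 1 ∧ ∀ φ ψ : X →L[ℝ] ℝ,
      ‖φ‖ = 1 → φ p = 1 → ‖ψ‖ = 1 → ψ p = 1 → φ = ψ := by
  classical
  haveI : CompleteSpace ↥(Metric.sphere (0 : X) 1) :=
    Metric.isClosed_sphere.completeSpace_coe
  obtain ⟨x₁, hx₁⟩ := exists_norm_eq X (le_of_lt one_pos)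
  haveI : Nonempty ↥(Metric.sphere (0 : X) 1) :=
    ⟨⟨x₁, mem_sphere_zero_iff_norm.mpr hx₁⟩⟩
  let u : ℕ → X := TopologicalSpace.denseSeq X
  have hu : DenseRange u := TopologicalSpace.denseRange_denseSeq X
  set F : ℕ × ℕ → Set ↥(Metric.sphere (0 : X) 1) := fun kn =>
    {x : ↥(Metric.sphere (0 : X) 1) |
      1 / ((kn.2 : ℝ) + 1) ≤ Dp (x : X) (u kn.1) + Dp (x : X) (-(u kn.1))} with hF
  have hFclosed : ∀ kn, IsClosed (F kn) := by
    intro kn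
    exact (isClosed_rough (X := X) (u kn.1) (1 / ((kn.2 : ℝ) + 1))).preimage continuous_subtype_val
  -- there is a point not in any F kn
  have hexists : ∃ x : ↥(Metric.sphere (0 : X) 1), ∀ kn : ℕ × ℕ, x ∉ F kn := by
    by_contra hcon
    push_neg at hcon
    have hcover : ⋃ kn, F kn = Set.univ := by
      ext x; simp only [Set.mem_iUnion, Set.mem_univ, iff_true]; exact hcon x
    obtain ⟨kn, hkn⟩ := nonempty_interior_of_iUnion_of_closed hFclosed hcover
    obtain ⟨x₀, hx₀⟩ := hkn
    obtain ⟨ε, hε, hball⟩ := Metric.mem_nhds_iff.mp (mem_interior_iff_mem_nhds.mp hx₀)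
    have hx₀S : ‖(x₀ : X)‖ = 1 := mem_sphere_zero_iff_norm.mp x₀.2
    refine not_ball_rough hx₀S (u kn.1)
      (c := 1 / ((kn.2 : ℝ) + 1)) (by positivity) hε fun y hy hyx => ?_
    have hyS : y ∈ Metric.sphere (0 : X) 1 := mem_sphere_zero_iff_norm.mpr hy
    have hmem : (⟨y, hyS⟩ : ↥(Metric.sphere (0 : X) 1)) ∈ Metric.ball x₀ ε := by
      rw [Metric.mem_ball, Subtype.dist_eq, dist_eq_norm]
      exact hyx
    have h2 := hball hmem
    rw [hF] at h2
    simpa using h2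
  obtain ⟨x, hx⟩ := hexists
  have hxnorm : ‖(x : X)‖ = 1 := mem_sphere_zero_iff_norm.mp x.2
  -- zero roughness at x in the dense directions
  have hzero : ∀ k : ℕ, Dp (x : X) (u k) + Dp (x : X) (-(u k)) ≤ 0 := by
    intro k
    by_contra hpos
    push_neg at hpos
    obtain ⟨n, hn⟩ := exists_nat_one_div_lt hpos
    exact hx (k, n) (le_of_lt hn)
  -- zero roughness in all directions
  have hall : ∀ h : X, Dp (x : X) h + Dp (x : X) (-h) ≤ 0 := by
    intro h
    by_contra hpos
    push_neg at hpos
    obtain ⟨k, hk⟩ := hu.exists_dist_lt h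
      (by positivity : (0:ℝ) < (Dp (x : X) h + Dp (x : X) (-h)) / 2)
    rw [dist_eq_norm] at hk
    have l1 := Dp_le_Dp_add (x : X) h (u k)
    have l2 := Dp_le_Dp_add (x : X) (-h) (-(u k))
    have l3 : ‖-h - -(u k)‖ = ‖h - u k‖ := by rw [show -h - -(u k) = -(h - u k) by abel, norm_neg]
    rw [l3] at l2
    have := hzero k
    linarith
  have heq : ∀ h : X, Dp (x : X) h + Dp (x : X) (-h) = 0 :=
    fun h => le_antisymm (hall h) (Dp_add_Dp_nonneg _ h)
  refine ⟨(x : X), hxnorm, fun φ ψ hφn hφx hψn hψx => ?_⟩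
  have keyval : ∀ (φ : X →L[ℝ] ℝ), ‖φ‖ = 1 → φ (x : X) = 1 → ∀ h : X, φ h = Dp (x : X) h := by
    intro φ hn hv h
    have hle : ∀ h : X, φ h ≤ Dp (x : X) h := by
      intro h
      refine le_Dp (x : X) h fun t ht => ?_
      rw [sl, le_div_iff₀ ht]
      have h1 : φ ((x : X) + t • h) ≤ ‖(x : X) + t • h‖ := by
        calc φ ((x : X) + t • h) ≤ |φ ((x : X) + t • h)| := le_abs_self _
          _ ≤ ‖φ‖ * ‖(x : X) + t • h‖ := φ.le_opNorm _
          _ = ‖(x : X) + t • h‖ := by rw [hn, one_mul]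
      have h2 : φ ((x : X) + t • h) = 1 + t * φ h := by
        rw [map_add, map_smul, hv, smul_eq_mul]
      rw [hxnorm]
      linarith
    have h1 := hle h
    have h2 := hle (-h)
    rw [map_neg] at h2
    have h3 := heq h
    linarith
  ext h
  rw [keyval φ hφn hφx h, keyval ψ hψn hψx h]

end NSGaux


universe u v

/-- **No separable strong Gurarii spaces.** Every point of the unit sphere of a separable
transitive Banach space is smooth (admits exactly one norming functional); consequently
no separable Banach space can be a strong Gurarii space, since transitivity (which
follows from universal disposition) would make all points of the unit sphere smooth,
contradicting the existence of isometric copies of spaces with non-smooth points. -/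
theorem no_separable_strong_gurarii
    (X : Type v) [NormedAddCommGroup X] [NormedSpace ℝ X] [CompleteSpace X]
    [TopologicalSpace.SeparableSpace X] :
    ((∀ a b : X, ‖a‖ = 1 → ‖b‖ = 1 → ∃ h : X ≃ₗᵢ[ℝ] X, h a = b) →
      ∀ p : X, ‖p‖ = 1 → ∃! φ : X →L[ℝ] ℝ, ‖φ‖ = 1 ∧ φ p = 1) ∧
    ¬ IsStrongGurarii.{u} X := by
  constructor
  · -- transitivity implies every sphere point is smooth
    intro htrans p hp
    have hp0 : p ≠ 0 := fun h => by rw [h, norm_zero] at hp; exact one_ne_zero hp.symm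
    haveI : Nontrivial X := ⟨p, 0, hp0⟩
    obtain ⟨q, hq, huniq⟩ := NSGaux.mazur X
    obtain ⟨φ₀, hφ₀n, hφ₀p⟩ := exists_dual_vector ℝ p (norm_ne_zero_iff.mpr hp0)
    have hφ₀p' : φ₀ p = 1 := by rw [hφ₀p]; simp [hp]
    refine ⟨φ₀, ⟨hφ₀n, hφ₀p'⟩, ?_⟩
    rintro ψ ⟨hψn, hψp⟩
    obtain ⟨h, hh⟩ := htrans p q hp hq
    have hsymm : h.symm q = p := by rw [← hh, LinearIsometryEquiv.symm_apply_apply]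
    have key : ∀ χ : X →L[ℝ] ℝ, ‖χ‖ = 1 → χ p = 1 →
        ‖χ.comp h.symm.toLinearIsometry.toContinuousLinearMap‖ = 1 ∧
        (χ.comp h.symm.toLinearIsometry.toContinuousLinearMap) q = 1 := by
      intro χ hχn hχp
      constructor
      · exact (χ.opNorm_comp_linearIsometryEquiv h.symm).trans hχn
      · simp [hsymm, hχp]
    obtain ⟨k1, k2⟩ := key ψ hψn hψp
    obtain ⟨l1, l2⟩ := key φ₀ hφ₀n hφ₀p'
    have heq := huniq _ _ k1 k2 l1 l2
    ext x
    have hx := DFunLike.congr_fun heq (h x)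
    simpa using hx
  · -- no separable strong Gurarii space
    intro hSG
    rcases subsingleton_or_nontrivial X with hsub | hnt
    · -- the zero space is not strong Gurarii
      obtain ⟨g, -⟩ := hSG (ULift.{u} ℝ) ⊥
        { toLinearMap := 0
          norm_map' := fun x => by
            have hx : (x : ULift.{u} ℝ) = 0 := (Submodule.mem_bot ℝ).mp x.2
            simp [Submodule.coe_norm, hx] }
      have h1 : ‖g (ULift.up (1:ℝ))‖ = 1 := by rw [g.norm_map]; simp
      rw [Subsingleton.elim (g (ULift.up (1:ℝ))) 0, norm_zero] at h1
      exact one_ne_zero h1.symm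
    · obtain ⟨p, hp, huniq⟩ := NSGaux.mazur X
      set d : ULift.{u} (ℝ × ℝ) := ULift.up (1, 1) with hd
      have hd0 : d ≠ 0 := by
        intro hcon
        have := congrArg (fun z : ULift.{u} (ℝ × ℝ) => z.down.1) hcon
        simp [hd] at this
      have hdnorm : ‖d‖ = 1 := by rw [hd, ULift.norm_up, Prod.norm_def]; norm_num
      set e := LinearEquiv.toSpanNonzeroSingleton ℝ (ULift.{u} (ℝ × ℝ)) d hd0 with he
      have hmemd : d ∈ Submodule.span ℝ {d} := Submodule.mem_span_singleton_self d
      have he1 : e 1 = ⟨d, hmemd⟩ := by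
        apply Subtype.ext
        rw [he, LinearEquiv.toSpanNonzeroSingleton_apply]
        exact one_smul ℝ d
      set f : (Submodule.span ℝ {d}) →ₗᵢ[ℝ] X :=
        { toLinearMap := (LinearMap.toSpanSingleton ℝ X p).comp (e.symm : _ →ₗ[ℝ] ℝ)
          norm_map' := fun v => by
            have hv : (v : ULift.{u} (ℝ × ℝ)) = (e.symm v) • d := by
              conv_lhs => rw [← e.apply_symm_apply v]
              rw [he, LinearEquiv.toSpanNonzeroSingleton_apply]
            simp only [LinearMap.coe_comp, Function.comp_apply, LinearEquiv.coe_coe,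
              LinearMap.toSpanSingleton_apply]
            rw [norm_smul, hp, mul_one, Submodule.coe_norm, hv, norm_smul, hdnorm,
              mul_one] } with hf
      obtain ⟨g, hg⟩ := hSG (ULift.{u} (ℝ × ℝ)) (Submodule.span ℝ {d}) f
      set a := g (ULift.up ((1:ℝ), (0:ℝ))) with hA
      set b := g (ULift.up ((0:ℝ), (1:ℝ))) with hB
      have hfd : f ⟨d, hmemd⟩ = p := by
        have hsymm1 : e.symm ⟨d, hmemd⟩ = 1 := by rw [← he1, e.symm_apply_apply]
        show (LinearMap.toSpanSingleton ℝ X p) (e.symm ⟨d, hmemd⟩) = p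
        rw [hsymm1, LinearMap.toSpanSingleton_apply, one_smul]
      have hgd : g d = p := by
        have h2 := hg ⟨d, hmemd⟩
        rw [hfd] at h2
        exact h2
      have hsumup : ULift.up ((1:ℝ), (0:ℝ)) + ULift.up ((0:ℝ), (1:ℝ)) = d := by
        rw [hd]
        apply ULift.ext
        simp [Prod.ext_iff]
      have hsum : a + b = p := by
        rw [hA, hB, ← map_add, hsumup, hgd]
      have hdiffup : ULift.up ((1:ℝ), (0:ℝ)) - ULift.up ((0:ℝ), (1:ℝ)) =
          ULift.up ((1:ℝ), (-1:ℝ)) := by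
        apply ULift.ext
        simp [Prod.ext_iff]
      set w := a - b with hW
      have hwnorm : ‖w‖ = 1 := by
        rw [hW, hA, hB, ← map_sub, hdiffup, g.norm_map, ULift.norm_up, Prod.norm_def]
        norm_num
      have ha1 : ‖a‖ = 1 := by rw [hA, g.norm_map, ULift.norm_up, Prod.norm_def]; norm_num
      have hb1 : ‖b‖ = 1 := by rw [hB, g.norm_map, ULift.norm_up, Prod.norm_def]; norm_num
      have ha0 : a ≠ 0 := fun hc => by rw [hc, norm_zero] at ha1; exact one_ne_zero ha1.symm
      have hb0 : b ≠ 0 := fun hc => by rw [hc, norm_zero] at hb1; exact one_ne_zero hb1.symm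
      obtain ⟨χ₁, hχ₁n, hχ₁a⟩ := exists_dual_vector ℝ a (norm_ne_zero_iff.mpr ha0)
      obtain ⟨χ₂, hχ₂n, hχ₂b⟩ := exists_dual_vector ℝ b (norm_ne_zero_iff.mpr hb0)
      have hχ₁a' : χ₁ a = 1 := by rw [hχ₁a]; simp [ha1]
      have hχ₂b' : χ₂ b = 1 := by rw [hχ₂b]; simp [hb1]
      have bound : ∀ (χ : X →L[ℝ] ℝ) (v : X), ‖χ‖ = 1 → ‖v‖ = 1 → χ v ≤ 1 := by
        intro χ v hn hv
        calc χ v ≤ |χ v| := le_abs_self _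
          _ ≤ ‖χ‖ * ‖v‖ := χ.le_opNorm v
          _ = 1 := by rw [hn, hv, mul_one]
      have hpw1 : p + w = a + a := by rw [← hsum, hW]; abel
      have hpw2 : p - w = b + b := by rw [← hsum, hW]; abel
      have hχ₁sum : χ₁ p + χ₁ w = 2 := by
        rw [← map_add, hpw1, map_add, hχ₁a']; norm_num
      have hχ₂sum : χ₂ p - χ₂ w = 2 := by
        rw [← map_sub, hpw2, map_add, hχ₂b']; norm_num
      have b1 := bound χ₁ p hχ₁n hp
      have b2 := bound χ₁ w hχ₁n hwnorm
      have b3 := bound χ₂ p hχ₂n hp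
      have b4 := bound χ₂ ((-1 : ℝ) • w) hχ₂n (by rw [norm_smul]; simp [hwnorm])
      rw [map_smul] at b4
      have hχ₁p : χ₁ p = 1 := by linarith
      have hχ₂p : χ₂ p = 1 := by
        simp only [smul_eq_mul, neg_one_mul] at b4
        linarith
      have heq := huniq χ₁ χ₂ hχ₁n hχ₁p hχ₂n hχ₂p
      have hval := DFunLike.congr_fun heq w
      have hχ₁w : χ₁ w = 1 := by linarith
      have hχ₂w : χ₂ w = -1 := by linarith
      rw [hχ₁w, hχ₂w] at hval
      norm_num at hval
end
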